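/- arXiv:1802.00959 — 8 statements merged into one kernel-verified Lean document; each statement's English description precedes it below -/
import Mathlib

section
/- For complex numbers q, y, z with |q| < 1, the trivariate generalization ν(y,z;q) := Σ_{n≥0} yⁿ zⁿ q^{n²+n} / ((yq; q²)_{n+1}) equals Σ_{n≥0} (−zq; q²)_n (yq)ⁿ, whenever both series converge absolutely. -/
open scoped BigOperators

/-- Finite q-Pochhammer symbol `(a; q)_n`. -/
noncomputable def qPoch (a q : ℂ) (n : ℕ) : ℂ :=
  ∏ k ∈ Finset.range n, (1 - a * q ^ k)

/-- Infinite q-Pochhammer symbol `(a; q)_∞`. -/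
noncomputable def qPochInf (a q : ℂ) : ℂ :=
  ∏' k : ℕ, (1 - a * q ^ k)

private lemma exp_le_one_sub {t : ℝ} (h0 : 0 ≤ t) (h2 : t ≤ 1/2) :
    Real.exp (-(2*t)) ≤ 1 - t := by
  have he : 1 + 2*t ≤ Real.exp (2*t) := by
    have := Real.add_one_le_exp (2*t); linarith
  have hepos : (0:ℝ) < Real.exp (2*t) := Real.exp_pos _
  rw [Real.exp_neg, ← one_div, div_le_iff₀ hepos]
  nlinarith

private lemma prod_lower_aux (g t : ℕ → ℝ) (N : ℕ)
    (hsum : Summable t) (htn : ∀ j, 0 ≤ t j) (hgpos : ∀ j, 0 < g j)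
    (hbig : ∀ j, N ≤ j → Real.exp (-(2 * t j)) ≤ g j) (F : Finset ℕ) :
    (∏ j ∈ Finset.range N, min (g j) 1) * Real.exp (-(2 * ∑' j, t j)) ≤ ∏ j ∈ F, g j := by
  have key : ∀ j, (if j < N then min (g j) 1 else Real.exp (-(2 * t j))) ≤ g j := by
    intro j
    by_cases hj : j < N
    · rw [if_pos hj]; exact min_le_left _ _
    · rw [if_neg hj]; exact hbig j (le_of_not_gt hj)
  have keypos : ∀ j, 0 < (if j < N then min (g j) 1 else Real.exp (-(2 * t j))) := by
    intro j
    by_cases hj : j < N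
    · rw [if_pos hj]; exact lt_min (hgpos j) one_pos
    · rw [if_neg hj]; exact Real.exp_pos _
  refine le_trans ?_ (Finset.prod_le_prod (fun j _ => (keypos j).le) (fun j _ => key j))
  rw [← Finset.prod_filter_mul_prod_filter_not F (· < N)]
  have hA : (∏ j ∈ Finset.range N, min (g j) 1)
      ≤ ∏ j ∈ F.filter (· < N), (if j < N then min (g j) 1 else Real.exp (-(2 * t j))) := by
    have hsub : F.filter (· < N) ⊆ Finset.range N := fun j hj => by
      simp only [Finset.mem_filter] at hj; exact Finset.mem_range.mpr hj.2
    rw [Finset.prod_congr rfl (fun j hj => if_pos (Finset.mem_filter.mp hj).2),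
      ← Finset.prod_sdiff hsub]
    exact mul_le_of_le_one_left
      (Finset.prod_nonneg fun j _ => le_min (hgpos j).le zero_le_one)
      (Finset.prod_le_one (fun j _ => le_min (hgpos j).le zero_le_one)
        (fun j _ => min_le_right _ _))
  have hB : Real.exp (-(2 * ∑' j, t j))
      ≤ ∏ j ∈ F.filter (¬ · < N), (if j < N then min (g j) 1 else Real.exp (-(2 * t j))) := by
    rw [Finset.prod_congr rfl (fun j hj => if_neg (Finset.mem_filter.mp hj).2),
      ← Real.exp_sum]
    apply Real.exp_le_exp.mpr
    have h1 : ∑ j ∈ F.filter (¬ · < N), t j ≤ ∑' j, t j :=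
      Summable.sum_le_tsum _ (fun i _ => htn i) hsum
    have h2 : ∑ j ∈ F.filter (¬ · < N), -(2 * t j)
        = -(2 * ∑ j ∈ F.filter (¬ · < N), t j) := by
      rw [Finset.mul_sum, ← Finset.sum_neg_distrib]
    rw [h2]; linarith
  exact mul_le_mul hA hB (Real.exp_pos _).le
    (Finset.prod_nonneg fun j _ => (keypos j).le)

set_option maxHeartbeats 1000000 in
private lemma prod_lower (q y : ℂ) (hq : ‖q‖ < 1)
    (hden : ∀ k : ℕ, 1 - y * q ^ (2 * k + 1) ≠ 0) :
    ∃ c > 0, ∀ F : Finset ℕ, c ≤ ∏ j ∈ F, ‖1 - y * q ^ (2*j+1)‖ := by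
  have hqn : 0 ≤ ‖q‖ := norm_nonneg q
  have htn : ∀ j : ℕ, 0 ≤ ‖y‖ * ‖q‖ ^ (2*j+1) := fun j => by positivity
  have hsum : Summable (fun j : ℕ => ‖y‖ * ‖q‖ ^ (2*j+1)) := by
    have h : Summable (fun j : ℕ => (‖y‖*‖q‖) * (‖q‖^2)^j) :=
      (summable_geometric_of_lt_one (by positivity) (by nlinarith)).mul_left _
    refine h.congr fun j => ?_
    ring
  obtain ⟨N, hN⟩ : ∃ N : ℕ, ∀ j ≥ N, ‖y‖ * ‖q‖ ^ (2*j+1) ≤ 1/2 := by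
    have := hsum.tendsto_atTop_zero.eventually_le_const (show (0:ℝ) < 1/2 by norm_num)
    exact Filter.eventually_atTop.mp this
  have hgpos : ∀ j : ℕ, 0 < ‖1 - y * q ^ (2*j+1)‖ := fun j => norm_pos_iff.mpr (hden j)
  have hbig : ∀ j : ℕ, N ≤ j → Real.exp (-(2 * (‖y‖ * ‖q‖ ^ (2*j+1)))) ≤ ‖1 - y * q ^ (2*j+1)‖ := by
    intro j hj
    refine le_trans (exp_le_one_sub (htn j) (hN j hj)) ?_
    have h := norm_sub_norm_le (1 : ℂ) (y * q ^ (2*j+1))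
    simp only [norm_one, norm_mul, norm_pow] at h
    exact h
  refine ⟨(∏ j ∈ Finset.range N, min ‖1 - y * q ^ (2*j+1)‖ 1)
      * Real.exp (-(2 * ∑' j : ℕ, ‖y‖ * ‖q‖ ^ (2*j+1))), ?_, fun F =>
    prod_lower_aux _ _ N hsum htn hgpos hbig F⟩
  have : 0 < ∏ j ∈ Finset.range N, min ‖1 - y * q ^ (2*j+1)‖ 1 :=
    Finset.prod_pos fun j _ => lt_min (hgpos j) one_pos
  positivity

private lemma f_summable (a r : ℝ) (ha : 0 ≤ a) (hr0 : 0 ≤ r) (hr : r < 1) :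
    Summable (fun n : ℕ => a^n * r^(n^2+n)) := by
  apply summable_of_ratio_norm_eventually_le (r := 1/2) (by norm_num)
  have htend : Filter.Tendsto (fun n : ℕ => (a*r^2) * (r^2)^n) Filter.atTop (nhds 0) := by
    have := tendsto_pow_atTop_nhds_zero_of_lt_one (by positivity : (0:ℝ) ≤ r^2) (by nlinarith)
    simpa using this.const_mul (a*r^2)
  filter_upwards [htend.eventually_le_const (show (0:ℝ) < 1/2 by norm_num)] with n hn
  have hfn : (0:ℝ) ≤ a^n * r^(n^2+n) := by positivity
  have hkey : a^(n+1) * r^((n+1)^2+(n+1)) = (a^n * r^(n^2+n)) * ((a*r^2) * (r^2)^n) := by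
    ring
  rw [Real.norm_of_nonneg (by positivity), Real.norm_of_nonneg hfn, hkey]
  calc (a^n * r^(n^2+n)) * ((a*r^2) * (r^2)^n) ≤ (a^n * r^(n^2+n)) * (1/2) :=
        mul_le_mul_of_nonneg_left hn hfn
    _ = 1/2 * (a^n * r^(n^2+n)) := by ring

private noncomputable def PP (q y : ℂ) (m n : ℕ) : ℂ :=
  ∏ k ∈ Finset.range n, (1 - y * q ^ (2*(m+k)+1))

private noncomputable def Lt (q y z : ℂ) (m n : ℕ) : ℂ :=
  (y*q^(2*m))^n * z^n * q^(n^2+n) / PP q y m (n+1)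

private noncomputable def Rt (q y z : ℂ) (m n : ℕ) : ℂ :=
  qPoch (-(z*q)) (q^2) n * (y*q^(2*m)*q)^n

private lemma PP_succ_left (q y : ℂ) (m n : ℕ) :
    PP q y m (n+1) = (1 - y*q^(2*m+1)) * PP q y (m+1) n := by
  rw [PP, Finset.prod_range_succ' (fun k => (1 - y * q ^ (2*(m+k)+1))) n]
  rw [PP, mul_comm]
  congr 1
  refine Finset.prod_congr rfl fun k _ => ?_
  rw [show m + (k+1) = (m+1)+k by omega]

private lemma PP_succ (q y : ℂ) (m n : ℕ) :
    PP q y m (n+1) = PP q y m n * (1 - y*q^(2*(m+n)+1)) := by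
  rw [PP, Finset.prod_range_succ]; rfl

private lemma Rt_rec (q y z : ℂ) (m n : ℕ) :
    Rt q y z m (n+1) = y*q^(2*m+1) * Rt q y z m n + y*z*q^(2*m+2) * Rt q y z (m+1) n := by
  simp only [Rt, qPoch, Finset.prod_range_succ]
  ring

private lemma FER (q y z : ℂ) (m : ℕ)
    (hm : Summable (Rt q y z m)) (hm1 : Summable (Rt q y z (m+1))) :
    (1 - y*q^(2*m+1)) * ∑' n, Rt q y z m n
      = 1 + y*z*q^(2*m+2) * ∑' n, Rt q y z (m+1) n := by
  have h0 : ∑' n, Rt q y z m n = Rt q y z m 0 + ∑' n, Rt q y z m (n+1) :=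
    Summable.tsum_eq_zero_add hm
  have h1 : ∑' n, Rt q y z m (n+1)
      = y*q^(2*m+1) * ∑' n, Rt q y z m n + y*z*q^(2*m+2) * ∑' n, Rt q y z (m+1) n := by
    rw [tsum_congr (fun n => Rt_rec q y z m n),
      Summable.tsum_add (hm.mul_left _) (hm1.mul_left _), tsum_mul_left, tsum_mul_left]
  have h2 : Rt q y z m 0 = 1 := by simp [Rt, qPoch]
  rw [h2] at h0
  linear_combination h0 + h1

private lemma FEL (q y z : ℂ) (m : ℕ) (h1x : (1 : ℂ) - y*q^(2*m+1) ≠ 0)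
    (hm : Summable (Lt q y z m)) :
    (1 - y*q^(2*m+1)) * ∑' n, Lt q y z m n
      = 1 + y*z*q^(2*m+2) * ∑' n, Lt q y z (m+1) n := by
  have key : ∀ n, (1 - y*q^(2*m+1)) * Lt q y z m n
      = (y*q^(2*m))^n * z^n * q^(n^2+n) / PP q y (m+1) n := by
    intro n
    rw [Lt, PP_succ_left, ← mul_div_assoc, mul_div_mul_left _ _ h1x]
  have hsum' : Summable (fun n => (y*q^(2*m))^n * z^n * q^(n^2+n) / PP q y (m+1) n) :=
    (hm.mul_left ((1 : ℂ) - y*q^(2*m+1))).congr fun n => key n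
  rw [← tsum_mul_left, tsum_congr key, Summable.tsum_eq_zero_add hsum']
  congr 1
  · simp [PP]
  · rw [← tsum_mul_left]
    refine tsum_congr fun n => ?_
    rw [Lt, ← mul_div_assoc]
    congr 1
    ring

set_option maxHeartbeats 1000000 in
theorem nu_trivariate (q y z : ℂ) (hq : ‖q‖ < 1)
    (hden : ∀ k : ℕ, 1 - y * q ^ (2 * k + 1) ≠ 0)
    (hL : Summable fun n : ℕ =>
      ‖y ^ n * z ^ n * q ^ (n ^ 2 + n) / qPoch (y * q) (q ^ 2) (n + 1)‖)
    (hR : Summable fun n : ℕ => ‖qPoch (-(z * q)) (q ^ 2) n * (y * q) ^ n‖) :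
    ∑' n : ℕ, y ^ n * z ^ n * q ^ (n ^ 2 + n) / qPoch (y * q) (q ^ 2) (n + 1)
      = ∑' n : ℕ, qPoch (-(z * q)) (q ^ 2) n * (y * q) ^ n := by
  have hqn : 0 ≤ ‖q‖ := norm_nonneg q
  obtain ⟨c, hc0, hc⟩ := prod_lower q y hq hden
  -- lower bound on PP
  have hPPc : ∀ m n : ℕ, c ≤ ‖PP q y m n‖ := by
    intro m n
    have := hc ((Finset.range n).map ⟨fun k => m + k, add_right_injective m⟩)
    rw [Finset.prod_map] at this
    rw [PP, norm_prod]
    exact this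
  -- the dominating sequence
  have hf : Summable (fun n : ℕ => (‖y‖*‖z‖)^n * ‖q‖^(n^2+n)) :=
    f_summable _ _ (by positivity) hqn hq
  -- norm bounds
  have hLt_norm : ∀ m n : ℕ, ‖Lt q y z m n‖ ≤ ((‖y‖*‖z‖)^n * ‖q‖^(n^2+n)) / c := by
    intro m n
    rw [Lt, norm_div]
    apply div_le_div₀ (by positivity) ?_ hc0 (hPPc m (n+1))
    have h1 : ‖y*q^(2*m)‖ ≤ ‖y‖ := by
      rw [norm_mul, norm_pow]
      calc ‖y‖ * ‖q‖^(2*m) ≤ ‖y‖ * 1 :=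
        mul_le_mul_of_nonneg_left (pow_le_one₀ hqn hq.le) (norm_nonneg y)
        _ = ‖y‖ := mul_one _
    calc ‖(y*q^(2*m))^n * z^n * q^(n^2+n)‖
        = ‖y*q^(2*m)‖^n * ‖z‖^n * ‖q‖^(n^2+n) := by
          rw [norm_mul, norm_mul, norm_pow, norm_pow, norm_pow]
      _ ≤ ‖y‖^n * ‖z‖^n * ‖q‖^(n^2+n) := by
          gcongr
      _ = (‖y‖*‖z‖)^n * ‖q‖^(n^2+n) := by rw [mul_pow]
  have hLt_sum : ∀ m, Summable (Lt q y z m) := fun m =>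
    Summable.of_norm_bounded (hf.div_const c) (hLt_norm m)
  have hRt_norm : ∀ m n : ℕ, ‖Rt q y z m n‖ ≤ ‖qPoch (-(z * q)) (q ^ 2) n * (y * q) ^ n‖ := by
    intro m n
    rw [Rt, norm_mul, norm_mul, norm_pow, norm_pow]
    have h1 : ‖y*q^(2*m)*q‖ ≤ ‖y*q‖ := by
      rw [norm_mul, norm_mul, norm_mul, norm_pow]
      calc ‖y‖ * ‖q‖^(2*m) * ‖q‖ ≤ ‖y‖ * 1 * ‖q‖ := by
            gcongr
            exact pow_le_one₀ hqn hq.le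
        _ = ‖y‖ * ‖q‖ := by ring
    gcongr
  have hRt_sum : ∀ m, Summable (Rt q y z m) := fun m =>
    Summable.of_norm_bounded hR (hRt_norm m)
  -- functional equation for the difference
  have hD : ∀ m : ℕ, (1 - y*q^(2*m+1)) *
      ((∑' n, Lt q y z m n) - ∑' n, Rt q y z m n)
      = y*z*q^(2*m+2) * ((∑' n, Lt q y z (m+1) n) - ∑' n, Rt q y z (m+1) n) := by
    intro m
    have h1 := FEL q y z m (hden m) (hLt_sum m)
    have h2 := FER q y z m (hRt_sum m) (hRt_sum (m+1))
    linear_combination h1 - h2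
  -- iteration
  have hiter : ∀ n : ℕ, PP q y 0 n * ((∑' k, Lt q y z 0 k) - ∑' k, Rt q y z 0 k)
      = y^n * z^n * q^(n^2+n) * ((∑' k, Lt q y z n k) - ∑' k, Rt q y z n k) := by
    intro n
    induction n with
    | zero => simp [PP]
    | succ n ih =>
      rw [PP_succ, show 2*(0+n)+1 = 2*n+1 by omega]
      linear_combination (1 - y*q^(2*n+1)) * ih + (y^n * z^n * q^(n^2+n)) * hD n
  -- uniform bound on the differences
  set B : ℝ := (∑' n : ℕ, ((‖y‖*‖z‖)^n * ‖q‖^(n^2+n)) / c)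
      + ∑' n : ℕ, ‖qPoch (-(z * q)) (q ^ 2) n * (y * q) ^ n‖ with hBdef
  have hDb : ∀ m : ℕ, ‖(∑' k, Lt q y z m k) - ∑' k, Rt q y z m k‖ ≤ B := by
    intro m
    have hLnorm : Summable (fun n => ‖Lt q y z m n‖) :=
      Summable.of_nonneg_of_le (fun n => norm_nonneg _) (hLt_norm m) (hf.div_const c)
    have hRnorm : Summable (fun n => ‖Rt q y z m n‖) :=
      Summable.of_nonneg_of_le (fun n => norm_nonneg _) (hRt_norm m) hR
    calc ‖(∑' k, Lt q y z m k) - ∑' k, Rt q y z m k‖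
        ≤ ‖∑' k, Lt q y z m k‖ + ‖∑' k, Rt q y z m k‖ := norm_sub_le _ _
      _ ≤ (∑' k, ‖Lt q y z m k‖) + ∑' k, ‖Rt q y z m k‖ := by
          gcongr
          · exact norm_tsum_le_tsum_norm hLnorm
          · exact norm_tsum_le_tsum_norm hRnorm
      _ ≤ B := by
          rw [hBdef]
          apply add_le_add
          · exact Summable.tsum_le_tsum (hLt_norm m) hLnorm (hf.div_const c)
          · exact Summable.tsum_le_tsum (hRt_norm m) hRnorm hR
  -- conclude D 0 = 0
  have hbound : ∀ n : ℕ, c * ‖(∑' k, Lt q y z 0 k) - ∑' k, Rt q y z 0 k‖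
      ≤ ((‖y‖*‖z‖)^n * ‖q‖^(n^2+n)) * B := by
    intro n
    have h1 := congrArg norm (hiter n)
    rw [norm_mul, norm_mul] at h1
    have h2 : ‖y^n * z^n * q^(n^2+n)‖ = (‖y‖*‖z‖)^n * ‖q‖^(n^2+n) := by
      rw [norm_mul, norm_mul, norm_pow, norm_pow, norm_pow, mul_pow]
    calc c * ‖(∑' k, Lt q y z 0 k) - ∑' k, Rt q y z 0 k‖
        ≤ ‖PP q y 0 n‖ * ‖(∑' k, Lt q y z 0 k) - ∑' k, Rt q y z 0 k‖ := by
          gcongr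
          exact hPPc 0 n
      _ = ‖y^n * z^n * q^(n^2+n)‖ * ‖(∑' k, Lt q y z n k) - ∑' k, Rt q y z n k‖ := h1
      _ ≤ ((‖y‖*‖z‖)^n * ‖q‖^(n^2+n)) * B := by
          rw [h2]
          gcongr
          exact hDb n
  have htendB : Filter.Tendsto
      (fun n : ℕ => ((‖y‖*‖z‖)^n * ‖q‖^(n^2+n)) * B) Filter.atTop (nhds 0) := by
    simpa using hf.tendsto_atTop_zero.mul_const B
  have hle0 : c * ‖(∑' k, Lt q y z 0 k) - ∑' k, Rt q y z 0 k‖ ≤ 0 :=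
    ge_of_tendsto' htendB hbound
  have hD0 : (∑' k, Lt q y z 0 k) = ∑' k, Rt q y z 0 k := by
    have h1 : ‖(∑' k, Lt q y z 0 k) - ∑' k, Rt q y z 0 k‖ ≤ 0 := by
      nlinarith [norm_nonneg ((∑' k, Lt q y z 0 k) - ∑' k, Rt q y z 0 k)]
    have h2 : ‖(∑' k, Lt q y z 0 k) - ∑' k, Rt q y z 0 k‖ = 0 :=
      le_antisymm h1 (norm_nonneg _)
    rw [norm_eq_zero, sub_eq_zero] at h2
    exact h2
  -- rewrite the goal
  have hgoalL : (∑' n : ℕ, y ^ n * z ^ n * q ^ (n ^ 2 + n) / qPoch (y * q) (q ^ 2) (n + 1))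
      = ∑' k, Lt q y z 0 k := by
    refine tsum_congr fun n => ?_
    rw [Lt]
    have hden' : qPoch (y * q) (q ^ 2) (n+1) = PP q y 0 (n+1) := by
      rw [qPoch, PP]
      refine Finset.prod_congr rfl fun k _ => ?_
      ring_nf
    rw [hden']
    congr 1
    norm_num
  have hgoalR : (∑' n : ℕ, qPoch (-(z * q)) (q ^ 2) n * (y * q) ^ n)
      = ∑' k, Rt q y z 0 k := by
    refine tsum_congr fun n => ?_
    rw [Rt]
    norm_num
  rw [hgoalL, hgoalR, hD0]
end

section
/- For complex numbers q, y, z with |q| < 1, the trivariate generalization ω(y,z;q) := Σ_{n≥0} yⁿ zⁿ q^{2n²+2n} / ((yq; q²)_{n+1} (zq; q²)_{n+1}) equals Σ_{n≥0} yⁿ qⁿ / (zq; q²)_{n+1}, whenever all series converge absolutely and no denominator vanishes. -/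
open scoped BigOperators

/-- Gaussian binomial `[n+j choose j]_Q` as a complex number. -/
noncomputable def qb (Q : ℂ) (n j : ℕ) : ℂ :=
  (∏ i ∈ Finset.range j, (1 - Q ^ (n + i + 1))) / (∏ i ∈ Finset.range j, (1 - Q ^ (i + 1)))

lemma one_sub_pow_ne {Q : ℂ} (hQ : ‖Q‖ < 1) (e : ℕ) : (1 : ℂ) - Q ^ (e + 1) ≠ 0 := by
  intro h
  have h1 : (1 : ℂ) = Q ^ (e + 1) := by linear_combination h
  have : ‖Q ^ (e + 1)‖ < 1 := by
    rw [norm_pow]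
    exact pow_lt_one₀ (norm_nonneg _) hQ (Nat.succ_ne_zero e)
  rw [← h1] at this; simp at this

lemma den_ne {Q : ℂ} (hQ : ‖Q‖ < 1) (j : ℕ) :
    (∏ i ∈ Finset.range j, ((1 : ℂ) - Q ^ (i + 1))) ≠ 0 :=
  Finset.prod_ne_zero_iff.2 fun i _ => one_sub_pow_ne hQ i

lemma num_ne {Q : ℂ} (hQ : ‖Q‖ < 1) (n j : ℕ) :
    (∏ i ∈ Finset.range j, ((1 : ℂ) - Q ^ (n + i + 1))) ≠ 0 :=
  Finset.prod_ne_zero_iff.2 fun i _ => by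
    have := one_sub_pow_ne hQ (n + i)
    simpa using this

@[simp] lemma qb_zero (Q : ℂ) (n : ℕ) : qb Q n 0 = 1 := by simp [qb]

lemma qb_zero' {Q : ℂ} (hQ : ‖Q‖ < 1) (j : ℕ) : qb Q 0 j = 1 := by
  unfold qb
  rw [div_eq_one_iff_eq (den_ne hQ j)]
  exact Finset.prod_congr rfl fun i _ => by norm_num

lemma qb_symm (Q : ℂ) (hQ : ‖Q‖ < 1) (n j : ℕ) : qb Q n j = qb Q j n := by
  unfold qb
  rw [div_eq_div_iff (den_ne hQ j) (den_ne hQ n)]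
  have h1 : (∏ i ∈ Finset.range (n + j), ((1:ℂ) - Q ^ (i + 1)))
      = (∏ i ∈ Finset.range n, ((1:ℂ) - Q ^ (i + 1))) *
        ∏ i ∈ Finset.range j, ((1:ℂ) - Q ^ (n + i + 1)) := by
    rw [Finset.prod_range_add]
  have h2 : (∏ i ∈ Finset.range (j + n), ((1:ℂ) - Q ^ (i + 1)))
      = (∏ i ∈ Finset.range j, ((1:ℂ) - Q ^ (i + 1))) *
        ∏ i ∈ Finset.range n, ((1:ℂ) - Q ^ (j + i + 1)) := by
    rw [Finset.prod_range_add]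
  calc (∏ i ∈ Finset.range j, ((1:ℂ) - Q ^ (n + i + 1))) *
        ∏ i ∈ Finset.range n, ((1:ℂ) - Q ^ (i + 1))
      = ∏ i ∈ Finset.range (n + j), ((1:ℂ) - Q ^ (i + 1)) := by rw [h1]; ring
    _ = ∏ i ∈ Finset.range (j + n), ((1:ℂ) - Q ^ (i + 1)) := by rw [add_comm]
    _ = (∏ i ∈ Finset.range n, ((1:ℂ) - Q ^ (j + i + 1))) *
        ∏ i ∈ Finset.range j, ((1:ℂ) - Q ^ (i + 1)) := by rw [h2]; ring

lemma qb_pascal {Q : ℂ} (hQ : ‖Q‖ < 1) (n j : ℕ) :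
    qb Q (n + 1) (j + 1) = qb Q (n + 1) j + Q ^ (j + 1) * qb Q n (j + 1) := by
  have e1 : qb Q (n + 1) (j + 1) * (1 - Q ^ (j + 1)) = qb Q (n + 1) j * (1 - Q ^ (n + j + 2)) := by
    unfold qb
    rw [Finset.prod_range_succ, Finset.prod_range_succ,
      show n + 1 + j + 1 = n + j + 2 from by omega]
    have hd := den_ne hQ j
    have hd1 := one_sub_pow_ne hQ j
    field_simp
  have e2 : qb Q n (j + 1) * (1 - Q ^ (n + j + 2)) = qb Q (n + 1) (j + 1) * (1 - Q ^ (n + 1)) := by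
    unfold qb
    have hnum : (∏ i ∈ Finset.range (j + 1), ((1:ℂ) - Q ^ (n + i + 1))) * (1 - Q ^ (n + j + 2))
        = (∏ i ∈ Finset.range (j + 1), ((1:ℂ) - Q ^ (n + 1 + i + 1))) * (1 - Q ^ (n + 1)) := by
      have l1 : (∏ i ∈ Finset.range (j + 2), ((1:ℂ) - Q ^ (n + i + 1)))
          = (∏ i ∈ Finset.range (j + 1), ((1:ℂ) - Q ^ (n + i + 1))) * (1 - Q ^ (n + j + 2)) := by
        rw [Finset.prod_range_succ, show n + (j + 1) + 1 = n + j + 2 from by omega]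
      have l2 : (∏ i ∈ Finset.range (j + 2), ((1:ℂ) - Q ^ (n + i + 1)))
          = (∏ i ∈ Finset.range (j + 1), ((1:ℂ) - Q ^ (n + 1 + i + 1))) * (1 - Q ^ (n + 1)) := by
        rw [Finset.prod_range_succ']
        congr 1
        exact Finset.prod_congr rfl fun i _ => by rw [show n + (i + 1) + 1 = n + 1 + i + 1 from by omega]
      rw [← l1, l2]
    rw [div_mul_eq_mul_div, div_mul_eq_mul_div, hnum]
  have h2 : (1 : ℂ) - Q ^ (n + j + 2) ≠ 0 := by
    have := one_sub_pow_ne hQ (n + j + 1); simpa [show n + j + 1 + 1 = n + j + 2 by omega] using this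
  apply mul_right_cancel₀ h2
  have := e1
  calc qb Q (n + 1) (j + 1) * (1 - Q ^ (n + j + 2))
      = qb Q (n+1) (j+1) * (1 - Q ^ (j+1)) + Q ^ (j + 1) * (qb Q (n+1) (j+1) * (1 - Q ^ (n + 1))) := by
        ring
    _ = qb Q (n + 1) j * (1 - Q ^ (n + j + 2)) + Q ^ (j + 1) * (qb Q n (j + 1) * (1 - Q ^ (n + j + 2))) := by
        rw [e1, e2]
    _ = (qb Q (n + 1) j + Q ^ (j + 1) * qb Q n (j + 1)) * (1 - Q ^ (n + j + 2)) := by ring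

lemma qb_bound {Q : ℂ} (hQ : ‖Q‖ < 1) (n j : ℕ) :
    ‖qb Q n j‖ ≤ (2 / (1 - ‖Q‖)) ^ n := by
  rw [qb_symm Q hQ n j]
  unfold qb
  rw [norm_div, div_pow]
  have h1 : ‖∏ i ∈ Finset.range n, ((1:ℂ) - Q ^ (j + i + 1))‖ ≤ 2 ^ n := by
    rw [norm_prod]
    calc ∏ i ∈ Finset.range n, ‖(1:ℂ) - Q ^ (j + i + 1)‖
        ≤ ∏ i ∈ Finset.range n, 2 := by
          apply Finset.prod_le_prod (fun i _ => norm_nonneg _)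
          intro i _
          calc ‖(1:ℂ) - Q ^ (j + i + 1)‖ ≤ ‖(1:ℂ)‖ + ‖Q ^ (j + i + 1)‖ := norm_sub_le _ _
            _ ≤ 1 + 1 := by
                rw [norm_one, norm_pow]
                have : ‖Q‖ ^ (j + i + 1) ≤ 1 :=
                  pow_le_one₀ (norm_nonneg _) (le_of_lt hQ)
                linarith
            _ = 2 := by norm_num
      _ = 2 ^ n := by simp
  have h2 : (1 - ‖Q‖) ^ n ≤ ‖∏ i ∈ Finset.range n, ((1:ℂ) - Q ^ (i + 1))‖ := by
    rw [norm_prod]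
    calc (1 - ‖Q‖) ^ n = ∏ i ∈ Finset.range n, (1 - ‖Q‖) := by simp
      _ ≤ ∏ i ∈ Finset.range n, ‖(1:ℂ) - Q ^ (i + 1)‖ := by
          apply Finset.prod_le_prod (fun i _ => by linarith)
          intro i _
          calc 1 - ‖Q‖ ≤ 1 - ‖Q‖ ^ (i + 1) := by
                have h5 : ‖Q‖ ^ (i + 1) ≤ ‖Q‖ ^ 1 :=
                  pow_le_pow_of_le_one (norm_nonneg _) (le_of_lt hQ) (by omega)
                rw [pow_one] at h5
                linarith
            _ ≤ ‖(1:ℂ) - Q ^ (i + 1)‖ := by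
                have := norm_sub_norm_le (1 : ℂ) (Q ^ (i + 1))
                rw [norm_one, norm_pow] at this
                linarith
  have hpos : (0:ℝ) < (1 - ‖Q‖) ^ n := pow_pos (by linarith) n
  exact div_le_div₀ (by positivity) h1 hpos h2

lemma qb_hasSum {Q : ℂ} (hQ : ‖Q‖ < 1) :
    ∀ (n : ℕ) (t : ℂ), ‖t‖ < 1 →
      HasSum (fun j => qb Q n j * t ^ j) (∏ k ∈ Finset.range (n + 1), (1 - t * Q ^ k))⁻¹ := by
  intro n
  induction n with
  | zero =>
    intro t ht
    have h0 : (∏ k ∈ Finset.range 1, (1 - t * Q ^ k)) = 1 - t := by simp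
    rw [h0]
    have := hasSum_geometric_of_norm_lt_one ht
    refine this.congr_fun fun j => ?_
    rw [qb_zero' hQ, one_mul]
  | succ n ih =>
    intro t ht
    have htQ : ‖t * Q‖ < 1 := by
      rw [norm_mul]
      nlinarith [norm_nonneg t, norm_nonneg Q]
    have IH := ih (t * Q) htQ
    set S : ℂ := (∏ k ∈ Finset.range (n + 1), (1 - t * Q * Q ^ k))⁻¹ with hS
    set u : ℕ → ℂ := fun j => qb Q (n + 1) j * t ^ j with hu
    have hsumu : Summable u := by
      apply Summable.of_norm_bounded (g := fun j => (2 / (1 - ‖Q‖)) ^ (n + 1) * ‖t‖ ^ j)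
      · exact (summable_geometric_of_lt_one (norm_nonneg t) ht).mul_left _
      · intro j
        rw [hu, norm_mul, norm_pow]
        exact mul_le_mul_of_nonneg_right (qb_bound hQ (n + 1) j)
          (pow_nonneg (norm_nonneg t) j)
    set A : ℂ := ∑' j, u j with hA
    have hAsum : HasSum u A := hsumu.hasSum
    have hu0 : u 0 = 1 := by simp [hu]
    have h1 : HasSum (fun j => u (j + 1)) (A - 1) := by
      refine (hasSum_nat_add_iff (f := u) 1).2 ?_
      simpa [hu0] using hAsum
    have h2 : HasSum (fun j => u (j + 1) - t * u j) ((A - 1) - t * A) :=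
      h1.sub (hAsum.mul_left t)
    have h3 : (fun j => u (j + 1) - t * u j) = fun j => qb Q n (j + 1) * (t * Q) ^ (j + 1) := by
      funext j
      rw [hu]
      simp only
      rw [qb_pascal hQ n j]
      ring
    have h4 : HasSum (fun j => qb Q n (j + 1) * (t * Q) ^ (j + 1)) (S - 1) := by
      refine (hasSum_nat_add_iff (f := fun j => qb Q n j * (t * Q) ^ j) 1).2 ?_
      simpa using IH
    rw [h3] at h2
    have h5 : (A - 1) - t * A = S - 1 := h2.unique h4
    have h6 : (1 - t) * A = S := by linear_combination h5
    have hts : (1 : ℂ) - t ≠ 0 := by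
      intro h
      have h1' : (1 : ℂ) = t := by linear_combination h
      rw [← h1'] at ht; simp at ht
    have h7 : A = (∏ k ∈ Finset.range (n + 2), (1 - t * Q ^ k))⁻¹ := by
      have hprod : (∏ k ∈ Finset.range (n + 2), (1 - t * Q ^ k))
          = (∏ k ∈ Finset.range (n + 1), (1 - t * Q * Q ^ k)) * (1 - t) := by
        rw [Finset.prod_range_succ']
        congr 1
        · exact Finset.prod_congr rfl fun k _ => by rw [pow_succ']; ring
        · simp
      rw [hprod, mul_inv, ← hS, ← h6]
      field_simp
    rw [← h7]
    exact hAsum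

lemma finid {Q : ℂ} (hQ : ‖Q‖ < 1) :
    ∀ (N : ℕ) (x : ℂ),
      ∑ n ∈ Finset.range (N + 1),
        qb Q (N - n) n * Q ^ (n ^ 2) * x ^ n *
          (∏ k ∈ Finset.range (N - n), (1 - x * Q ^ (n + 1 + k))) = 1 := by
  intro N
  induction N with
  | zero => intro x; simp
  | succ N ih =>
    intro x
    set w : ℕ → ℂ := fun n =>
      if n ≤ N then
        qb Q (N - n) n * Q ^ (n ^ 2 + n) * x ^ n *
          ∏ k ∈ Finset.range (N + 1 - n), (1 - x * Q ^ (n + 1 + k))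
      else 0 with hw
    have key : ∀ n, n ≤ N →
        qb Q (N + 1 - (n + 1)) (n + 1) * Q ^ ((n + 1) ^ 2) * x ^ (n + 1) *
          (∏ k ∈ Finset.range (N + 1 - (n + 1)), (1 - x * Q ^ (n + 1 + 1 + k)))
        = qb Q (N - n) n * Q ^ (n ^ 2) * (x * Q) ^ n *
            (∏ k ∈ Finset.range (N - n), (1 - x * Q * Q ^ (n + 1 + k)))
          + (w (n + 1) - w n) := by
      intro n hn
      have hr1 : N + 1 - (n + 1) = N - n := by omega
      rw [hr1]
      rcases Nat.lt_or_ge n N with hlt | hge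
      · -- case n < N
        have hm : ∃ m, N - n = m + 1 := ⟨N - n - 1, by omega⟩
        obtain ⟨m, hm⟩ := hm
        have hw1 : w (n + 1) = qb Q m (n + 1) * Q ^ ((n + 1) ^ 2 + (n + 1)) * x ^ (n + 1) *
            ∏ k ∈ Finset.range (m + 1), (1 - x * Q ^ (n + 1 + 1 + k)) := by
          rw [hw]
          simp only
          rw [if_pos (by omega : n + 1 ≤ N),
            show N - (n + 1) = m from by omega, show N + 1 - (n + 1) = m + 1 from by omega]
        have hw2 : w n = qb Q (m + 1) n * Q ^ (n ^ 2 + n) * x ^ n *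
            ((∏ k ∈ Finset.range (m + 1), (1 - x * Q ^ (n + 1 + 1 + k))) * (1 - x * Q ^ (n + 1))) := by
          rw [hw]
          simp only
          rw [if_pos hn, show N - n = m + 1 from hm, show N + 1 - n = m + 2 from by omega]
          congr 1
          rw [Finset.prod_range_succ']
          congr 1
          exact Finset.prod_congr rfl fun k _ => by
            rw [show n + 1 + (k + 1) = n + 1 + 1 + k from by omega]
        have hprod : (∏ k ∈ Finset.range (m + 1), (1 - x * Q * Q ^ (n + 1 + k)))
            = ∏ k ∈ Finset.range (m + 1), (1 - x * Q ^ (n + 1 + 1 + k)) := by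
          exact Finset.prod_congr rfl fun k _ => by
            rw [show n + 1 + 1 + k = (n + 1 + k) + 1 from by omega, pow_succ]
            ring
        rw [hm, hw1, hw2, hprod, qb_pascal hQ m n]
        ring
      · -- case n = N, so N - n = 0
        have h0 : N - n = 0 := by omega
        rw [h0]
        have hw1 : w (n + 1) = 0 := by
          rw [hw]; simp only
          rw [if_neg (by omega : ¬ n + 1 ≤ N)]
        have hw2 : w n = qb Q 0 n * Q ^ (n ^ 2 + n) * x ^ n *
            ∏ k ∈ Finset.range 1, (1 - x * Q ^ (n + 1 + k)) := by
          rw [hw]; simp only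
          rw [if_pos hn, h0, show N + 1 - n = 1 from by omega]
        rw [hw1, hw2, qb_zero' hQ, qb_zero' hQ]
        simp only [Finset.range_zero, Finset.prod_empty, Finset.prod_range_one]
        rw [show (n + 1) ^ 2 = n ^ 2 + n + (n + 1) from by ring]
        ring
    -- now the sum manipulation
    have hsplit : ∑ n ∈ Finset.range (N + 2),
        qb Q (N + 1 - n) n * Q ^ (n ^ 2) * x ^ n *
          (∏ k ∈ Finset.range (N + 1 - n), (1 - x * Q ^ (n + 1 + k)))
        = (∑ n ∈ Finset.range (N + 1),
            qb Q (N + 1 - (n + 1)) (n + 1) * Q ^ ((n + 1) ^ 2) * x ^ (n + 1) *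
              (∏ k ∈ Finset.range (N + 1 - (n + 1)), (1 - x * Q ^ (n + 1 + 1 + k))))
          + qb Q (N + 1) 0 * Q ^ (0 ^ 2) * x ^ 0 *
              (∏ k ∈ Finset.range (N + 1), (1 - x * Q ^ (0 + 1 + k))) := by
      rw [Finset.sum_range_succ']
      norm_num
    rw [hsplit]
    rw [Finset.sum_congr rfl fun n hn => key n (by simpa using Nat.lt_succ_iff.mp (Finset.mem_range.mp hn))]
    rw [Finset.sum_add_distrib, Finset.sum_range_sub (f := w)]
    have hwN1 : w (N + 1) = 0 := by rw [hw]; simp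
    have hw0 : w 0 = qb Q (N + 1) 0 * Q ^ (0 ^ 2) * x ^ 0 *
        (∏ k ∈ Finset.range (N + 1), (1 - x * Q ^ (0 + 1 + k))) := by
      rw [hw]; simp [qb_zero]
    rw [hwN1, hw0, ih (x * Q)]
    ring

lemma prod_sub_one_bound (a : ℕ → ℂ) (m : ℕ) :
    ‖(∏ i ∈ Finset.range m, (1 - a i)) - 1‖ ≤ (∏ i ∈ Finset.range m, (1 + ‖a i‖)) - 1 := by
  induction m with
  | zero => simp
  | succ m ih =>
    have hQm : (1 : ℝ) ≤ ∏ i ∈ Finset.range m, (1 + ‖a i‖) := by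
      have := Finset.prod_le_prod (s := Finset.range m) (f := fun _ => (1:ℝ))
        (g := fun i => 1 + ‖a i‖) (fun i _ => by norm_num)
        (fun i _ => by show (1:ℝ) ≤ 1 + ‖a i‖; linarith [norm_nonneg (a i)])
      simpa using this
    rw [Finset.prod_range_succ, Finset.prod_range_succ]
    have heq : (∏ i ∈ Finset.range m, (1 - a i)) * (1 - a m) - 1
        = ((∏ i ∈ Finset.range m, (1 - a i)) - 1) * (1 - a m) - a m := by ring
    rw [heq]
    calc ‖((∏ i ∈ Finset.range m, (1 - a i)) - 1) * (1 - a m) - a m‖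
        ≤ ‖((∏ i ∈ Finset.range m, (1 - a i)) - 1) * (1 - a m)‖ + ‖a m‖ := norm_sub_le _ _
      _ = ‖(∏ i ∈ Finset.range m, (1 - a i)) - 1‖ * ‖1 - a m‖ + ‖a m‖ := by rw [norm_mul]
      _ ≤ ((∏ i ∈ Finset.range m, (1 + ‖a i‖)) - 1) * (1 + ‖a m‖) + ‖a m‖ := by
          apply add_le_add_left
          apply mul_le_mul ih _ (norm_nonneg _) (by linarith)
          calc ‖(1:ℂ) - a m‖ ≤ ‖(1:ℂ)‖ + ‖a m‖ := norm_sub_le _ _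
            _ = 1 + ‖a m‖ := by rw [norm_one]
      _ = (∏ i ∈ Finset.range m, (1 + ‖a i‖)) * (1 + ‖a m‖) - 1 := by ring
  
lemma prod_one_add_le_exp (x : ℕ → ℝ) (hx : ∀ i, 0 ≤ x i) (m : ℕ) :
    (∏ i ∈ Finset.range m, (1 + x i)) ≤ Real.exp (∑ i ∈ Finset.range m, x i) := by
  rw [Real.exp_sum]
  apply Finset.prod_le_prod
  · intro i _; linarith [hx i]
  · intro i _
    have := Real.add_one_le_exp (x i)
    linarith

lemma inv_prod_bound (w : ℕ → ℂ) (hw : ∀ k, (1 : ℂ) - w k ≠ 0)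
    (hs : Summable fun k => ‖w k‖) :
    ∃ C : ℝ, ∀ n, ‖(∏ k ∈ Finset.range n, (1 - w k))⁻¹‖ ≤ C := by
  set T : ℝ := ∑' k, ‖w k‖ with hT
  have hδ : (0:ℝ) < Real.log (3/2) := Real.log_pos (by norm_num)
  -- choose K with tail small
  have htend : Filter.Tendsto (fun K => ∑ k ∈ Finset.range K, ‖w k‖) Filter.atTop (nhds T) :=
    hs.hasSum.tendsto_sum_nat
  have hev : ∀ᶠ K in Filter.atTop, T - (∑ k ∈ Finset.range K, ‖w k‖) < Real.log (3/2) := by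
    have := htend.eventually (eventually_gt_nhds (show T - Real.log (3/2) < T by linarith))
    filter_upwards [this] with K hK
    linarith
  obtain ⟨K, hK⟩ := hev.exists
  have hbase : ∀ n, 0 < ‖(∏ k ∈ Finset.range n, (1 - w k))‖ := by
    intro n
    rw [norm_pos_iff]
    exact Finset.prod_ne_zero_iff.2 fun k _ => hw k
  refine ⟨(∑ i ∈ Finset.range (K + 1), ‖(∏ k ∈ Finset.range i, (1 - w k))⁻¹‖) +
    2 * ‖(∏ k ∈ Finset.range K, (1 - w k))⁻¹‖, ?_⟩
  intro n
  rcases le_or_gt n K with hnK | hnK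
  · have h1 : ‖(∏ k ∈ Finset.range n, (1 - w k))⁻¹‖
        ≤ ∑ i ∈ Finset.range (K + 1), ‖(∏ k ∈ Finset.range i, (1 - w k))⁻¹‖ := by
      apply Finset.single_le_sum (f := fun i => ‖(∏ k ∈ Finset.range i, (1 - w k))⁻¹‖)
        (fun i _ => norm_nonneg _)
      exact Finset.mem_range.2 (by omega)
    have h2 : (0:ℝ) ≤ 2 * ‖(∏ k ∈ Finset.range K, (1 - w k))⁻¹‖ := by positivity
    linarith
  · obtain ⟨m, rfl⟩ : ∃ m, n = K + m := ⟨n - K, by omega⟩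
    rw [Finset.prod_range_add]
    set R : ℂ := ∏ i ∈ Finset.range m, (1 - w (K + i)) with hR
    have htail : ∑ i ∈ Finset.range m, ‖w (K + i)‖ ≤ Real.log (3/2) := by
      have hle : (∑ k ∈ Finset.range K, ‖w k‖) + ∑ i ∈ Finset.range m, ‖w (K + i)‖
          = ∑ k ∈ Finset.range (K + m), ‖w k‖ := (Finset.sum_range_add _ _ _).symm
      have hle2 : ∑ k ∈ Finset.range (K + m), ‖w k‖ ≤ T :=
        Summable.sum_le_tsum _ (fun k _ => norm_nonneg _) hs
      linarith
    have hRbound : ‖R - 1‖ ≤ 1 / 2 := by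
      calc ‖R - 1‖ ≤ (∏ i ∈ Finset.range m, (1 + ‖w (K + i)‖)) - 1 :=
            prod_sub_one_bound _ m
        _ ≤ Real.exp (∑ i ∈ Finset.range m, ‖w (K + i)‖) - 1 := by
            have := prod_one_add_le_exp (fun i => ‖w (K + i)‖) (fun i => norm_nonneg _) m
            linarith
        _ ≤ Real.exp (Real.log (3/2)) - 1 := by
            have := Real.exp_le_exp.2 htail
            linarith
        _ = 1 / 2 := by rw [Real.exp_log (by norm_num : (0:ℝ) < 3/2)]; norm_num
    have hRlow : (1:ℝ)/2 ≤ ‖R‖ := by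
      have := norm_sub_norm_le R 1
      rw [norm_one] at this
      have h' : ‖R‖ - 1 ≤ 1/2 := le_trans (by linarith [abs_norm (R : ℂ)]) hRbound
      -- use |‖R‖ - ‖1‖| ≤ ‖R - 1‖ in the other direction:
      have h'' : 1 - ‖R‖ ≤ ‖R - 1‖ := by
        have := norm_sub_norm_le (1:ℂ) R
        rw [norm_one, norm_sub_rev] at this
        linarith
      linarith
    rw [mul_inv, norm_mul]
    have hRinv : ‖R⁻¹‖ ≤ 2 := by
      rw [norm_inv]
      rw [inv_le_comm₀ (by linarith) (by norm_num)]
      linarith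
    have h3 : ‖(∏ k ∈ Finset.range K, (1 - w k))⁻¹‖ * ‖R⁻¹‖
        ≤ 2 * ‖(∏ k ∈ Finset.range K, (1 - w k))⁻¹‖ := by
      calc ‖(∏ k ∈ Finset.range K, (1 - w k))⁻¹‖ * ‖R⁻¹‖
          ≤ ‖(∏ k ∈ Finset.range K, (1 - w k))⁻¹‖ * 2 :=
            mul_le_mul_of_nonneg_left hRinv (norm_nonneg _)
        _ = 2 * ‖(∏ k ∈ Finset.range K, (1 - w k))⁻¹‖ := by ring
    have h4 : (0:ℝ) ≤ ∑ i ∈ Finset.range (K + 1), ‖(∏ k ∈ Finset.range i, (1 - w k))⁻¹‖ :=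
      Finset.sum_nonneg fun i _ => norm_nonneg _
    linarith



theorem omega_trivariate (q y z : ℂ) (hq : ‖q‖ < 1) (hy : ‖y‖ < 1)
    (hdy : ∀ k : ℕ, 1 - y * q ^ (2 * k + 1) ≠ 0)
    (hdz : ∀ k : ℕ, 1 - z * q ^ (2 * k + 1) ≠ 0)
    (hL : Summable fun n : ℕ =>
      ‖y ^ n * z ^ n * q ^ (2 * n ^ 2 + 2 * n) /
        (qPoch (y * q) (q ^ 2) (n + 1) * qPoch (z * q) (q ^ 2) (n + 1))‖)
    (hR : Summable fun n : ℕ => ‖y ^ n * q ^ n / qPoch (z * q) (q ^ 2) (n + 1)‖) :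
    ∑' n : ℕ, y ^ n * z ^ n * q ^ (2 * n ^ 2 + 2 * n) /
        (qPoch (y * q) (q ^ 2) (n + 1) * qPoch (z * q) (q ^ 2) (n + 1))
      = ∑' n : ℕ, y ^ n * q ^ n / qPoch (z * q) (q ^ 2) (n + 1) := by
  have hQ2 : ‖q ^ 2‖ < 1 := by
    rw [norm_pow]
    nlinarith [norm_nonneg q]
  have hyq : ‖y * q‖ < 1 := by
    rw [norm_mul]
    nlinarith [norm_nonneg y, norm_nonneg q]
  have hfac : ∀ k : ℕ, z * q * (q ^ 2) ^ k = z * q ^ (2 * k + 1) := by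
    intro k
    rw [← pow_mul]
    ring
  have hz_ne : ∀ k : ℕ, (1 : ℂ) - z * q * (q ^ 2) ^ k ≠ 0 := fun k => by
    rw [hfac]; exact hdz k
  have hz_fac_ne : ∀ n : ℕ, qPoch (z * q) (q ^ 2) n ≠ 0 := fun n => by
    rw [qPoch]
    exact Finset.prod_ne_zero_iff.2 fun k _ => hz_ne k
  have hsz : Summable fun k => ‖z * q * (q ^ 2) ^ k‖ := by
    have he : (fun k => ‖z * q * (q ^ 2) ^ k‖) = fun k => ‖z * q‖ * ‖q ^ 2‖ ^ k :=
      funext fun k => by rw [norm_mul, norm_pow]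
    rw [he]
    exact (summable_geometric_of_lt_one (norm_nonneg _) hQ2).mul_left _
  obtain ⟨Cz, hCz⟩ := inv_prod_bound (fun k => z * q * (q ^ 2) ^ k) hz_ne hsz
  have hCz0 : (0:ℝ) ≤ Cz := le_trans (norm_nonneg _) (hCz 0)
  -- the double-indexed family
  set F : ℕ × ℕ → ℂ := fun p =>
    (y ^ p.1 * z ^ p.1 * q ^ (2 * p.1 ^ 2 + 2 * p.1) * (qPoch (z * q) (q ^ 2) (p.1 + 1))⁻¹) *
      (qb (q ^ 2) p.1 p.2 * (y * q) ^ p.2) with hF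
  set g : ℕ → ℝ := fun n =>
    Cz * ((2 / (1 - ‖q ^ 2‖) * (‖y‖ * ‖z‖)) * (‖q‖ ^ 2) ^ (n + 1)) ^ n with hg
  have h1mq : (0:ℝ) < 1 - ‖q ^ 2‖ := by linarith
  have hb0 : (0:ℝ) ≤ 2 / (1 - ‖q ^ 2‖) * (‖y‖ * ‖z‖) :=
    mul_nonneg (div_nonneg (by norm_num) (le_of_lt h1mq)) (mul_nonneg (norm_nonneg _) (norm_nonneg _))
  have hFbound : ∀ p : ℕ × ℕ, ‖F p‖ ≤ g p.1 * ‖y * q‖ ^ p.2 := by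
    rintro ⟨n, j⟩
    have h1 : ‖F (n, j)‖ = (‖y‖ ^ n * ‖z‖ ^ n * ‖q‖ ^ (2 * n ^ 2 + 2 * n) *
        ‖(qPoch (z * q) (q ^ 2) (n + 1))⁻¹‖) * (‖qb (q ^ 2) n j‖ * ‖y * q‖ ^ j) := by
      rw [hF]
      simp [norm_mul, norm_pow]
    rw [h1]
    have h2 : (‖y‖ ^ n * ‖z‖ ^ n * ‖q‖ ^ (2 * n ^ 2 + 2 * n) *
        ‖(qPoch (z * q) (q ^ 2) (n + 1))⁻¹‖) * (‖qb (q ^ 2) n j‖ * ‖y * q‖ ^ j)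
        ≤ (‖y‖ ^ n * ‖z‖ ^ n * ‖q‖ ^ (2 * n ^ 2 + 2 * n) * Cz) *
          ((2 / (1 - ‖q ^ 2‖)) ^ n * ‖y * q‖ ^ j) := by
      have hq2 : ‖(qPoch (z * q) (q ^ 2) (n + 1))⁻¹‖ ≤ Cz := hCz (n + 1)
      have hq3 : ‖qb (q ^ 2) n j‖ ≤ (2 / (1 - ‖q ^ 2‖)) ^ n := qb_bound hQ2 n j
      gcongr
    refine le_trans h2 (le_of_eq ?_)
    rw [hg]
    simp only
    rw [show 2 * n ^ 2 + 2 * n = 2 * (n ^ 2 + n) from by ring, pow_mul,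
      show ∀ a : ℝ, a ^ 2 = a * a from fun a => sq a]
    ring
  have hgs : Summable g := by
    have hr01 : (0:ℝ) ≤ ‖q‖ ^ 2 := by positivity
    have hr1 : ‖q‖ ^ 2 < 1 := by nlinarith [norm_nonneg q]
    have htend : Filter.Tendsto
        (fun n : ℕ => (2 / (1 - ‖q ^ 2‖) * (‖y‖ * ‖z‖)) * (‖q‖ ^ 2) ^ n)
        Filter.atTop (nhds 0) := by
      have h0 : Filter.Tendsto (fun n : ℕ => (‖q‖ ^ 2) ^ n) Filter.atTop (nhds 0) := by
        apply tendsto_pow_atTop_nhds_zero_of_abs_lt_one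
        rw [abs_of_nonneg hr01]
        exact hr1
      have h1 := h0.const_mul (2 / (1 - ‖q ^ 2‖) * (‖y‖ * ‖z‖))
      rw [mul_zero] at h1
      exact h1
    have hev : ∀ᶠ n : ℕ in Filter.atTop,
        (2 / (1 - ‖q ^ 2‖) * (‖y‖ * ‖z‖)) * (‖q‖ ^ 2) ^ n ≤ 1 / 2 :=
      htend.eventually (eventually_le_nhds (show (0:ℝ) < 1/2 by norm_num))
    rw [Filter.eventually_atTop] at hev
    obtain ⟨K, hK⟩ := hev
    rw [← summable_nat_add_iff K]
    have hmaj : Summable fun n : ℕ => Cz * (1/2 : ℝ) ^ (n + K) := by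
      apply Summable.mul_left
      exact summable_geometric_of_lt_one (by norm_num) (by norm_num) |>.comp_injective
        (add_left_injective K)
    refine Summable.of_nonneg_of_le (fun n => by rw [hg]; positivity) (fun n => ?_) hmaj
    rw [hg]
    simp only
    apply mul_le_mul_of_nonneg_left _ hCz0
    have hKn : (2 / (1 - ‖q ^ 2‖) * (‖y‖ * ‖z‖)) * ((‖q‖ ^ 2) ^ (n + K + 1)) ≤ 1 / 2 :=
      hK (n + K + 1) (by omega)
    calc (2 / (1 - ‖q ^ 2‖) * (‖y‖ * ‖z‖) * (‖q‖ ^ 2) ^ (n + K + 1)) ^ (n + K)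
        ≤ (1/2 : ℝ) ^ (n + K) := by
          apply pow_le_pow_left₀ _ _ (n + K)
          · positivity
          · exact hKn
      _ = (1/2 : ℝ) ^ (n + K) := rfl
  have hhs : Summable fun j : ℕ => ‖y * q‖ ^ j :=
    summable_geometric_of_lt_one (norm_nonneg _) hyq
  have hFnorm : Summable fun p : ℕ × ℕ => ‖F p‖ := by
    apply Summable.of_nonneg_of_le (fun p => norm_nonneg _) hFbound
    exact hgs.mul_of_nonneg hhs
      (fun n => by rw [hg]; positivity) (fun j => by positivity)
  have hFsum : Summable F := hFnorm.of_norm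
  -- Part A : LHS = ∑' p, F p
  have hA : (∑' n : ℕ, y ^ n * z ^ n * q ^ (2 * n ^ 2 + 2 * n) /
        (qPoch (y * q) (q ^ 2) (n + 1) * qPoch (z * q) (q ^ 2) (n + 1)))
      = ∑' p : ℕ × ℕ, F p := by
    rw [Summable.tsum_prod' hFsum hFsum.prod_factor]
    apply tsum_congr
    intro n
    have hinner : ∑' j : ℕ, F (n, j)
        = (y ^ n * z ^ n * q ^ (2 * n ^ 2 + 2 * n) * (qPoch (z * q) (q ^ 2) (n + 1))⁻¹) *
          ∑' j : ℕ, qb (q ^ 2) n j * (y * q) ^ j := by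
      rw [← tsum_mul_left]
    rw [hinner, ((qb_hasSum hQ2 n (y * q) hyq)).tsum_eq]
    have hPy : qPoch (y * q) (q ^ 2) (n + 1) = ∏ k ∈ Finset.range (n + 1), (1 - y * q * (q ^ 2) ^ k) := rfl
    rw [qPoch, div_eq_mul_inv, mul_inv]
    ring
  -- Part B : reindex
  set H : ℕ × ℕ → ℂ := fun p => if p.2 ≤ p.1 then F (p.2, p.1 - p.2) else 0 with hH
  have hgdef : Function.Injective (fun p : ℕ × ℕ => (p.1 + p.2, p.1)) := by
    rintro ⟨a, b⟩ ⟨c, d⟩ h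
    simp only [Prod.mk.injEq] at h
    obtain ⟨h1, h2⟩ := h
    simp only [Prod.mk.injEq]
    exact ⟨h2, by omega⟩
  have hHcomp : (fun p : ℕ × ℕ => H ((p.1 + p.2, p.1))) = F := by
    funext p
    rw [hH]
    simp only
    rw [if_pos (Nat.le_add_right _ _)]
    have he : p.1 + p.2 - p.1 = p.2 := by omega
    rw [he]
  have hHsupp : ∀ x : ℕ × ℕ, x ∉ Set.range (fun p : ℕ × ℕ => (p.1 + p.2, p.1)) → H x = 0 := by
    rintro ⟨N, i⟩ hx
    rw [hH]
    simp only
    rw [if_neg]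
    intro hle
    exact hx ⟨(i, N - i), by simp only [Prod.mk.injEq]; exact ⟨by omega, trivial⟩⟩
  have hsupp' : Function.support H ⊆ Set.range (fun p : ℕ × ℕ => (p.1 + p.2, p.1)) := by
    intro x hx
    by_contra hxr
    exact hx (hHsupp x hxr)
  have hB : ∑' p : ℕ × ℕ, F p = ∑' p : ℕ × ℕ, H p := by
    conv_lhs => rw [← hHcomp]
    exact hgdef.tsum_eq hsupp'
  have hHsum : Summable H := by
    apply (hgdef.summable_iff hHsupp).1
    have hcomp : (H ∘ fun p : ℕ × ℕ => (p.1 + p.2, p.1)) = F := by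
      rw [Function.comp_def]; exact hHcomp
    rw [hcomp]; exact hFsum
  -- Part C : unfold inner sums
  have hC : ∑' p : ℕ × ℕ, H p = ∑' N : ℕ, ∑ i ∈ Finset.range (N + 1), F (i, N - i) := by
    rw [Summable.tsum_prod' hHsum hHsum.prod_factor]
    apply tsum_congr
    intro N
    have h0 : ∀ i ∉ Finset.range (N + 1), H (N, i) = 0 := by
      intro i hi
      rw [hH]
      simp only
      rw [if_neg]
      simp only [Finset.mem_range] at hi
      omega
    rw [tsum_eq_sum h0]
    apply Finset.sum_congr rfl
    intro i hi
    rw [hH]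
    simp only
    rw [if_pos (Nat.lt_succ_iff.mp (Finset.mem_range.mp hi))]
  -- Part D : evaluate the inner sum via the finite identity
  have hD : ∀ N : ℕ, ∑ i ∈ Finset.range (N + 1), F (i, N - i)
      = y ^ N * q ^ N * (qPoch (z * q) (q ^ 2) (N + 1))⁻¹ := by
    intro N
    have hfin := finid hQ2 N (z * q)
    have hterm : ∀ i ∈ Finset.range (N + 1), F (i, N - i)
        = (y ^ N * q ^ N) * (qb (q ^ 2) (N - i) i * (q ^ 2) ^ (i ^ 2) * (z * q) ^ i *
            (qPoch (z * q) (q ^ 2) (i + 1))⁻¹) := by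
      intro i hi
      have hiN : i ≤ N := Nat.lt_succ_iff.mp (Finset.mem_range.mp hi)
      obtain ⟨j, rfl⟩ : ∃ j, N = i + j := ⟨N - i, by omega⟩
      have hsub : i + j - i = j := by omega
      rw [hF]
      simp only
      rw [hsub, qb_symm _ hQ2 i j]
      ring
    rw [Finset.sum_congr rfl hterm, ← Finset.mul_sum]
    congr 1
    have hsplitP : ∀ i, i ≤ N →
        qPoch (z * q) (q ^ 2) (N + 1)
        = qPoch (z * q) (q ^ 2) (i + 1) *
          ∏ k ∈ Finset.range (N - i), (1 - z * q * (q ^ 2) ^ (i + 1 + k)) := by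
      intro i hiN
      rw [qPoch, qPoch, show N + 1 = (i + 1) + (N - i) from by omega, Finset.prod_range_add]
    have hterm2 : ∀ i ∈ Finset.range (N + 1),
        qb (q ^ 2) (N - i) i * (q ^ 2) ^ (i ^ 2) * (z * q) ^ i *
            (qPoch (z * q) (q ^ 2) (i + 1))⁻¹
        = (qb (q ^ 2) (N - i) i * (q ^ 2) ^ (i ^ 2) * (z * q) ^ i *
            ∏ k ∈ Finset.range (N - i), (1 - z * q * (q ^ 2) ^ (i + 1 + k))) *
          (qPoch (z * q) (q ^ 2) (N + 1))⁻¹ := by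
      intro i hi
      have hiN : i ≤ N := Nat.lt_succ_iff.mp (Finset.mem_range.mp hi)
      have hprodne : (∏ k ∈ Finset.range (N - i), (1 - z * q * (q ^ 2) ^ (i + 1 + k))) ≠ 0 :=
        Finset.prod_ne_zero_iff.2 fun k _ => hz_ne (i + 1 + k)
      rw [hsplitP i hiN, mul_inv]
      rw [mul_comm (qPoch (z * q) (q ^ 2) (i + 1))⁻¹
        (∏ k ∈ Finset.range (N - i), (1 - z * q * (q ^ 2) ^ (i + 1 + k)))⁻¹]
      rw [← mul_assoc, mul_assoc _ (∏ k ∈ Finset.range (N - i), (1 - z * q * (q ^ 2) ^ (i + 1 + k)))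
        (∏ k ∈ Finset.range (N - i), (1 - z * q * (q ^ 2) ^ (i + 1 + k)))⁻¹]
      rw [mul_inv_cancel₀ hprodne, mul_one]
    rw [Finset.sum_congr rfl hterm2, ← Finset.sum_mul, hfin, one_mul]
  -- Conclusion
  rw [hA, hB, hC]
  apply tsum_congr
  intro N
  rw [hD N, div_eq_mul_inv]
end

section
/- For complex q, y, z with |q| < 1 and suitable convergence, Σ_{n≥0} yⁿ qⁿ / (zq; q²)_{n+1} = Σ_{n≥0} zⁿ qⁿ / (yq; q²)_{n+1}; i.e., the function ω(y,z;q) is symmetric in y and z. -/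
open scoped BigOperators

open Finset

namespace OmegaSym

noncomputable def P (Q : ℂ) (n : ℕ) : ℂ := ∏ i ∈ Finset.range n, (1 - Q ^ (i+1))

noncomputable def g (Q : ℂ) (n m : ℕ) : ℂ := P Q (n+m) / (P Q n * P Q m)

variable {Q : ℂ}

lemma factor_ne_zero (hQ : ‖Q‖ < 1) (i : ℕ) : (1 : ℂ) - Q ^ (i+1) ≠ 0 := by
  intro h
  have h1 : Q ^ (i+1) = 1 := by linear_combination -h
  have h2 : ‖Q ^ (i+1)‖ < 1 := by
    rw [norm_pow]
    exact pow_lt_one₀ (norm_nonneg _) hQ (Nat.succ_ne_zero i)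
  rw [h1, norm_one] at h2; exact lt_irrefl _ h2

lemma P_ne_zero (hQ : ‖Q‖ < 1) (n : ℕ) : P Q n ≠ 0 :=
  Finset.prod_ne_zero_iff.2 fun i _ => factor_ne_zero hQ i

lemma g_symm (n m : ℕ) : g Q n m = g Q m n := by
  rw [g, g, add_comm, mul_comm]

lemma g_zero_left (hQ : ‖Q‖ < 1) (m : ℕ) : g Q 0 m = 1 := by
  rw [g]
  rw [show (0:ℕ)+m = m from by omega]
  rw [show P Q 0 = 1 from Finset.prod_range_zero _, one_mul,
    div_self (P_ne_zero hQ m)]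

lemma g_zero_right (hQ : ‖Q‖ < 1) (n : ℕ) : g Q n 0 = 1 := by
  rw [g_symm]; exact g_zero_left hQ n

lemma g_ratio (hQ : ‖Q‖ < 1) (n m : ℕ) :
    g Q n m = (∏ i ∈ Finset.range m, (1 - Q ^ (n+1+i))) / P Q m := by
  rw [g, P, Finset.prod_range_add]
  have : (∏ i ∈ Finset.range m, (1 - Q ^ (n + i + 1)))
      = ∏ i ∈ Finset.range m, (1 - Q ^ (n + 1 + i)) := by
    apply Finset.prod_congr rfl; intro i _; ring_nf
  rw [this]
  have hn := P_ne_zero hQ n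
  have hm := P_ne_zero hQ m
  rw [show (∏ x ∈ Finset.range n, (1 - Q ^ (x+1))) = P Q n from rfl]
  field_simp

lemma g_pascal (hQ : ‖Q‖ < 1) (n m : ℕ) :
    g Q n (m+1) = g Q (n+1) (m+1) - Q^(n+1) * g Q (n+1) m := by
  have hn := P_ne_zero hQ n
  have hm := P_ne_zero hQ m
  have h1 := factor_ne_zero hQ n
  have h2 := factor_ne_zero hQ m
  have e1 : P Q (n+1) = P Q n * (1 - Q^(n+1)) := Finset.prod_range_succ _ _
  have e2 : P Q (m+1) = P Q m * (1 - Q^(m+1)) := Finset.prod_range_succ _ _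
  have e3 : P Q (n+(m+1)) = P Q (n+m) * (1 - Q^(n+m+1)) := by
    rw [show n+(m+1) = (n+m)+1 from by omega]
    exact Finset.prod_range_succ _ _
  have e4 : P Q ((n+1)+(m+1)) = P Q (n+m) * (1 - Q^(n+m+1)) * (1 - Q^(n+m+2)) := by
    rw [show (n+1)+(m+1) = ((n+m)+1)+1 from by omega]
    simp only [P, Finset.prod_range_succ]
  have e5 : P Q ((n+1)+m) = P Q (n+m) * (1 - Q^(n+m+1)) := by
    rw [show (n+1)+m = (n+m)+1 from by omega]
    exact Finset.prod_range_succ _ _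
  rw [g, g, g, e1, e2, e3, e4, e5]
  field_simp
  ring

lemma g_norm_le (hQ : ‖Q‖ < 1) (n m : ℕ) :
    ‖g Q n m‖ ≤ Real.exp (2 * ‖Q‖ / (1 - ‖Q‖)^2) := by
  set r : ℝ := ‖Q‖ with hr
  have hr0 : 0 ≤ r := norm_nonneg _
  have h1r : 0 < 1 - r := by linarith
  have hgg : g Q n m = ∏ i ∈ Finset.range m, (1 - Q^(n+1+i)) / (1 - Q^(i+1)) := by
    rw [g_ratio hQ, P, ← Finset.prod_div_distrib]
  rw [hgg, norm_prod]
  have step : ∀ i ∈ Finset.range m,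
      ‖(1 - Q^(n+1+i)) / (1 - Q^(i+1))‖ ≤ Real.exp (2 * r^(i+1) / (1-r)) := by
    intro i _
    have ht0 : 0 ≤ r^(i+1) := pow_nonneg hr0 _
    have htr : r^(i+1) ≤ r := by
      calc r^(i+1) ≤ r^1 := pow_le_pow_of_le_one hr0 hQ.le (by omega)
      _ = r := pow_one r
    have hden : 1 - r^(i+1) ≤ ‖(1 : ℂ) - Q^(i+1)‖ := by
      have := norm_sub_norm_le (1 : ℂ) (Q^(i+1))
      simpa [norm_pow] using this
    have hnum : ‖(1 : ℂ) - Q^(n+1+i)‖ ≤ 1 + r^(i+1) := by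
      have h := norm_sub_le (1 : ℂ) (Q^(n+1+i))
      have : ‖Q^(n+1+i)‖ ≤ r^(i+1) := by
        rw [norm_pow]
        exact pow_le_pow_of_le_one hr0 hQ.le (by omega)
      simp only [norm_one] at h
      linarith
    have hdpos : 0 < 1 - r^(i+1) := by linarith
    rw [norm_div]
    calc ‖(1 : ℂ) - Q^(n+1+i)‖ / ‖(1 : ℂ) - Q^(i+1)‖
        ≤ (1 + r^(i+1)) / (1 - r^(i+1)) := by
          apply div_le_div₀ (by linarith) hnum hdpos hden
      _ = 1 + 2 * r^(i+1) / (1 - r^(i+1)) := by field_simp; ring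
      _ ≤ 1 + 2 * r^(i+1) / (1 - r) := by gcongr <;> linarith
      _ ≤ Real.exp (2 * r^(i+1) / (1-r)) := by
          have := Real.add_one_le_exp (2 * r^(i+1) / (1-r))
          linarith
  calc (∏ i ∈ Finset.range m, ‖(1 - Q^(n+1+i)) / (1 - Q^(i+1))‖)
      ≤ ∏ i ∈ Finset.range m, Real.exp (2 * r^(i+1) / (1-r)) :=
        Finset.prod_le_prod (fun i _ => norm_nonneg _) step
    _ = Real.exp (∑ i ∈ Finset.range m, 2 * r^(i+1) / (1-r)) :=
        (Real.exp_sum _ _).symm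
    _ ≤ Real.exp (2 * r / (1 - r)^2) := by
        apply Real.exp_le_exp.2
        have hsum : ∑ i ∈ Finset.range m, r^(i+1) ≤ r / (1 - r) := by
          have : ∑ i ∈ Finset.range m, r^(i+1) = r * ∑ i ∈ Finset.range m, r^i := by
            rw [Finset.mul_sum]
            apply Finset.sum_congr rfl
            intro i _; ring
          rw [this]
          have hgeom : ∑ i ∈ Finset.range m, r^i ≤ 1 / (1 - r) := by
            have hmul := geom_sum_mul r m
            rw [le_div_iff₀ h1r]
            have : 0 ≤ r^m := pow_nonneg hr0 _
            nlinarith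
          rw [div_eq_mul_one_div r (1-r)]
          exact mul_le_mul_of_nonneg_left hgeom hr0
        have : ∑ i ∈ Finset.range m, 2 * r^(i+1) / (1-r)
            = (2 / (1-r)) * ∑ i ∈ Finset.range m, r^(i+1) := by
          rw [Finset.mul_sum]
          apply Finset.sum_congr rfl
          intro i _; ring
        rw [this]
        calc (2 / (1-r)) * ∑ i ∈ Finset.range m, r^(i+1)
            ≤ (2 / (1-r)) * (r / (1-r)) := by
              apply mul_le_mul_of_nonneg_left hsum
              positivity
          _ = 2 * r / (1 - r)^2 := by rw [div_mul_div_comm, sq]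

noncomputable def C (Q : ℂ) : ℝ := Real.exp (2 * ‖Q‖ / (1 - ‖Q‖)^2)

lemma summable_ag (hQ : ‖Q‖ < 1) {a : ℂ} (ha : ‖a‖ < 1) (n : ℕ) :
    Summable (fun m : ℕ => a ^ m * g Q n m) := by
  apply Summable.of_norm_bounded (g := fun m => C Q * ‖a‖^m)
  · exact (summable_geometric_of_lt_one (norm_nonneg a) ha).mul_left _
  · intro m
    rw [norm_mul, norm_pow, mul_comm (C Q)]
    exact mul_le_mul_of_nonneg_left (g_norm_le hQ n m) (pow_nonneg (norm_nonneg a) m)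

lemma key (hQ : ‖Q‖ < 1) {a : ℂ} (ha : ‖a‖ < 1)
    (hden : ∀ k : ℕ, (1 : ℂ) - a * Q ^ k ≠ 0) (n : ℕ) :
    (∏ k ∈ Finset.range (n+1), (1 - a * Q ^ k)) * (∑' m : ℕ, a ^ m * g Q n m) = 1 := by
  induction n with
  | zero =>
    have h0 : (fun m : ℕ => a ^ m * g Q 0 m) = fun m : ℕ => a ^ m := by
      funext m; rw [g_zero_left hQ, mul_one]
    rw [Finset.prod_range_one, h0, tsum_geometric_of_norm_lt_one ha]
    rw [pow_zero, mul_one]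
    exact mul_inv_cancel₀ (by simpa using hden 0)
  | succ n ih =>
    have hf : Summable (fun m : ℕ => a ^ m * g Q (n+1) m) := summable_ag hQ ha (n+1)
    have hg' : Summable (fun m : ℕ => a ^ m * g Q n m) := summable_ag hQ ha n
    have hshift : Summable (fun m : ℕ => a ^ (m+1) * g Q (n+1) (m+1)) :=
      (summable_nat_add_iff (f := fun m : ℕ => a ^ m * g Q (n+1) m) 1).2 hf
    have hc : Summable (fun m : ℕ => (a * Q^(n+1)) * (a ^ m * g Q (n+1) m)) :=
      hf.mul_left _
    have hstep : (1 - a * Q^(n+1)) * (∑' m : ℕ, a ^ m * g Q (n+1) m)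
        = ∑' m : ℕ, a ^ m * g Q n m := by
      calc (1 - a * Q^(n+1)) * (∑' m : ℕ, a ^ m * g Q (n+1) m)
          = (∑' m : ℕ, a ^ m * g Q (n+1) m)
            - ∑' m : ℕ, (a * Q^(n+1)) * (a ^ m * g Q (n+1) m) := by
            rw [tsum_mul_left]; ring
        _ = (a ^ 0 * g Q (n+1) 0 + ∑' m : ℕ, a ^ (m+1) * g Q (n+1) (m+1))
            - ∑' m : ℕ, (a * Q^(n+1)) * (a ^ m * g Q (n+1) m) := by
            rw [Summable.tsum_eq_zero_add hf]
        _ = a ^ 0 * g Q (n+1) 0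
            + ((∑' m : ℕ, a ^ (m+1) * g Q (n+1) (m+1))
              - ∑' m : ℕ, (a * Q^(n+1)) * (a ^ m * g Q (n+1) m)) := by ring
        _ = a ^ 0 * g Q (n+1) 0
            + ∑' m : ℕ, (a ^ (m+1) * g Q (n+1) (m+1)
              - (a * Q^(n+1)) * (a ^ m * g Q (n+1) m)) := by
            rw [Summable.tsum_sub hshift hc]
        _ = a ^ 0 * g Q n 0 + ∑' m : ℕ, a ^ (m+1) * g Q n (m+1) := by
            rw [g_zero_right hQ, g_zero_right hQ]
            congr 1
            apply tsum_congr
            intro m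
            rw [g_pascal hQ n m]; ring
        _ = ∑' m : ℕ, a ^ m * g Q n m := (Summable.tsum_eq_zero_add hg').symm
    rw [Finset.prod_range_succ, mul_assoc, hstep]
    exact ih

end OmegaSym

open OmegaSym in
theorem omega_symmetric' (q y z : ℂ) (hq : ‖q‖ < 1) (hy : ‖y‖ < 1) (hz : ‖z‖ < 1)
    (hdy : ∀ k : ℕ, 1 - y * q ^ (2 * k + 1) ≠ 0)
    (hdz : ∀ k : ℕ, 1 - z * q ^ (2 * k + 1) ≠ 0) :
    ∑' n : ℕ, y ^ n * q ^ n / qPoch (z * q) (q ^ 2) (n + 1)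
      = ∑' n : ℕ, z ^ n * q ^ n / qPoch (y * q) (q ^ 2) (n + 1) := by
  have hq0 := norm_nonneg q
  have hy0 := norm_nonneg y
  have hz0 := norm_nonneg z
  set Q : ℂ := q^2 with hQdef
  set u : ℂ := y*q with hudef
  set v : ℂ := z*q with hvdef
  have hQ : ‖Q‖ < 1 := by
    rw [hQdef, norm_pow]
    nlinarith
  have hu : ‖u‖ < 1 := by rw [hudef, norm_mul]; nlinarith
  have hv : ‖v‖ < 1 := by rw [hvdef, norm_mul]; nlinarith
  have hdenu : ∀ k : ℕ, (1:ℂ) - u * Q^k ≠ 0 := by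
    intro k
    have e : u * Q^k = y * q^(2*k+1) := by rw [hudef, hQdef]; ring
    rw [e]; exact hdy k
  have hdenv : ∀ k : ℕ, (1:ℂ) - v * Q^k ≠ 0 := by
    intro k
    have e : v * Q^k = z * q^(2*k+1) := by rw [hvdef, hQdef]; ring
    rw [e]; exact hdz k
  set F : ℕ × ℕ → ℂ := fun p => u ^ p.1 * v ^ p.2 * g Q p.1 p.2 with hFdef
  have hFs : Summable F := by
    apply Summable.of_norm_bounded (g := fun p : ℕ × ℕ => C Q * (‖u‖^p.1 * ‖v‖^p.2))
    · apply Summable.mul_left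
      exact (summable_geometric_of_lt_one (norm_nonneg u) hu).mul_of_nonneg
        (summable_geometric_of_lt_one (norm_nonneg v) hv)
        (fun n => pow_nonneg (norm_nonneg u) n) (fun n => pow_nonneg (norm_nonneg v) n)
    · intro p
      rw [hFdef]
      simp only [norm_mul, norm_pow]
      calc ‖u‖^p.1 * ‖v‖^p.2 * ‖g Q p.1 p.2‖
          ≤ ‖u‖^p.1 * ‖v‖^p.2 * C Q := by
            apply mul_le_mul_of_nonneg_left (g_norm_le hQ p.1 p.2)
            positivity
        _ = C Q * (‖u‖^p.1 * ‖v‖^p.2) := by ring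
  have hterm : ∀ (w s : ℂ) (hs : ‖s * q‖ < 1)
      (hden : ∀ k : ℕ, (1:ℂ) - (s*q) * Q^k ≠ 0) (n : ℕ),
      w ^ n * q ^ n / qPoch (s * q) (q ^ 2) (n+1)
        = ∑' m : ℕ, (w*q) ^ n * ((s*q) ^ m * g Q n m) := by
    intro w s hs hden n
    have hk := key hQ hs hden n
    have hD : qPoch (s*q) (q^2) (n+1) = ∏ k ∈ Finset.range (n+1), (1 - (s*q) * Q^k) := rfl
    have hinv : (∏ k ∈ Finset.range (n+1), (1 - (s*q) * Q^k))⁻¹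
        = ∑' m : ℕ, (s*q) ^ m * g Q n m := inv_eq_of_mul_eq_one_right hk
    rw [hD, div_eq_mul_inv, hinv, ← tsum_mul_left]
    apply tsum_congr
    intro m
    ring
  have hL : ∑' n : ℕ, y ^ n * q ^ n / qPoch (z * q) (q ^ 2) (n + 1) = ∑' p : ℕ × ℕ, F p := by
    rw [Summable.tsum_prod hFs]
    apply tsum_congr
    intro n
    rw [hterm y z hv hdenv n]
    apply tsum_congr
    intro m
    simp only [hFdef]
    rw [hudef, hvdef]
    ring
  have hR : ∑' n : ℕ, z ^ n * q ^ n / qPoch (y * q) (q ^ 2) (n + 1)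
      = ∑' p : ℕ × ℕ, F p.swap := by
    rw [Summable.tsum_prod (f := fun p : ℕ × ℕ => F p.swap)
      (hFs.comp_injective Prod.swap_injective)]
    apply tsum_congr
    intro n
    rw [hterm z y hu hdenu n]
    apply tsum_congr
    intro m
    simp only [hFdef, Prod.swap]
    rw [hudef, hvdef, g_symm n m]
    ring
  rw [hL, hR]
  have := (Equiv.prodComm ℕ ℕ).tsum_eq F
  simp only [Equiv.prodComm_apply] at this
  exact this.symm


theorem omega_symmetric (q y z : ℂ) (hq : ‖q‖ < 1) (hy : ‖y‖ < 1) (hz : ‖z‖ < 1)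
    (hdy : ∀ k : ℕ, 1 - y * q ^ (2 * k + 1) ≠ 0)
    (hdz : ∀ k : ℕ, 1 - z * q ^ (2 * k + 1) ≠ 0) :
    ∑' n : ℕ, y ^ n * q ^ n / qPoch (z * q) (q ^ 2) (n + 1)
      = ∑' n : ℕ, z ^ n * q ^ n / qPoch (y * q) (q ^ 2) (n + 1) := by
  exact omega_symmetric' q y z hq hy hz hdy hdz
end

section
/- For complex q, z with |q| < 1 and |zq| < 1, Σ_{n≥0} zⁿ q^{n²+n} / (q; q²)_{n+1} = Σ_{n≥0} (−zq; q²)_n qⁿ. -/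
open scoped BigOperators

/-- term of the left series -/
noncomputable def fTerm (q z : ℂ) (n : ℕ) : ℂ := z ^ n * q ^ (n ^ 2 + n) / qPoch q (q ^ 2) (n + 1)
/-- term of the right series -/
noncomputable def gTerm (q z : ℂ) (n : ℕ) : ℂ := qPoch (-(z * q)) (q ^ 2) n * q ^ n

lemma factor_ne (q : ℂ) (hq : ‖q‖ < 1) (k : ℕ) : (1 : ℂ) - q * (q ^ 2) ^ k ≠ 0 := by
  intro h
  have h2 : q * (q ^ 2) ^ k = 1 := by linear_combination -h
  have hn : ‖q * (q ^ 2) ^ k‖ < 1 := by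
    rw [norm_mul, norm_pow, norm_pow]
    calc ‖q‖ * (‖q‖ ^ 2) ^ k ≤ ‖q‖ * 1 := by
          apply mul_le_mul_of_nonneg_left _ (norm_nonneg q)
          exact pow_le_one₀ (sq_nonneg _) (by nlinarith [norm_nonneg q])
      _ < 1 := by linarith
  rw [h2] at hn; simp at hn

lemma qPoch_ne (q : ℂ) (hq : ‖q‖ < 1) (n : ℕ) : qPoch q (q ^ 2) n ≠ 0 :=
  Finset.prod_ne_zero_iff.mpr fun k _ => factor_ne q hq k

lemma qPoch_succ (a q : ℂ) (n : ℕ) : qPoch a q (n + 1) = qPoch a q n * (1 - a * q ^ n) :=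
  Finset.prod_range_succ _ n


/-- bound sequence for fTerm -/
noncomputable def fB (q z : ℂ) (n : ℕ) : ℝ := ‖z‖ ^ n * ‖q‖ ^ (n ^ 2 + n) / ‖qPoch q (q ^ 2) (n + 1)‖

lemma fB_nonneg (q z : ℂ) (n : ℕ) : 0 ≤ fB q z n := by
  apply div_nonneg (mul_nonneg (pow_nonneg (norm_nonneg _) _) (pow_nonneg (norm_nonneg _) _)) (norm_nonneg _)

lemma fB_succ (q z : ℂ) (hq : ‖q‖ < 1) (n : ℕ) :
    fB q z (n + 1) = (‖z‖ * ‖q‖ ^ (2 * n + 2) / ‖1 - q * (q ^ 2) ^ (n + 1)‖) * fB q z n := by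
  have h1 : ‖qPoch q (q ^ 2) (n + 1 + 1)‖ = ‖qPoch q (q ^ 2) (n + 1)‖ * ‖1 - q * (q ^ 2) ^ (n + 1)‖ := by
    rw [qPoch_succ, norm_mul]
  have h2 : (n + 1) ^ 2 + (n + 1) = (n ^ 2 + n) + (2 * n + 2) := by ring
  have hd1 : ‖qPoch q (q ^ 2) (n + 1)‖ ≠ 0 := norm_ne_zero_iff.mpr (qPoch_ne q hq _)
  have hd2 : ‖(1:ℂ) - q * (q ^ 2) ^ (n + 1)‖ ≠ 0 := norm_ne_zero_iff.mpr (factor_ne q hq _)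
  rw [fB, fB, h1, h2, pow_add, pow_succ]
  field_simp
  ring

lemma summable_fB (q z : ℂ) (hq : ‖q‖ < 1) : Summable (fB q z) := by
  have hq3 : ‖q‖ ^ 3 < 1 := by
    calc ‖q‖ ^ 3 ≤ ‖q‖ := pow_le_of_le_one (norm_nonneg _) hq.le (by norm_num)
    _ < 1 := hq
  -- the ratio tends to 0
  have hrat : Filter.Tendsto (fun n : ℕ => ‖z‖ * ‖q‖ ^ (2 * n + 2)) Filter.atTop (nhds 0) := by
    have : Filter.Tendsto (fun n : ℕ => (‖q‖ ^ 2) ^ n) Filter.atTop (nhds 0) :=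
      tendsto_pow_atTop_nhds_zero_of_lt_one (sq_nonneg _) (by nlinarith [norm_nonneg q])
    have := this.const_mul (‖z‖ * ‖q‖ ^ 2)
    simp only [mul_zero] at this
    convert this using 2 with n
    rw [pow_add, ← pow_mul]
    ring
  have hev : ∀ᶠ n : ℕ in Filter.atTop, ‖z‖ * ‖q‖ ^ (2 * n + 2) < (1 - ‖q‖ ^ 3) / 2 := by
    have hpos : (0:ℝ) < (1 - ‖q‖ ^ 3) / 2 := by linarith
    exact hrat.eventually_lt_const hpos
  apply summable_of_ratio_norm_eventually_le (r := (1:ℝ)/2) (by norm_num)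
  filter_upwards [hev] with n hn
  rw [Real.norm_eq_abs, Real.norm_eq_abs, abs_of_nonneg (fB_nonneg q z _), abs_of_nonneg (fB_nonneg q z _)]
  rw [fB_succ q z hq n]
  have hden : 1 - ‖q‖ ^ 3 ≤ ‖(1:ℂ) - q * (q ^ 2) ^ (n + 1)‖ := by
    have := norm_sub_norm_le (1 : ℂ) (q * (q ^ 2) ^ (n + 1))
    have h1 : ‖q * (q ^ 2) ^ (n + 1)‖ ≤ ‖q‖ ^ 3 := by
      rw [norm_mul, norm_pow, norm_pow]
      calc ‖q‖ * (‖q‖ ^ 2) ^ (n + 1) ≤ ‖q‖ * ‖q‖ ^ 2 := by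
            apply mul_le_mul_of_nonneg_left _ (norm_nonneg q)
            calc (‖q‖ ^ 2) ^ (n + 1) ≤ (‖q‖ ^ 2) ^ 1 :=
                  pow_le_pow_of_le_one (sq_nonneg _) (by nlinarith [norm_nonneg q]) (by omega)
              _ = ‖q‖ ^ 2 := pow_one _
        _ = ‖q‖ ^ 3 := by ring
    simp only [norm_one] at this
    linarith
  have hq3pos : (0:ℝ) < 1 - ‖q‖ ^ 3 := by linarith [pow_le_of_le_one (norm_nonneg q) hq.le (show 3 ≠ 0 by norm_num), hq]
  have hfrac : ‖z‖ * ‖q‖ ^ (2 * n + 2) / ‖(1:ℂ) - q * (q ^ 2) ^ (n + 1)‖ ≤ 1 / 2 := by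
    rw [div_le_div_iff₀ (lt_of_lt_of_le hq3pos hden) (by norm_num)]
    nlinarith [mul_nonneg (norm_nonneg z) (pow_nonneg (norm_nonneg q) (2*n+2))]
  calc ‖z‖ * ‖q‖ ^ (2 * n + 2) / ‖(1:ℂ) - q * (q ^ 2) ^ (n + 1)‖ * fB q z n
      ≤ 1 / 2 * fB q z n := mul_le_mul_of_nonneg_right hfrac (fB_nonneg q z n)

/-- uniform bound on the q-Pochhammer with plus signs -/
lemma qPoch_neg_norm_le (q z w : ℂ) (hq : ‖q‖ < 1) (hw : ‖w‖ ≤ ‖z‖) (n : ℕ) :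
    ‖qPoch (-(w * q)) (q ^ 2) n‖ ≤ Real.exp (‖z * q‖ * (1 - ‖q‖ ^ 2)⁻¹) := by
  have hq2 : ‖q‖ ^ 2 < 1 := by nlinarith [norm_nonneg q]
  have hsum : Summable (fun k : ℕ => ‖z * q‖ * (‖q‖ ^ 2) ^ k) :=
    (summable_geometric_of_lt_one (sq_nonneg _) hq2).mul_left _
  calc ‖qPoch (-(w * q)) (q ^ 2) n‖
      ≤ ∏ k ∈ Finset.range n, (1 + ‖z * q‖ * (‖q‖ ^ 2) ^ k) := by
        rw [qPoch]
        rw [norm_prod]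
        apply Finset.prod_le_prod (fun k _ => norm_nonneg _)
        intro k _
        refine (norm_sub_le _ _).trans ?_
        rw [norm_one, norm_mul, norm_neg, norm_mul, norm_pow, norm_pow, norm_mul]
        have : ‖w‖ * ‖q‖ ≤ ‖z‖ * ‖q‖ := mul_le_mul_of_nonneg_right hw (norm_nonneg q)
        nlinarith [pow_nonneg (sq_nonneg ‖q‖) k, norm_nonneg q]
    _ ≤ ∏ k ∈ Finset.range n, Real.exp (‖z * q‖ * (‖q‖ ^ 2) ^ k) := by
        apply Finset.prod_le_prod
        · intro k _
          positivity
        · intro k _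
          linarith [Real.add_one_le_exp (‖z * q‖ * (‖q‖ ^ 2) ^ k)]
    _ = Real.exp (∑ k ∈ Finset.range n, ‖z * q‖ * (‖q‖ ^ 2) ^ k) := (Real.exp_sum _ _).symm
    _ ≤ Real.exp (‖z * q‖ * (1 - ‖q‖ ^ 2)⁻¹) := by
        apply Real.exp_le_exp.mpr
        calc ∑ k ∈ Finset.range n, ‖z * q‖ * (‖q‖ ^ 2) ^ k
            ≤ ∑' k : ℕ, ‖z * q‖ * (‖q‖ ^ 2) ^ k :=
              Summable.sum_le_tsum _ (fun k _ => by positivity) hsum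
          _ = ‖z * q‖ * (1 - ‖q‖ ^ 2)⁻¹ := by
              rw [tsum_mul_left, tsum_geometric_of_lt_one (sq_nonneg _) hq2]

lemma gTerm_norm_le (q z w : ℂ) (hq : ‖q‖ < 1) (hw : ‖w‖ ≤ ‖z‖) (n : ℕ) :
    ‖gTerm q w n‖ ≤ Real.exp (‖z * q‖ * (1 - ‖q‖ ^ 2)⁻¹) * ‖q‖ ^ n := by
  rw [gTerm, norm_mul, norm_pow]
  exact mul_le_mul_of_nonneg_right (qPoch_neg_norm_le q z w hq hw n) (pow_nonneg (norm_nonneg q) n)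

lemma summable_gTerm (q w : ℂ) (hq : ‖q‖ < 1) : Summable (gTerm q w) := by
  apply Summable.of_norm_bounded
    (((summable_geometric_of_lt_one (norm_nonneg q) hq).mul_left
      (Real.exp (‖w * q‖ * (1 - ‖q‖ ^ 2)⁻¹))))
  exact fun n => gTerm_norm_le q w w hq le_rfl n


lemma norm_fTerm_le (q z w : ℂ) (hw : ‖w‖ ≤ ‖z‖) (n : ℕ) : ‖fTerm q w n‖ ≤ fB q z n := by
  rw [fTerm, fB, norm_div, norm_mul, norm_pow, norm_pow]
  gcongr

lemma summable_norm_fTerm (q w : ℂ) (hq : ‖q‖ < 1) : Summable (fun n => ‖fTerm q w n‖) := by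
  apply Summable.of_nonneg_of_le (fun n => norm_nonneg _) (norm_fTerm_le q w w le_rfl)
    (summable_fB q w hq)

lemma summable_fTerm (q w : ℂ) (hq : ‖q‖ < 1) : Summable (fTerm q w) :=
  (summable_norm_fTerm q w hq).of_norm

/-- functional equation for G -/
lemma G_eq (q w : ℂ) (hq : ‖q‖ < 1) :
    ∑' n, gTerm q w n = 1 + (q + w * q ^ 2) * ∑' n, gTerm q (w * q ^ 2) n := by
  rw [Summable.tsum_eq_zero_add (summable_gTerm q w hq)]
  have h0 : gTerm q w 0 = 1 := by simp [gTerm, qPoch]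
  have hsucc : ∀ n, gTerm q w (n + 1) = (q + w * q ^ 2) * gTerm q (w * q ^ 2) n := by
    intro n
    rw [gTerm, gTerm, qPoch, qPoch, Finset.prod_range_succ']
    have hfac : ∀ k, (1 : ℂ) - -(w * q) * (q ^ 2) ^ (k + 1) = 1 - -(w * q ^ 2 * q) * (q ^ 2) ^ k := by
      intro k; rw [pow_succ']; ring
    rw [Finset.prod_congr rfl (fun k _ => hfac k)]
    rw [pow_succ]
    ring
  rw [h0, tsum_congr hsucc, tsum_mul_left]

/-- functional equation for F -/
lemma F_eq (q w : ℂ) (hq : ‖q‖ < 1) :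
    ∑' n, fTerm q w n = 1 + (q + w * q ^ 2) * ∑' n, fTerm q (w * q ^ 2) n := by
  have key1 : ∀ n, q * fTerm q (w * q ^ 2) n = q * (q ^ 2) ^ n * fTerm q w n := by
    intro n
    rw [fTerm, fTerm, mul_pow]
    ring
  have key2 : ∀ n, (w * q ^ 2) * fTerm q (w * q ^ 2) n
      = (1 - q * (q ^ 2) ^ (n + 1)) * fTerm q w (n + 1) := by
    intro n
    have hexp : q ^ ((n + 1) ^ 2 + (n + 1)) = q ^ (n ^ 2 + n) * (q ^ 2) ^ (n + 1) := by
      rw [← pow_mul, ← pow_add]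
      congr 1
      ring
    have hP2 : qPoch q (q ^ 2) (n + 1 + 1) = qPoch q (q ^ 2) (n + 1) * (1 - q * (q ^ 2) ^ (n + 1)) :=
      qPoch_succ _ _ _
    rw [fTerm, fTerm, hP2, hexp, mul_pow]
    have hne1 : qPoch q (q ^ 2) (n + 1) ≠ 0 := qPoch_ne q hq _
    have hne2 : (1 : ℂ) - q * (q ^ 2) ^ (n + 1) ≠ 0 := factor_ne q hq _
    field_simp
    ring
  -- summabilities
  have hsf := summable_fTerm q w hq
  have hsn := summable_norm_fTerm q w hq
  have hs1 : Summable (fun n => q * (q ^ 2) ^ n * fTerm q w n) := by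
    apply Summable.of_norm_bounded (g := fun n => ‖fTerm q w n‖) hsn
    intro n
    rw [norm_mul]
    have hb : ‖q * (q ^ 2) ^ n‖ ≤ 1 := by
      rw [norm_mul, norm_pow, norm_pow]
      nlinarith [pow_le_one₀ (sq_nonneg ‖q‖) (by nlinarith [norm_nonneg q] : ‖q‖ ^ 2 ≤ 1) (n := n), norm_nonneg q, pow_nonneg (sq_nonneg ‖q‖) n]
    calc ‖q * (q ^ 2) ^ n‖ * ‖fTerm q w n‖ ≤ 1 * ‖fTerm q w n‖ :=
          mul_le_mul_of_nonneg_right hb (norm_nonneg _)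
      _ = ‖fTerm q w n‖ := one_mul _
  have hs2 : Summable (fun n => (1 - q * (q ^ 2) ^ (n + 1)) * fTerm q w (n + 1)) := by
    apply Summable.of_norm_bounded (g := fun n => 2 * ‖fTerm q w (n + 1)‖)
      (by exact ((summable_nat_add_iff 1).mpr hsn).mul_left 2)
    intro n
    rw [norm_mul]
    apply mul_le_mul_of_nonneg_right ?_ (norm_nonneg _)
    refine (norm_sub_le _ _).trans ?_
    rw [norm_one, norm_mul, norm_pow, norm_pow]
    nlinarith [norm_nonneg q, pow_nonneg (sq_nonneg ‖q‖) n, pow_le_one₀ (sq_nonneg ‖q‖) (by nlinarith [norm_nonneg q] : ‖q‖^2 ≤ 1) (n := n+1), hq]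
  have hs3 : Summable (fun n => (1 - q * (q ^ 2) ^ n) * fTerm q w n) := by
    apply Summable.of_norm_bounded (g := fun n => 2 * ‖fTerm q w n‖) (hsn.mul_left 2)
    intro n
    rw [norm_mul]
    apply mul_le_mul_of_nonneg_right ?_ (norm_nonneg _)
    refine (norm_sub_le _ _).trans ?_
    rw [norm_one, norm_mul, norm_pow, norm_pow]
    nlinarith [norm_nonneg q, pow_nonneg (sq_nonneg ‖q‖) n, pow_le_one₀ (sq_nonneg ‖q‖) (by nlinarith [norm_nonneg q] : ‖q‖^2 ≤ 1) (n := n), hq]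
  -- main computation
  have expand : (q + w * q ^ 2) * ∑' n, fTerm q (w * q ^ 2) n
      = (∑' n, q * (q ^ 2) ^ n * fTerm q w n)
        + ∑' n, (1 - q * (q ^ 2) ^ (n + 1)) * fTerm q w (n + 1) := by
    rw [← Summable.tsum_add hs1 hs2, ← tsum_mul_left]
    apply tsum_congr
    intro n
    rw [← key1 n, ← key2 n]
    ring
  have shift : ∑' n, (1 - q * (q ^ 2) ^ n) * fTerm q w n
      = (1 - q * (q ^ 2) ^ 0) * fTerm q w 0
        + ∑' n, (1 - q * (q ^ 2) ^ (n + 1)) * fTerm q w (n + 1) :=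
    Summable.tsum_eq_zero_add hs3
  have h00 : (1 - q * (q ^ 2) ^ 0) * fTerm q w 0 = 1 := by
    have h1q : (1 : ℂ) - q ≠ 0 := by simpa using factor_ne q hq 0
    rw [fTerm, qPoch]
    simp only [pow_zero, mul_one, Finset.prod_range_succ, Finset.range_zero,
      Finset.prod_empty, one_mul, pow_zero]
    norm_num
    field_simp
  calc ∑' n, fTerm q w n
      = ∑' n, (q * (q ^ 2) ^ n * fTerm q w n + (1 - q * (q ^ 2) ^ n) * fTerm q w n) :=
        tsum_congr (fun n => by ring)
    _ = (∑' n, q * (q ^ 2) ^ n * fTerm q w n) + ∑' n, (1 - q * (q ^ 2) ^ n) * fTerm q w n :=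
        Summable.tsum_add hs1 hs3
    _ = 1 + ((∑' n, q * (q ^ 2) ^ n * fTerm q w n)
          + ∑' n, (1 - q * (q ^ 2) ^ (n + 1)) * fTerm q w (n + 1)) := by
        rw [shift, h00]; ring
    _ = 1 + (q + w * q ^ 2) * ∑' n, fTerm q (w * q ^ 2) n := by rw [expand]

lemma FG_eq (q z : ℂ) (hq : ‖q‖ < 1) :
    (∑' n : ℕ, fTerm q z n) = ∑' n : ℕ, gTerm q z n := by
  set E : ℝ := Real.exp (‖z * q‖ * (1 - ‖q‖ ^ 2)⁻¹) with hE
  have hEpos : 0 < E := Real.exp_pos _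
  set Bf : ℝ := ∑' n, fB q z n with hBf
  have hBfnn : 0 ≤ Bf := tsum_nonneg (fB_nonneg q z)
  set Bg : ℝ := E * (1 - ‖q‖)⁻¹ with hBg
  have hBgnn : 0 ≤ Bg := mul_nonneg hEpos.le (inv_nonneg.mpr (by linarith))
  set F : ℂ → ℂ := fun w => ∑' n, fTerm q w n with hF
  set G : ℂ → ℂ := fun w => ∑' n, gTerm q w n with hG
  -- step
  have hstep : ∀ w : ℂ, F w - G w = (q + w * q ^ 2) * (F (w * q ^ 2) - G (w * q ^ 2)) := by
    intro w
    rw [hF, hG]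
    simp only
    rw [F_eq q w hq, G_eq q w hq]
    ring
  -- iteration
  have hiter : ∀ N : ℕ, F z - G z
      = (q ^ N * qPoch (-(z * q)) (q ^ 2) N) * (F (z * (q ^ 2) ^ N) - G (z * (q ^ 2) ^ N)) := by
    intro N
    induction N with
    | zero => simp [qPoch]
    | succ N ih =>
        rw [ih, hstep (z * (q ^ 2) ^ N)]
        have h1 : z * (q ^ 2) ^ N * q ^ 2 = z * (q ^ 2) ^ (N + 1) := by rw [pow_succ]; ring
        have h2 : qPoch (-(z * q)) (q ^ 2) (N + 1)
            = qPoch (-(z * q)) (q ^ 2) N * (1 - -(z * q) * (q ^ 2) ^ N) :=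
          Finset.prod_range_succ _ _
        rw [h1, h2, pow_succ]
        ring
  -- bounds on F and G on the disk
  have hFb : ∀ w : ℂ, ‖w‖ ≤ ‖z‖ → ‖F w‖ ≤ Bf := by
    intro w hw
    refine (norm_tsum_le_tsum_norm (summable_norm_fTerm q w hq)).trans ?_
    exact Summable.tsum_le_tsum (norm_fTerm_le q z w hw) (summable_norm_fTerm q w hq) (summable_fB q z hq)
  have hGb : ∀ w : ℂ, ‖w‖ ≤ ‖z‖ → ‖G w‖ ≤ Bg := by
    intro w hw
    have hsb : Summable (fun n : ℕ => E * ‖q‖ ^ n) :=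
      (summable_geometric_of_lt_one (norm_nonneg q) hq).mul_left E
    have hsn : Summable (fun n => ‖gTerm q w n‖) :=
      Summable.of_nonneg_of_le (fun n => norm_nonneg _) (gTerm_norm_le q z w hq hw) hsb
    refine (norm_tsum_le_tsum_norm hsn).trans ?_
    refine (Summable.tsum_le_tsum (gTerm_norm_le q z w hq hw) hsn hsb).trans ?_
    rw [tsum_mul_left, tsum_geometric_of_lt_one (norm_nonneg q) hq]
  -- norm of w_N
  have hwN : ∀ N : ℕ, ‖z * (q ^ 2) ^ N‖ ≤ ‖z‖ := by
    intro N
    rw [norm_mul, norm_pow, norm_pow]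
    calc ‖z‖ * (‖q‖ ^ 2) ^ N ≤ ‖z‖ * 1 := by
          apply mul_le_mul_of_nonneg_left _ (norm_nonneg z)
          exact pow_le_one₀ (sq_nonneg _) (by nlinarith [norm_nonneg q])
      _ = ‖z‖ := mul_one _
  -- final bound
  have hbound : ∀ N : ℕ, ‖F z - G z‖ ≤ ‖q‖ ^ N * (E * (Bf + Bg)) := by
    intro N
    rw [hiter N, norm_mul, norm_mul, norm_pow]
    have h1 : ‖qPoch (-(z * q)) (q ^ 2) N‖ ≤ E := qPoch_neg_norm_le q z z hq le_rfl N
    have h2 : ‖F (z * (q ^ 2) ^ N) - G (z * (q ^ 2) ^ N)‖ ≤ Bf + Bg :=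
      (norm_sub_le _ _).trans (add_le_add (hFb _ (hwN N)) (hGb _ (hwN N)))
    calc ‖q‖ ^ N * ‖qPoch (-(z * q)) (q ^ 2) N‖ * ‖F (z * (q ^ 2) ^ N) - G (z * (q ^ 2) ^ N)‖
        ≤ ‖q‖ ^ N * E * (Bf + Bg) := by
          apply mul_le_mul (mul_le_mul_of_nonneg_left h1 (pow_nonneg (norm_nonneg q) N)) h2
            (norm_nonneg _) (by positivity)
      _ = ‖q‖ ^ N * (E * (Bf + Bg)) := by ring
  -- limit
  have hlim : Filter.Tendsto (fun N : ℕ => ‖q‖ ^ N * (E * (Bf + Bg))) Filter.atTop (nhds 0) := by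
    have := (tendsto_pow_atTop_nhds_zero_of_lt_one (norm_nonneg q) hq).mul_const (E * (Bf + Bg))
    simpa using this
  have hle : ‖F z - G z‖ ≤ 0 :=
    ge_of_tendsto hlim (Filter.Eventually.of_forall hbound)
  have : F z - G z = 0 := by
    rw [← norm_eq_zero]
    exact le_antisymm hle (norm_nonneg _)
  exact sub_eq_zero.mp this


theorem nu_y_one (q z : ℂ) (hq : ‖q‖ < 1) (hzq : ‖z * q‖ < 1) :
    ∑' n : ℕ, z ^ n * q ^ (n ^ 2 + n) / qPoch q (q ^ 2) (n + 1)
      = ∑' n : ℕ, qPoch (-(z * q)) (q ^ 2) n * q ^ n := by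
  have h := FG_eq q z hq
  simpa only [fTerm, gTerm] using h
end

section
/- For complex q, z with |q| < 1 and |zq| < 1, Σ_{n≥0} zⁿ q^{n²+n} / (zq; q²)_{n+1} = Σ_{n≥0} (−q; q²)_n (zq)ⁿ. -/
open scoped BigOperators

open Finset Filter

/-- auxiliary: the RHS generating function at argument `z q^(2N)`. -/
noncomputable def nuG (q z : ℂ) (N : ℕ) : ℂ :=
  ∑' n : ℕ, qPoch (-q) (q ^ 2) n * (z * q ^ (2 * N + 1)) ^ n

/-- auxiliary: the prefactor after `N` unfoldings of the recursion. -/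
noncomputable def nuP (q z : ℂ) (N : ℕ) : ℂ :=
  z ^ N * q ^ (N ^ 2 + N) / qPoch (z * q) (q ^ 2) N

lemma normA (q : ℂ) (hq : ‖q‖ < 1) (n : ℕ) :
    ‖qPoch (-q) (q ^ 2) n‖ ≤ Real.exp ((1 - ‖q‖)⁻¹) := by
  have h0 : (0:ℝ) ≤ ‖q‖ := norm_nonneg q
  have key : ∀ k : ℕ, ‖1 - (-q) * (q ^ 2) ^ k‖ ≤ Real.exp (‖q‖ ^ k) := by
    intro k
    have e1 : (1 : ℂ) - (-q) * (q ^ 2) ^ k = 1 + q * (q ^ 2) ^ k := by ring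
    have h1 : ‖(1:ℂ) + q * (q ^ 2) ^ k‖ ≤ 1 + ‖q‖ ^ (2 * k + 1) := by
      have := norm_add_le (1:ℂ) (q * (q ^ 2) ^ k)
      have e2 : ‖q * (q ^ 2) ^ k‖ = ‖q‖ ^ (2 * k + 1) := by
        rw [show q * (q ^ 2) ^ k = q ^ (2 * k + 1) by ring, norm_pow]
      simpa only [e2, norm_one] using this
    have h2 : ‖q‖ ^ (2 * k + 1) ≤ ‖q‖ ^ k :=
      pow_le_pow_of_le_one h0 hq.le (by omega)
    have h3 := Real.add_one_le_exp (‖q‖ ^ k)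
    rw [e1]
    linarith
  have hprod : ‖qPoch (-q) (q ^ 2) n‖ ≤ ∏ k ∈ range n, Real.exp (‖q‖ ^ k) := by
    rw [qPoch, norm_prod]
    exact Finset.prod_le_prod (fun k _ => norm_nonneg _) (fun k _ => key k)
  have hsum : ∑ k ∈ range n, ‖q‖ ^ k ≤ (1 - ‖q‖)⁻¹ := by
    have hs := summable_geometric_of_lt_one h0 hq
    have := Summable.sum_le_tsum (range n) (fun i _ => pow_nonneg h0 i) hs
    rwa [tsum_geometric_of_lt_one h0 hq] at this
  calc ‖qPoch (-q) (q ^ 2) n‖ ≤ ∏ k ∈ range n, Real.exp (‖q‖ ^ k) := hprod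
    _ = Real.exp (∑ k ∈ range n, ‖q‖ ^ k) := (Real.exp_sum _ _).symm
    _ ≤ Real.exp ((1 - ‖q‖)⁻¹) := Real.exp_le_exp.2 hsum

lemma summable_mul_geom {c : ℕ → ℂ} {Cst : ℝ} (hc : ∀ n, ‖c n‖ ≤ Cst) {w : ℂ}
    (hw : ‖w‖ < 1) : Summable (fun n => c n * w ^ n) := by
  refine Summable.of_norm_bounded (g := fun n => Cst * ‖w‖ ^ n)
    (((summable_geometric_of_lt_one (norm_nonneg w) hw)).mul_left Cst) (fun n => ?_)
  rw [norm_mul, norm_pow]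
  exact mul_le_mul_of_nonneg_right (hc n) (pow_nonneg (norm_nonneg w) n)

lemma norm_w_le (q z : ℂ) (hq : ‖q‖ < 1) (N : ℕ) : ‖z * q ^ (2 * N + 1)‖ ≤ ‖z * q‖ := by
  rw [show z * q ^ (2 * N + 1) = z * q * q ^ (2 * N) by ring, norm_mul, norm_pow]
  exact mul_le_of_le_one_right (norm_nonneg _) (pow_le_one₀ (norm_nonneg q) hq.le)

lemma norm_w_lt (q z : ℂ) (hq : ‖q‖ < 1) (hzq : ‖z * q‖ < 1) (N : ℕ) :
    ‖z * q ^ (2 * N + 1)‖ < 1 := lt_of_le_of_lt (norm_w_le q z hq N) hzq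

lemma nuG_summable (q z : ℂ) (hq : ‖q‖ < 1) (hzq : ‖z * q‖ < 1) (N : ℕ) :
    Summable (fun n => qPoch (-q) (q ^ 2) n * (z * q ^ (2 * N + 1)) ^ n) :=
  summable_mul_geom (normA q hq) (norm_w_lt q z hq hzq N)

lemma nuG_norm_le (q z : ℂ) (hq : ‖q‖ < 1) (hzq : ‖z * q‖ < 1) (N : ℕ) :
    ‖nuG q z N‖ ≤ Real.exp ((1 - ‖q‖)⁻¹) * (1 - ‖z * q‖)⁻¹ := by
  set C := Real.exp ((1 - ‖q‖)⁻¹) with hC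
  have hr0 : (0:ℝ) ≤ ‖z * q‖ := norm_nonneg _
  have hgeo : Summable (fun n : ℕ => C * ‖z * q‖ ^ n) :=
    (summable_geometric_of_lt_one hr0 hzq).mul_left C
  have hb : ∀ n : ℕ, ‖qPoch (-q) (q ^ 2) n * (z * q ^ (2 * N + 1)) ^ n‖ ≤ C * ‖z * q‖ ^ n := by
    intro n
    rw [norm_mul, norm_pow]
    have h1 : ‖z * q ^ (2 * N + 1)‖ ^ n ≤ ‖z * q‖ ^ n :=
      pow_le_pow_left₀ (norm_nonneg _) (norm_w_le q z hq N) n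
    have h2 := normA q hq n
    have h3 : (0:ℝ) ≤ ‖z * q ^ (2 * N + 1)‖ ^ n := pow_nonneg (norm_nonneg _) n
    nlinarith [norm_nonneg (qPoch (-q) (q ^ 2) n)]
  have hsn : Summable (fun n => ‖qPoch (-q) (q ^ 2) n * (z * q ^ (2 * N + 1)) ^ n‖) :=
    Summable.of_nonneg_of_le (fun n => norm_nonneg _) hb hgeo
  calc ‖nuG q z N‖ ≤ ∑' n, ‖qPoch (-q) (q ^ 2) n * (z * q ^ (2 * N + 1)) ^ n‖ :=
        norm_tsum_le_tsum_norm hsn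
    _ ≤ ∑' n : ℕ, C * ‖z * q‖ ^ n := Summable.tsum_le_tsum hb hsn hgeo
    _ = C * (1 - ‖z * q‖)⁻¹ := by
        rw [tsum_mul_left, tsum_geometric_of_lt_one hr0 hzq]

lemma nuG_rec (q z : ℂ) (hq : ‖q‖ < 1) (hzq : ‖z * q‖ < 1) (N : ℕ) :
    (1 - z * q ^ (2 * N + 1)) * nuG q z N = 1 + z * q ^ (2 * N + 2) * nuG q z (N + 1) := by
  have hA : ∀ n : ℕ, qPoch (-q) (q ^ 2) (n + 1)
      = qPoch (-q) (q ^ 2) n * (1 + q ^ (2 * n + 1)) := by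
    intro n
    rw [qPoch, Finset.prod_range_succ, ← qPoch]
    congr 1
    ring
  have hs1 : Summable (fun n => qPoch (-q) (q ^ 2) n * (z * q ^ (2 * N + 1)) ^ n) :=
    nuG_summable q z hq hzq N
  have hs2 : Summable (fun n => qPoch (-q) (q ^ 2) n * (z * q ^ (2 * (N + 1) + 1)) ^ n) :=
    nuG_summable q z hq hzq (N + 1)
  have h0 : nuG q z N
      = 1 + ∑' n : ℕ, qPoch (-q) (q ^ 2) (n + 1) * (z * q ^ (2 * N + 1)) ^ (n + 1) := by
    rw [nuG, Summable.tsum_eq_zero_add hs1]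
    simp [qPoch]
  have h1 : ∀ n : ℕ, qPoch (-q) (q ^ 2) (n + 1) * (z * q ^ (2 * N + 1)) ^ (n + 1)
      = (z * q ^ (2 * N + 1)) * (qPoch (-q) (q ^ 2) n * (z * q ^ (2 * N + 1)) ^ n)
        + (z * q ^ (2 * N + 2)) * (qPoch (-q) (q ^ 2) n * (z * q ^ (2 * (N + 1) + 1)) ^ n) := by
    intro n; rw [hA]; ring
  have h2 : ∑' n : ℕ, qPoch (-q) (q ^ 2) (n + 1) * (z * q ^ (2 * N + 1)) ^ (n + 1)
      = (z * q ^ (2 * N + 1)) * nuG q z N + (z * q ^ (2 * N + 2)) * nuG q z (N + 1) := by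
    rw [tsum_congr h1, Summable.tsum_add (hs1.mul_left _) (hs2.mul_left _), tsum_mul_left,
      tsum_mul_left, nuG, nuG]
  rw [h2] at h0
  linear_combination h0

lemma poch_ne (q z : ℂ) (hden : ∀ k : ℕ, 1 - z * q ^ (2 * k + 1) ≠ 0) (M : ℕ) :
    qPoch (z * q) (q ^ 2) M ≠ 0 := by
  rw [qPoch]
  refine Finset.prod_ne_zero_iff.2 (fun k _ => ?_)
  rw [show z * q * (q ^ 2) ^ k = z * q ^ (2 * k + 1) by ring]
  exact hden k

lemma poch_succ (q z : ℂ) (N : ℕ) : qPoch (z * q) (q ^ 2) (N + 1)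
    = qPoch (z * q) (q ^ 2) N * (1 - z * q ^ (2 * N + 1)) := by
  rw [qPoch, Finset.prod_range_succ, ← qPoch]
  congr 1
  ring

lemma nuG_key (q z : ℂ) (hq : ‖q‖ < 1) (hzq : ‖z * q‖ < 1)
    (hden : ∀ k : ℕ, 1 - z * q ^ (2 * k + 1) ≠ 0) (N : ℕ) :
    nuG q z 0 = (∑ n ∈ Finset.range N,
        z ^ n * q ^ (n ^ 2 + n) / qPoch (z * q) (q ^ 2) (n + 1))
      + nuP q z N * nuG q z N := by
  induction N with
  | zero => simp [nuP, qPoch]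
  | succ N ih =>
    have hrec := nuG_rec q z hq hzq N
    have hd := hden N
    have hDN := poch_ne q z hden N
    have hDN1 := poch_ne q z hden (N + 1)
    rw [Finset.sum_range_succ, ih]
    have hGN : nuG q z N = (1 + z * q ^ (2 * N + 2) * nuG q z (N + 1))
        / (1 - z * q ^ (2 * N + 1)) := by
      rw [eq_div_iff hd]; linear_combination hrec
    rw [hGN, nuP, nuP, poch_succ]
    field_simp
    ring

lemma poch_lower (q z : ℂ) (hzq : ‖z * q‖ < 1) (hq : ‖q‖ < 1) (M : ℕ) :
    (1 - ‖z * q‖) ^ M ≤ ‖qPoch (z * q) (q ^ 2) M‖ := by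
  have hconst : (1 - ‖z * q‖) ^ M = ∏ _k ∈ range M, (1 - ‖z * q‖) := by
    rw [Finset.prod_const, Finset.card_range]
  rw [qPoch, norm_prod, hconst]
  refine Finset.prod_le_prod (fun k _ => by linarith) (fun k _ => ?_)
  have h1 : ‖z * q * (q ^ 2) ^ k‖ ≤ ‖z * q‖ := by
    rw [norm_mul, norm_pow, norm_pow]
    refine mul_le_of_le_one_right (norm_nonneg _) (pow_le_one₀ (by positivity) ?_)
    nlinarith [norm_nonneg q]
  have h2 := norm_sub_norm_le (1 : ℂ) (z * q * (q ^ 2) ^ k)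
  simp only [norm_one] at h2
  linarith

lemma norm_nuP_le (q z : ℂ) (hq : ‖q‖ < 1) (hzq : ‖z * q‖ < 1)
    (hden : ∀ k : ℕ, 1 - z * q ^ (2 * k + 1) ≠ 0) (N : ℕ) :
    ‖nuP q z N‖ ≤ (‖z * q‖ * ‖q‖ ^ N * (1 - ‖z * q‖)⁻¹) ^ N := by
  have h1r : (0:ℝ) < 1 - ‖z * q‖ := by linarith
  have hnum : ‖z ^ N * q ^ (N ^ 2 + N)‖ = (‖z * q‖ * ‖q‖ ^ N) ^ N := by
    rw [show z ^ N * q ^ (N ^ 2 + N) = (z * q * q ^ N) ^ N by ring]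
    rw [norm_pow, norm_mul, norm_pow]
  have hden' : (1 - ‖z * q‖) ^ N ≤ ‖qPoch (z * q) (q ^ 2) N‖ := poch_lower q z hzq hq N
  rw [nuP, norm_div, hnum]
  rw [div_le_iff₀ (lt_of_lt_of_le (pow_pos h1r N) hden')]
  have hexp : (‖z * q‖ * ‖q‖ ^ N * (1 - ‖z * q‖)⁻¹) ^ N * (1 - ‖z * q‖) ^ N
      = (‖z * q‖ * ‖q‖ ^ N) ^ N := by
    rw [← mul_pow]
    congr 1
    exact inv_mul_cancel_right₀ h1r.ne' _
  calc (‖z * q‖ * ‖q‖ ^ N) ^ N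
      = (‖z * q‖ * ‖q‖ ^ N * (1 - ‖z * q‖)⁻¹) ^ N * (1 - ‖z * q‖) ^ N := hexp.symm
    _ ≤ (‖z * q‖ * ‖q‖ ^ N * (1 - ‖z * q‖)⁻¹) ^ N * ‖qPoch (z * q) (q ^ 2) N‖ := by
        refine mul_le_mul_of_nonneg_left hden' ?_
        positivity

lemma u_eventually_half (q z : ℂ) (hq : ‖q‖ < 1) :
    ∀ᶠ N : ℕ in atTop, ‖z * q‖ * ‖q‖ ^ N * (1 - ‖z * q‖)⁻¹ ≤ 1 / 2 := by
  have h : Tendsto (fun N : ℕ => ‖z * q‖ * ‖q‖ ^ N * (1 - ‖z * q‖)⁻¹) atTop (nhds 0) := by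
    have h1 := tendsto_pow_atTop_nhds_zero_of_lt_one (norm_nonneg q) hq
    have h2 := (h1.const_mul (‖z * q‖)).mul_const ((1 - ‖z * q‖)⁻¹)
    simpa using h2
  exact (h.eventually_lt_const (by norm_num : (0:ℝ) < 1/2)).mono fun N hN => hN.le

lemma norm_t_le (q z : ℂ) (hq : ‖q‖ < 1) (hzq : ‖z * q‖ < 1) (n : ℕ) :
    ‖z ^ n * q ^ (n ^ 2 + n) / qPoch (z * q) (q ^ 2) (n + 1)‖
      ≤ (1 - ‖z * q‖)⁻¹ * (‖z * q‖ * ‖q‖ ^ n * (1 - ‖z * q‖)⁻¹) ^ n := by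
  have h1r : (0:ℝ) < 1 - ‖z * q‖ := by linarith
  have hA : ‖z ^ n * q ^ (n ^ 2 + n)‖ = (‖z * q‖ * ‖q‖ ^ n) ^ n := by
    rw [show z ^ n * q ^ (n ^ 2 + n) = (z * q * q ^ n) ^ n by ring, norm_pow, norm_mul, norm_pow]
  have hD : (1 - ‖z * q‖) ^ (n + 1) ≤ ‖qPoch (z * q) (q ^ 2) (n + 1)‖ :=
    poch_lower q z hzq hq (n + 1)
  rw [norm_div, hA]
  calc (‖z * q‖ * ‖q‖ ^ n) ^ n / ‖qPoch (z * q) (q ^ 2) (n + 1)‖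
      ≤ (‖z * q‖ * ‖q‖ ^ n) ^ n / (1 - ‖z * q‖) ^ (n + 1) := by
        gcongr
    _ = (1 - ‖z * q‖)⁻¹ * (‖z * q‖ * ‖q‖ ^ n * (1 - ‖z * q‖)⁻¹) ^ n := by
        rw [div_eq_mul_inv, ← inv_pow]
        ring

lemma remainder_tendsto (q z : ℂ) (hq : ‖q‖ < 1) (hzq : ‖z * q‖ < 1)
    (hden : ∀ k : ℕ, 1 - z * q ^ (2 * k + 1) ≠ 0) :
    Tendsto (fun N => nuP q z N * nuG q z N) atTop (nhds 0) := by
  have h1r : (0:ℝ) < 1 - ‖z * q‖ := by linarith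
  rw [tendsto_zero_iff_norm_tendsto_zero]
  set B := Real.exp ((1 - ‖q‖)⁻¹) * (1 - ‖z * q‖)⁻¹ with hB
  have hB0 : 0 ≤ B := mul_nonneg (Real.exp_pos _).le (inv_nonneg.2 h1r.le)
  refine squeeze_zero' (Filter.Eventually.of_forall fun N => norm_nonneg _)
    ?_ (g := fun N => (1/2:ℝ) ^ N * B) ?_
  · filter_upwards [u_eventually_half q z hq] with N hN
    have hu0 : (0:ℝ) ≤ ‖z * q‖ * ‖q‖ ^ N * (1 - ‖z * q‖)⁻¹ := by positivity
    calc ‖nuP q z N * nuG q z N‖ = ‖nuP q z N‖ * ‖nuG q z N‖ := norm_mul _ _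
      _ ≤ (‖z * q‖ * ‖q‖ ^ N * (1 - ‖z * q‖)⁻¹) ^ N * B :=
          mul_le_mul (norm_nuP_le q z hq hzq hden N) (nuG_norm_le q z hq hzq N)
            (norm_nonneg _) (pow_nonneg hu0 N)
      _ ≤ (1/2:ℝ) ^ N * B :=
          mul_le_mul_of_nonneg_right (pow_le_pow_left₀ hu0 hN N) hB0
  · have := (tendsto_pow_atTop_nhds_zero_of_lt_one (by norm_num : (0:ℝ) ≤ 1/2)
      (by norm_num : (1:ℝ)/2 < 1)).mul_const B
    simpa using this

theorem nu_spec_2_4 (q z : ℂ) (hq : ‖q‖ < 1) (hzq : ‖z * q‖ < 1)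
    (hden : ∀ k : ℕ, 1 - z * q ^ (2 * k + 1) ≠ 0) :
    ∑' n : ℕ, z ^ n * q ^ (n ^ 2 + n) / qPoch (z * q) (q ^ 2) (n + 1)
      = ∑' n : ℕ, qPoch (-q) (q ^ 2) n * (z * q) ^ n := by
  have h1r : (0:ℝ) < 1 - ‖z * q‖ := by linarith
  have hsummable : Summable
      (fun n : ℕ => z ^ n * q ^ (n ^ 2 + n) / qPoch (z * q) (q ^ 2) (n + 1)) := by
    refine Summable.of_norm_bounded_eventually_nat
      (g := fun n => (1 - ‖z * q‖)⁻¹ * (1 / 2) ^ n)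
      (((summable_geometric_of_lt_one (by norm_num) (by norm_num : (1:ℝ)/2 < 1))).mul_left _)
      ?_
    filter_upwards [u_eventually_half q z hq] with n hn
    have hu0 : (0:ℝ) ≤ ‖z * q‖ * ‖q‖ ^ n * (1 - ‖z * q‖)⁻¹ := by positivity
    calc ‖z ^ n * q ^ (n ^ 2 + n) / qPoch (z * q) (q ^ 2) (n + 1)‖
        ≤ (1 - ‖z * q‖)⁻¹ * (‖z * q‖ * ‖q‖ ^ n * (1 - ‖z * q‖)⁻¹) ^ n :=
          norm_t_le q z hq hzq n
      _ ≤ (1 - ‖z * q‖)⁻¹ * (1 / 2) ^ n :=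
          mul_le_mul_of_nonneg_left (pow_le_pow_left₀ hu0 hn n) (inv_nonneg.2 h1r.le)
  have heq : ∀ N : ℕ, ∑ n ∈ Finset.range N,
      (z ^ n * q ^ (n ^ 2 + n) / qPoch (z * q) (q ^ 2) (n + 1))
      = nuG q z 0 - nuP q z N * nuG q z N := by
    intro N
    linear_combination -(nuG_key q z hq hzq hden N)
  have hlim2 : Tendsto (fun N => ∑ n ∈ Finset.range N,
      (z ^ n * q ^ (n ^ 2 + n) / qPoch (z * q) (q ^ 2) (n + 1))) atTop (nhds (nuG q z 0)) := by
    have h : Tendsto (fun N : ℕ => nuG q z 0 - nuP q z N * nuG q z N) atTop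
        (nhds (nuG q z 0 - 0)) :=
      Tendsto.sub tendsto_const_nhds (remainder_tendsto q z hq hzq hden)
    rw [sub_zero] at h
    exact h.congr (fun N => (heq N).symm)
  have hfinal : ∑' n : ℕ, z ^ n * q ^ (n ^ 2 + n) / qPoch (z * q) (q ^ 2) (n + 1)
      = nuG q z 0 :=
    tendsto_nhds_unique hsummable.hasSum.tendsto_sum_nat hlim2
  rw [hfinal, nuG]
  refine tsum_congr fun n => ?_
  norm_num
end

section
/- For complex q, z with |q| < 1, z ≠ 0, and |zq| < 1, Σ_{n≥0} q^{n²+n} / (zq; q²)_{n+1} = Σ_{n≥0} (−q/z; q²)_n (zq)ⁿ. -/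
open scoped BigOperators

/-- Gaussian binomial coefficient, defined via a Pascal-type recurrence. -/
noncomputable def gB (Q : ℂ) : ℕ → ℕ → ℂ
  | _, 0 => 1
  | 0, _ + 1 => 0
  | n + 1, k + 1 => Q ^ (n - k) * gB Q n k + gB Q n (k + 1)

@[simp] lemma gB_zero_right (Q : ℂ) (n : ℕ) : gB Q n 0 = 1 := by cases n <;> rfl

@[simp] lemma gB_zero_succ (Q : ℂ) (k : ℕ) : gB Q 0 (k + 1) = 0 := rfl

lemma gB_succ_succ (Q : ℂ) (n k : ℕ) :
    gB Q (n + 1) (k + 1) = Q ^ (n - k) * gB Q n k + gB Q n (k + 1) := rfl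

lemma gB_eq_zero (Q : ℂ) : ∀ {n k : ℕ}, n < k → gB Q n k = 0 := by
  intro n
  induction n with
  | zero => intro k hk; match k, hk with | k + 1, _ => rfl
  | succ n ih =>
    intro k hk
    match k, hk with
    | k + 1, hk =>
      rw [gB_succ_succ, ih (by omega), ih (by omega), mul_zero, zero_add]

@[simp] lemma gB_diag (Q : ℂ) (n : ℕ) : gB Q n n = 1 := by
  induction n with
  | zero => rfl
  | succ n ih => rw [gB_succ_succ, ih, gB_eq_zero Q (Nat.lt_succ_self n),
      Nat.sub_self, pow_zero, one_mul, add_zero]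

lemma gB_one (Q : ℂ) (n : ℕ) : gB Q n 1 = ∑ i ∈ Finset.range n, Q ^ i := by
  induction n with
  | zero => simp
  | succ n ih =>
    rw [gB_succ_succ, ih, gB_zero_right, mul_one, Nat.sub_zero, geom_sum_succ']

/-- The other Pascal rule. -/
lemma gB_rule1 (Q : ℂ) : ∀ n k : ℕ, gB Q (n + 1) (k + 1) = gB Q n k + Q ^ (k + 1) * gB Q n (k + 1) := by
  intro n
  induction n with
  | zero =>
    intro k
    cases k with
    | zero => simp [gB_succ_succ]
    | succ k => simp [gB_succ_succ]
  | succ n ih =>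
    intro k
    cases k with
    | zero =>
      simp only [gB_one, gB_zero_right, Nat.zero_add, pow_one, geom_sum_succ]
      ring
    | succ k =>
      conv_rhs => rw [gB_succ_succ Q n k, gB_succ_succ Q n (k + 1)]
      rw [gB_succ_succ Q (n + 1) (k + 1), ih k, ih (k + 1)]
      have h1 : n + 1 - (k + 1) = n - k := by omega
      rw [h1]
      rcases lt_or_ge k n with h | h
      · have key : Q ^ (n - k) * Q ^ (k + 1) = Q ^ (k + 1 + 1) * Q ^ (n - (k + 1)) := by
          rw [← pow_add, ← pow_add]
          congr 1
          omega
        linear_combination gB Q n (k + 1) * key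
      · rw [gB_eq_zero Q (by omega : n < k + 1)]
        ring

section Bounds

/-- Uniform bound constant for Gaussian binomials. -/
noncomputable def gBbound (t : ℝ) : ℝ := Real.exp (t / (1 - t) ^ 2)

lemma one_sub_pow_pos {t : ℝ} (h0 : 0 ≤ t) (h1 : t < 1) (i : ℕ) :
    0 < 1 - t ^ (i + 1) := by
  have : t ^ (i + 1) < 1 := pow_lt_one₀ h0 h1 (Nat.succ_ne_zero i)
  linarith

lemma gB_norm_le_prod (Q : ℂ) (hQ : ‖Q‖ < 1) :
    ∀ n k : ℕ, ‖gB Q n k‖ ≤ ∏ i ∈ Finset.range k, (1 - ‖Q‖ ^ (i + 1))⁻¹ := by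
  have h0 : (0:ℝ) ≤ ‖Q‖ := norm_nonneg Q
  have hpos : ∀ k : ℕ, (0:ℝ) < ∏ i ∈ Finset.range k, (1 - ‖Q‖ ^ (i + 1))⁻¹ := by
    intro k
    exact Finset.prod_pos fun i _ => inv_pos.2 (one_sub_pow_pos h0 hQ i)
  intro n
  induction n with
  | zero =>
    intro k
    cases k with
    | zero => simp
    | succ k => simpa using (hpos (k+1)).le
  | succ n ih =>
    intro k
    cases k with
    | zero => simp
    | succ k =>
      rw [gB_rule1]
      calc ‖gB Q n k + Q ^ (k + 1) * gB Q n (k + 1)‖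
          ≤ ‖gB Q n k‖ + ‖Q‖ ^ (k + 1) * ‖gB Q n (k + 1)‖ := by
            calc ‖gB Q n k + Q ^ (k + 1) * gB Q n (k + 1)‖
                ≤ ‖gB Q n k‖ + ‖Q ^ (k + 1) * gB Q n (k + 1)‖ :=
                  norm_add_le _ _
              _ = ‖gB Q n k‖ + ‖Q‖ ^ (k + 1) * ‖gB Q n (k + 1)‖ := by
                  rw [norm_mul, norm_pow]
        _ ≤ (∏ i ∈ Finset.range k, (1 - ‖Q‖ ^ (i + 1))⁻¹)
            + ‖Q‖ ^ (k + 1) * ∏ i ∈ Finset.range (k+1), (1 - ‖Q‖ ^ (i + 1))⁻¹ := by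
            gcongr
            · exact ih k
            · exact ih (k+1)
        _ = ∏ i ∈ Finset.range (k+1), (1 - ‖Q‖ ^ (i + 1))⁻¹ := by
            have hk := one_sub_pow_pos h0 hQ k
            rw [Finset.prod_range_succ]
            have key : (1 - ‖Q‖ ^ (k + 1)) * (1 - ‖Q‖ ^ (k + 1))⁻¹ = 1 :=
              mul_inv_cancel₀ hk.ne'
            linear_combination (-(∏ i ∈ Finset.range k, (1 - ‖Q‖ ^ (i + 1))⁻¹)) * key

lemma prod_inv_le_gBbound {t : ℝ} (h0 : 0 ≤ t) (h1 : t < 1) (k : ℕ) :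
    (∏ i ∈ Finset.range k, (1 - t ^ (i + 1))⁻¹) ≤ gBbound t := by
  have h1t : (0:ℝ) < 1 - t := by linarith
  have step : ∀ i : ℕ, (1 - t ^ (i + 1))⁻¹ ≤ Real.exp (t ^ (i + 1) / (1 - t)) := by
    intro i
    have hp := one_sub_pow_pos h0 h1 i
    have hle : t ^ (i + 1) ≤ t := by
      simpa using pow_le_pow_of_le_one h0 h1.le (Nat.one_le_iff_ne_zero.2 (Nat.succ_ne_zero i))
    have e1 : (1 - t ^ (i + 1))⁻¹ ≤ Real.exp (t ^ (i + 1) / (1 - t ^ (i + 1))) := by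
      have := Real.add_one_le_exp (t ^ (i + 1) / (1 - t ^ (i + 1)))
      have heq : t ^ (i + 1) / (1 - t ^ (i + 1)) + 1 = (1 - t ^ (i + 1))⁻¹ := by
        field_simp
        ring
      linarith [heq ▸ this]
    refine e1.trans (Real.exp_le_exp.2 ?_)
    exact div_le_div_of_nonneg_left (pow_nonneg h0 _) h1t (by linarith)
  calc (∏ i ∈ Finset.range k, (1 - t ^ (i + 1))⁻¹)
      ≤ ∏ i ∈ Finset.range k, Real.exp (t ^ (i + 1) / (1 - t)) := by
        refine Finset.prod_le_prod (fun i _ => ?_) (fun i _ => step i)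
        exact (inv_pos.2 (one_sub_pow_pos h0 h1 i)).le
    _ = Real.exp (∑ i ∈ Finset.range k, t ^ (i + 1) / (1 - t)) :=
        (Real.exp_sum _ _).symm
    _ ≤ gBbound t := by
        refine Real.exp_le_exp.2 ?_
        have hgs : ∑ i ∈ Finset.range k, t ^ i ≤ (1 - t)⁻¹ := by
          rw [inv_eq_one_div, le_div_iff₀ h1t]
          have hg := geom_sum_mul t k
          nlinarith [pow_nonneg h0 k]
        have : ∑ i ∈ Finset.range k, t ^ (i + 1) / (1 - t)
            = (t * ∑ i ∈ Finset.range k, t ^ i) / (1 - t) := by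
          rw [Finset.mul_sum, Finset.sum_div]
          refine Finset.sum_congr rfl fun i _ => ?_
          rw [pow_succ]
          ring
        rw [this, sq]
        rw [div_le_div_iff₀ h1t (by positivity)]
        have h2 : t * ∑ i ∈ Finset.range k, t ^ i ≤ t * (1 - t)⁻¹ :=
          mul_le_mul_of_nonneg_left hgs h0
        calc (t * ∑ i ∈ Finset.range k, t ^ i) * ((1 - t) * (1 - t))
            ≤ (t * (1 - t)⁻¹) * ((1 - t) * (1 - t)) := by
              apply mul_le_mul_of_nonneg_right h2 (by positivity)
          _ = t * (1 - t) := by field_simp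

lemma gB_norm_le (Q : ℂ) (hQ : ‖Q‖ < 1) (n k : ℕ) : ‖gB Q n k‖ ≤ gBbound ‖Q‖ :=
  (gB_norm_le_prod Q hQ n k).trans (prod_inv_le_gBbound (norm_nonneg Q) hQ k)

lemma gBbound_nonneg (t : ℝ) : 0 ≤ gBbound t := (Real.exp_pos _).le

end Bounds


section Main

variable {q z : ℂ}

/-- The master double-indexed family. -/
noncomputable def aFam (q z : ℂ) (p : ℕ × ℕ) : ℂ :=
  q ^ (p.1 ^ 2 + p.1) * (z * q) ^ p.2 * gB (q ^ 2) (p.1 + p.2) p.1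

lemma hQ_norm (hq : ‖q‖ < 1) : ‖q ^ 2‖ < 1 := by
  rw [norm_pow]
  exact pow_lt_one₀ (norm_nonneg q) hq two_ne_zero

lemma summable_gB_row (hq : ‖q‖ < 1) (hzq : ‖z * q‖ < 1) (f g : ℕ → ℕ) :
    Summable (fun m : ℕ => gB (q ^ 2) (f m) (g m) * (z * q) ^ m) := by
  refine Summable.of_norm_bounded
    (g := fun m => gBbound ‖q ^ 2‖ * ‖z * q‖ ^ m)
    (((summable_geometric_of_lt_one (norm_nonneg _) hzq).mul_left _)) fun m => ?_
  rw [norm_mul, norm_pow]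
  exact mul_le_mul_of_nonneg_right (gB_norm_le _ (hQ_norm hq) _ _) (by positivity)

lemma summable_aFam (hq : ‖q‖ < 1) (hzq : ‖z * q‖ < 1) :
    Summable (aFam q z) := by
  have hs1 : Summable fun n : ℕ => ‖q‖ ^ n :=
    summable_geometric_of_lt_one (norm_nonneg _) hq
  have hs2 : Summable fun m : ℕ => ‖z * q‖ ^ m * gBbound ‖q ^ 2‖ :=
    (summable_geometric_of_lt_one (norm_nonneg _) hzq).mul_right _
  have hs : Summable fun p : ℕ × ℕ => ‖q‖ ^ p.1 * (‖z * q‖ ^ p.2 * gBbound ‖q ^ 2‖) :=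
    hs1.mul_of_nonneg hs2 (fun n => pow_nonneg (norm_nonneg _) n)
      (fun m => mul_nonneg (pow_nonneg (norm_nonneg _) m) (gBbound_nonneg _))
  refine Summable.of_norm_bounded hs fun p => ?_
  rcases p with ⟨j, m⟩
  rw [aFam, norm_mul, norm_mul, norm_pow, norm_pow]
  have h1 : ‖q‖ ^ (j ^ 2 + j) ≤ ‖q‖ ^ j :=
    pow_le_pow_of_le_one (norm_nonneg q) hq.le (Nat.le_add_left j (j ^ 2))
  have h2 : ‖gB (q ^ 2) (j + m) j‖ ≤ gBbound ‖q ^ 2‖ := gB_norm_le _ (hQ_norm hq) _ _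
  have h3 : ‖q‖ ^ (j ^ 2 + j) * ‖z * q‖ ^ m * ‖gB (q ^ 2) (j + m) j‖
      ≤ ‖q‖ ^ j * ‖z * q‖ ^ m * gBbound ‖q ^ 2‖ :=
    mul_le_mul (mul_le_mul_of_nonneg_right h1 (pow_nonneg (norm_nonneg _) m)) h2
      (norm_nonneg _) (by positivity)
  simpa [mul_assoc] using h3

/-- The q-binomial series. -/
noncomputable def Fser (q z : ℂ) (n : ℕ) : ℂ := ∑' m : ℕ, gB (q ^ 2) (n + m) n * (z * q) ^ m

lemma Fser_zero (hzq : ‖z * q‖ < 1) : Fser q z 0 = (1 - z * q)⁻¹ := by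
  rw [Fser]
  simp only [Nat.zero_add, gB_zero_right, one_mul]
  exact tsum_geometric_of_norm_lt_one hzq

lemma Fser_rec (hq : ‖q‖ < 1) (hzq : ‖z * q‖ < 1) (n : ℕ) :
    Fser q z (n + 1) * (1 - z * q * (q ^ 2) ^ (n + 1)) = Fser q z n := by
  have S1 : Summable fun m => gB (q ^ 2) (n + m) n * (z * q) ^ m :=
    summable_gB_row hq hzq _ _
  have S2 : Summable fun m => gB (q ^ 2) (n + m) (n + 1) * (z * q) ^ m :=
    summable_gB_row hq hzq _ _
  have S2' : Summable fun m => (q ^ 2) ^ (n + 1) * (gB (q ^ 2) (n + m) (n + 1) * (z * q) ^ m) :=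
    S2.mul_left _
  have hT : (∑' m : ℕ, gB (q ^ 2) (n + m) (n + 1) * (z * q) ^ m)
      = (z * q) * Fser q z (n + 1) := by
    have T0 : (∑' m : ℕ, gB (q ^ 2) (n + m) (n + 1) * (z * q) ^ m)
        = gB (q ^ 2) (n + 0) (n + 1) * (z * q) ^ 0
          + ∑' m : ℕ, gB (q ^ 2) (n + (m + 1)) (n + 1) * (z * q) ^ (m + 1) :=
      Summable.tsum_eq_zero_add S2
    rw [T0, gB_eq_zero _ (by omega), zero_mul, zero_add]
    have e : ∀ m : ℕ, gB (q ^ 2) (n + (m + 1)) (n + 1) * (z * q) ^ (m + 1)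
        = (z * q) * (gB (q ^ 2) (n + 1 + m) (n + 1) * (z * q) ^ m) := by
      intro m
      rw [show n + (m + 1) = n + 1 + m by omega]
      ring
    rw [tsum_congr e, tsum_mul_left, Fser]
  have key : Fser q z (n + 1) = Fser q z n
      + (q ^ 2) ^ (n + 1) * ((z * q) * Fser q z (n + 1)) := by
    have step1 : Fser q z (n + 1)
        = ∑' m : ℕ, (gB (q ^ 2) (n + m) n * (z * q) ^ m
            + (q ^ 2) ^ (n + 1) * (gB (q ^ 2) (n + m) (n + 1) * (z * q) ^ m)) := by
      rw [Fser]
      refine tsum_congr fun m => ?_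
      have e : n + 1 + m = (n + m) + 1 := by omega
      rw [e, gB_rule1]
      ring
    calc Fser q z (n + 1)
        = ∑' m : ℕ, (gB (q ^ 2) (n + m) n * (z * q) ^ m
            + (q ^ 2) ^ (n + 1) * (gB (q ^ 2) (n + m) (n + 1) * (z * q) ^ m)) := step1
      _ = (∑' m : ℕ, gB (q ^ 2) (n + m) n * (z * q) ^ m)
            + ∑' m : ℕ, (q ^ 2) ^ (n + 1) * (gB (q ^ 2) (n + m) (n + 1) * (z * q) ^ m) :=
          Summable.tsum_add S1 S2'
      _ = Fser q z n
            + (q ^ 2) ^ (n + 1) * ((z * q) * Fser q z (n + 1)) := by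
          rw [tsum_mul_left, hT]
          rfl
  linear_combination key

lemma qPoch_mul_Fser (hq : ‖q‖ < 1) (hzq : ‖z * q‖ < 1)
    (hden : ∀ k : ℕ, 1 - z * q ^ (2 * k + 1) ≠ 0) (n : ℕ) :
    qPoch (z * q) (q ^ 2) (n + 1) * Fser q z n = 1 := by
  have hfac : ∀ k : ℕ, z * q * (q ^ 2) ^ k = z * q ^ (2 * k + 1) := by
    intro k
    rw [← pow_mul, pow_succ, mul_comm (2:ℕ) k]
    ring
  induction n with
  | zero =>
    rw [qPoch, Finset.prod_range_one, pow_zero, mul_one, Fser_zero hzq]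
    exact mul_inv_cancel₀ (by simpa using hden 0)
  | succ n ih =>
    rw [qPoch, Finset.prod_range_succ, ← qPoch]
    calc qPoch (z * q) (q ^ 2) (n + 1) * (1 - z * q * (q ^ 2) ^ (n + 1)) * Fser q z (n + 1)
        = qPoch (z * q) (q ^ 2) (n + 1)
            * (Fser q z (n + 1) * (1 - z * q * (q ^ 2) ^ (n + 1))) := by ring
      _ = qPoch (z * q) (q ^ 2) (n + 1) * Fser q z n := by rw [Fser_rec hq hzq n]
      _ = 1 := ih

end Main

/-- Finite q-binomial (Cauchy) theorem, in the form needed here. -/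
lemma cauchy_binomial (q y : ℂ) : ∀ n : ℕ, ∏ i ∈ Finset.range n, (1 + y * (q ^ 2) ^ i)
    = ∑ j ∈ Finset.range (n + 1), q ^ (j ^ 2 - j) * gB (q ^ 2) n j * y ^ j := by
  intro n
  induction n with
  | zero => simp
  | succ n ih =>
    rw [Finset.prod_range_succ, ih]
    have hext : ∑ j ∈ Finset.range (n + 1), q ^ (j ^ 2 - j) * gB (q ^ 2) n j * y ^ j
        = ∑ j ∈ Finset.range (n + 2), q ^ (j ^ 2 - j) * gB (q ^ 2) n j * y ^ j := by
      rw [Finset.sum_range_succ _ (n + 1), gB_eq_zero _ (Nat.lt_succ_self n)]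
      ring
    rw [mul_add, mul_one, Finset.sum_mul, hext]
    rw [Finset.sum_range_succ' (fun j => q ^ (j ^ 2 - j) * gB (q ^ 2) (n + 1) j * y ^ j) (n + 1)]
    rw [Finset.sum_range_succ' (fun j => q ^ (j ^ 2 - j) * gB (q ^ 2) n j * y ^ j) (n + 1)]
    simp only [gB_zero_right]
    have hterm : ∑ j ∈ Finset.range (n + 1),
        (q ^ ((j + 1) ^ 2 - (j + 1)) * gB (q ^ 2) n (j + 1) * y ^ (j + 1)
          + q ^ (j ^ 2 - j) * gB (q ^ 2) n j * y ^ j * (y * (q ^ 2) ^ n))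
        = ∑ j ∈ Finset.range (n + 1),
            q ^ ((j + 1) ^ 2 - (j + 1)) * gB (q ^ 2) (n + 1) (j + 1) * y ^ (j + 1) := by
      refine Finset.sum_congr rfl fun j hj => ?_
      have hjn : j ≤ n := Nat.lt_succ_iff.mp (Finset.mem_range.mp hj)
      rw [gB_succ_succ]
      have hexp : q ^ ((j + 1) ^ 2 - (j + 1)) * (q ^ 2) ^ (n - j)
          = q ^ (j ^ 2 - j) * (q ^ 2) ^ n := by
        rw [← pow_mul, ← pow_mul, ← pow_add, ← pow_add]
        congr 1
        have e1 : (j + 1) ^ 2 = j ^ 2 + (2 * j + 1) := by ring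
        have e2 : j ≤ j ^ 2 := Nat.le_self_pow two_ne_zero j
        rw [e1]
        generalize j ^ 2 = s at e2 ⊢
        omega
      linear_combination (-(y ^ (j + 1) * gB (q ^ 2) n j)) * hexp
    rw [Finset.sum_add_distrib] at hterm
    linear_combination hterm

lemma lhs_row {q z : ℂ} (hq : ‖q‖ < 1) (hzq : ‖z * q‖ < 1)
    (hden : ∀ k : ℕ, 1 - z * q ^ (2 * k + 1) ≠ 0) (n : ℕ) :
    q ^ (n ^ 2 + n) / qPoch (z * q) (q ^ 2) (n + 1) = ∑' m : ℕ, aFam q z (n, m) := by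
  have h1 := qPoch_mul_Fser hq hzq hden n
  have hinv : (qPoch (z * q) (q ^ 2) (n + 1))⁻¹ = Fser q z n :=
    inv_eq_of_mul_eq_one_right h1
  rw [div_eq_mul_inv, hinv, Fser, ← tsum_mul_left]
  exact tsum_congr fun m => by rw [aFam]; ring

lemma rhs_row {q z : ℂ} (hz : z ≠ 0) (n : ℕ) :
    qPoch (-(q / z)) (q ^ 2) n * (z * q) ^ n = ∑ p ∈ Finset.HasAntidiagonal.antidiagonal n, aFam q z p := by
  rw [Finset.Nat.sum_antidiagonal_eq_sum_range_succ_mk]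
  have hpoch : qPoch (-(q / z)) (q ^ 2) n = ∏ i ∈ Finset.range n, (1 + (q / z) * (q ^ 2) ^ i) := by
    rw [qPoch]
    exact Finset.prod_congr rfl fun i _ => by ring
  rw [hpoch, cauchy_binomial q (q / z) n, Finset.sum_mul]
  refine Finset.sum_congr rfl fun j hj => ?_
  have hjn : j ≤ n := Nat.lt_succ_iff.mp (Finset.mem_range.mp hj)
  have e2 : j ≤ j ^ 2 := Nat.le_self_pow two_ne_zero j
  rw [aFam]
  simp only
  rw [show j + (n - j) = n from by omega]
  have hdz : (q / z) ^ j * z ^ n = q ^ j * z ^ (n - j) := by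
    rw [div_pow, show z ^ n = z ^ j * z ^ (n - j) from by rw [← pow_add]; congr 1; omega]
    field_simp
  have hq1 : q ^ (j ^ 2 - j) * q ^ j * q ^ n = q ^ (j ^ 2 + j) * q ^ (n - j) := by
    rw [← pow_add, ← pow_add, ← pow_add]
    congr 1
    generalize j ^ 2 = s at e2 ⊢
    omega
  calc q ^ (j ^ 2 - j) * gB (q ^ 2) n j * (q / z) ^ j * (z * q) ^ n
      = (q ^ (j ^ 2 - j) * q ^ n * gB (q ^ 2) n j) * ((q / z) ^ j * z ^ n) := by
        rw [mul_pow]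
        ring
    _ = (q ^ (j ^ 2 - j) * q ^ n * gB (q ^ 2) n j) * (q ^ j * z ^ (n - j)) := by rw [hdz]
    _ = (q ^ (j ^ 2 - j) * q ^ j * q ^ n) * z ^ (n - j) * gB (q ^ 2) n j := by ring
    _ = (q ^ (j ^ 2 + j) * q ^ (n - j)) * z ^ (n - j) * gB (q ^ 2) n j := by rw [hq1]
    _ = q ^ (j ^ 2 + j) * (z * q) ^ (n - j) * gB (q ^ 2) n j := by
        rw [mul_pow]
        ring

lemma tsum_antidiagonal_eq {f : ℕ × ℕ → ℂ} (hf : Summable f) :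
    ∑' n : ℕ, ∑ p ∈ Finset.HasAntidiagonal.antidiagonal n, f p = ∑' p : ℕ × ℕ, f p := by
  rw [← Finset.HasAntidiagonal.sigmaAntidiagonalEquivProd.tsum_eq f]
  have h2 : Summable fun x : Σ n : ℕ, Finset.HasAntidiagonal.antidiagonal n => f x.2 :=
    Finset.HasAntidiagonal.sigmaAntidiagonalEquivProd.summable_iff.2 hf
  simp only [Finset.HasAntidiagonal.sigmaAntidiagonalEquivProd_apply]
  rw [Summable.tsum_sigma' (f := fun x : Σ n : ℕ, Finset.HasAntidiagonal.antidiagonal n => f x.2)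
    (fun b => (hasSum_fintype _).summable) h2]
  refine tsum_congr fun n => ?_
  exact ((tsum_fintype (fun c : Finset.HasAntidiagonal.antidiagonal n => f c)).trans
    (Finset.sum_finset_coe _ _)).symm

theorem nu_spec_2_5 (q z : ℂ) (hq : ‖q‖ < 1) (hz : z ≠ 0) (hzq : ‖z * q‖ < 1)
    (hden : ∀ k : ℕ, 1 - z * q ^ (2 * k + 1) ≠ 0) :
    ∑' n : ℕ, q ^ (n ^ 2 + n) / qPoch (z * q) (q ^ 2) (n + 1)
      = ∑' n : ℕ, qPoch (-(q / z)) (q ^ 2) n * (z * q) ^ n := by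
  have hS : Summable (aFam q z) := summable_aFam hq hzq
  have hrow : ∀ n : ℕ, Summable fun m => aFam q z (n, m) := by
    intro n
    refine ((summable_gB_row hq hzq (fun m => n + m) (fun _ => n)).mul_left
      (q ^ (n ^ 2 + n))).congr fun m => ?_
    rw [aFam]
    ring
  calc ∑' n : ℕ, q ^ (n ^ 2 + n) / qPoch (z * q) (q ^ 2) (n + 1)
      = ∑' n : ℕ, ∑' m : ℕ, aFam q z (n, m) := tsum_congr (lhs_row hq hzq hden)
    _ = ∑' p : ℕ × ℕ, aFam q z p := (Summable.tsum_prod' hS hrow).symm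
    _ = ∑' n : ℕ, ∑ p ∈ Finset.HasAntidiagonal.antidiagonal n, aFam q z p := (tsum_antidiagonal_eq hS).symm
    _ = ∑' n : ℕ, qPoch (-(q / z)) (q ^ 2) n * (z * q) ^ n :=
        tsum_congr fun n => (rhs_row hz n).symm
end

section
/- For complex q, z with |q| < 1 and |zq| < 1, Σ_{n≥0} z^{2n} q^{n²+n} / (zq; q²)_{n+1} = Σ_{n≥0} (−zq; q²)_n (zq)ⁿ. -/
open scoped BigOperators

open Filter Finset

namespace NuSpec

lemma qPoch_succ (a q : ℂ) (n : ℕ) :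
    qPoch a q (n + 1) = qPoch a q n * (1 - a * q ^ n) :=
  Finset.prod_range_succ _ _

lemma qPoch_succ_left (a q : ℂ) (n : ℕ) :
    qPoch a q (n + 1) = (1 - a) * qPoch (a * q) q n := by
  unfold qPoch
  rw [Finset.prod_range_succ']
  simp only [pow_zero, mul_one]
  rw [mul_comm]
  congr 1
  refine Finset.prod_congr rfl fun k _ => ?_
  ring

lemma norm_one_sub_ge (t : ℂ) : 1 - ‖t‖ ≤ ‖1 - t‖ := by
  calc 1 - ‖t‖ = ‖(1 : ℂ)‖ - ‖t‖ := by simp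
    _ ≤ ‖1 - t‖ := norm_sub_norm_le _ _

lemma norm_one_sub_mul_pow_ge {w Q : ℂ} (hw : ‖w‖ < 1) (hQ : ‖Q‖ ≤ 1) (k : ℕ) :
    1 - ‖w‖ ≤ ‖1 - w * Q ^ k‖ := by
  have h1 : ‖w * Q ^ k‖ ≤ ‖w‖ := by
    rw [norm_mul, norm_pow]
    calc ‖w‖ * ‖Q‖ ^ k ≤ ‖w‖ * 1 :=
          mul_le_mul_of_nonneg_left (pow_le_one₀ (norm_nonneg Q) hQ) (norm_nonneg w)
      _ = ‖w‖ := mul_one _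
  calc 1 - ‖w‖ ≤ 1 - ‖w * Q ^ k‖ := by linarith
    _ ≤ ‖1 - w * Q ^ k‖ := norm_one_sub_ge _

lemma one_sub_ne_zero' {t : ℂ} (h : ‖t‖ < 1) : (1 : ℂ) - t ≠ 0 := by
  intro h0
  have h2 : 1 - ‖t‖ ≤ ‖(1:ℂ) - t‖ := norm_one_sub_ge t
  rw [h0, norm_zero] at h2
  linarith

lemma qPoch_ne_zero {w Q : ℂ} (hw : ‖w‖ < 1) (hQ : ‖Q‖ ≤ 1) (n : ℕ) :
    qPoch w Q n ≠ 0 := by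
  refine Finset.prod_ne_zero_iff.mpr fun k _ => ?_
  have h := norm_one_sub_mul_pow_ge hw hQ k
  intro h0
  rw [h0, norm_zero] at h
  linarith

lemma qPoch_norm_ge {w Q : ℂ} {t : ℝ} (hw : ‖w‖ ≤ t) (ht : t < 1) (hQ : ‖Q‖ ≤ 1) (n : ℕ) :
    (1 - t) ^ n ≤ ‖qPoch w Q n‖ := by
  have hw1 : ‖w‖ < 1 := lt_of_le_of_lt hw ht
  unfold qPoch
  rw [norm_prod]
  calc (1 - t) ^ n = ∏ _k ∈ Finset.range n, (1 - t) := by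
        rw [Finset.prod_const, Finset.card_range]
    _ ≤ ∏ k ∈ Finset.range n, ‖1 - w * Q ^ k‖ := by
        refine Finset.prod_le_prod (fun k _ => by linarith) fun k _ => ?_
        calc 1 - t ≤ 1 - ‖w‖ := by linarith
          _ ≤ ‖1 - w * Q ^ k‖ := norm_one_sub_mul_pow_ge hw1 hQ k

/-- The `G`-side terms. -/
noncomputable def Gt (x q w : ℂ) (n : ℕ) : ℂ :=
  x ^ n * w ^ n * q ^ (n ^ 2 - n) / qPoch w (q ^ 2) (n + 1)

/-- The `R`-side terms. -/
noncomputable def Rt (x q w : ℂ) (m : ℕ) : ℂ :=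
  qPoch (-x) (q ^ 2) m * w ^ m

lemma exp_arith (n : ℕ) : (n + 1) ^ 2 - (n + 1) = (n ^ 2 - n) + 2 * n := by
  have h1 : n ≤ n ^ 2 := Nat.le_self_pow two_ne_zero n
  have h2 : (n + 1) ^ 2 = n ^ 2 + 2 * n + 1 := by ring
  omega

lemma normQ_le_one {q : ℂ} (hq : ‖q‖ < 1) : ‖q ^ 2‖ ≤ 1 := by
  rw [norm_pow]; exact pow_le_one₀ (norm_nonneg q) hq.le

lemma normQ_lt_one {q : ℂ} (hq : ‖q‖ < 1) : ‖q ^ 2‖ < 1 := by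
  rw [norm_pow]; exact pow_lt_one₀ (norm_nonneg q) hq two_ne_zero

lemma Gt_ratio (x q w : ℂ) (n : ℕ) :
    Gt x q w (n + 1) = Gt x q w n * (x * w * q ^ (2 * n) / (1 - w * (q ^ 2) ^ (n + 1))) := by
  unfold Gt
  rw [qPoch_succ, div_mul_div_comm]
  congr 1
  rw [exp_arith, pow_add]
  ring

lemma sumG {x q w : ℂ} (hq : ‖q‖ < 1) (hw : ‖w‖ < 1) :
    Summable (fun n => Gt x q w n) := by
  have hwpos : 0 < 1 - ‖w‖ := by linarith
  refine summable_of_ratio_norm_eventually_le (r := 1/2) (by norm_num) ?_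
  have htend : Tendsto (fun n : ℕ => ‖x‖ * ‖w‖ * (‖q‖ ^ 2) ^ n / (1 - ‖w‖)) atTop (nhds 0) := by
    have hq2 : ‖q‖ ^ 2 < 1 := pow_lt_one₀ (norm_nonneg q) hq two_ne_zero
    have h0 : Tendsto (fun n : ℕ => (‖q‖ ^ 2) ^ n) atTop (nhds 0) :=
      tendsto_pow_atTop_nhds_zero_of_lt_one (by positivity) hq2
    have := (h0.const_mul (‖x‖ * ‖w‖)).div_const (1 - ‖w‖)
    simpa using this
  filter_upwards [htend.eventually_lt_const (by norm_num : (0:ℝ) < 1/2)] with n hn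
  rw [Gt_ratio x q w n, norm_mul]
  have hfac : ‖x * w * q ^ (2 * n) / (1 - w * (q ^ 2) ^ (n + 1))‖
      ≤ ‖x‖ * ‖w‖ * (‖q‖ ^ 2) ^ n / (1 - ‖w‖) := by
    rw [norm_div]
    have hden : 1 - ‖w‖ ≤ ‖1 - w * (q ^ 2) ^ (n + 1)‖ :=
      norm_one_sub_mul_pow_ge hw (normQ_le_one hq) (n + 1)
    have hnum : ‖x * w * q ^ (2 * n)‖ = ‖x‖ * ‖w‖ * (‖q‖ ^ 2) ^ n := by
      rw [norm_mul, norm_mul, norm_pow, ← pow_mul, mul_comm 2 n, pow_mul]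
    rw [hnum]
    exact div_le_div_of_nonneg_left (by positivity) hwpos hden
  calc ‖Gt x q w n‖ * ‖x * w * q ^ (2 * n) / (1 - w * (q ^ 2) ^ (n + 1))‖
      ≤ ‖Gt x q w n‖ * (‖x‖ * ‖w‖ * (‖q‖ ^ 2) ^ n / (1 - ‖w‖)) :=
        mul_le_mul_of_nonneg_left hfac (norm_nonneg _)
    _ ≤ ‖Gt x q w n‖ * (1/2) := mul_le_mul_of_nonneg_left hn.le (norm_nonneg _)
    _ = 1/2 * ‖Gt x q w n‖ := by ring

lemma Rt_ratio (x q w : ℂ) (m : ℕ) :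
    Rt x q w (m + 1) = Rt x q w m * ((1 + x * (q ^ 2) ^ m) * w) := by
  unfold Rt
  rw [qPoch_succ, pow_succ]
  ring

lemma sumR {x q w : ℂ} (hq : ‖q‖ < 1) (hw : ‖w‖ < 1) :
    Summable (fun m => Rt x q w m) := by
  refine summable_of_ratio_norm_eventually_le (r := (1 + ‖w‖) / 2) (by linarith) ?_
  have htend : Tendsto (fun m : ℕ => (1 + ‖x‖ * (‖q‖ ^ 2) ^ m) * ‖w‖) atTop
      (nhds ((1 + ‖x‖ * 0) * ‖w‖)) := by
    have hq2 : ‖q‖ ^ 2 < 1 := pow_lt_one₀ (norm_nonneg q) hq two_ne_zero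
    have h0 : Tendsto (fun m : ℕ => (‖q‖ ^ 2) ^ m) atTop (nhds 0) :=
      tendsto_pow_atTop_nhds_zero_of_lt_one (by positivity) hq2
    exact (((h0.const_mul (‖x‖)).const_add 1).mul_const (‖w‖))
  have hlt : (1 + ‖x‖ * 0) * ‖w‖ < (1 + ‖w‖) / 2 := by
    simp only [mul_zero, add_zero, one_mul]; linarith
  filter_upwards [htend.eventually_lt_const hlt] with m hm
  rw [Rt_ratio x q w m, norm_mul]
  have hfac : ‖(1 + x * (q ^ 2) ^ m) * w‖ ≤ (1 + ‖x‖ * (‖q‖ ^ 2) ^ m) * ‖w‖ := by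
    rw [norm_mul]
    refine mul_le_mul_of_nonneg_right ?_ (norm_nonneg w)
    calc ‖1 + x * (q ^ 2) ^ m‖ ≤ ‖(1:ℂ)‖ + ‖x * (q ^ 2) ^ m‖ := norm_add_le _ _
      _ = 1 + ‖x‖ * (‖q‖ ^ 2) ^ m := by
          rw [norm_one, norm_mul, norm_pow, norm_pow]
  calc ‖Rt x q w m‖ * ‖(1 + x * (q ^ 2) ^ m) * w‖
      ≤ ‖Rt x q w m‖ * ((1 + ‖x‖ * (‖q‖ ^ 2) ^ m) * ‖w‖) :=
        mul_le_mul_of_nonneg_left hfac (norm_nonneg _)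
    _ ≤ ‖Rt x q w m‖ * ((1 + ‖w‖) / 2) := mul_le_mul_of_nonneg_left hm.le (norm_nonneg _)
    _ = (1 + ‖w‖) / 2 * ‖Rt x q w m‖ := by ring

lemma Gt_zero (x q w : ℂ) : Gt x q w 0 = 1 / (1 - w) := by
  unfold Gt qPoch
  simp

lemma Rt_zero (x q w : ℂ) : Rt x q w 0 = 1 := by
  unfold Rt qPoch
  simp

lemma norm_mul_Q_le {w q : ℂ} (hq : ‖q‖ < 1) : ‖w * q ^ 2‖ ≤ ‖w‖ := by
  rw [norm_mul]
  calc ‖w‖ * ‖q ^ 2‖ ≤ ‖w‖ * 1 :=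
        mul_le_mul_of_nonneg_left (normQ_le_one hq) (norm_nonneg w)
    _ = ‖w‖ := mul_one _

lemma Gt_step (x q : ℂ) {w : ℂ} (hq : ‖q‖ < 1) (hw : ‖w‖ < 1) (n : ℕ) :
    Gt x q w (n + 1) = (x * w / (1 - w)) * Gt x q (w * q ^ 2) n := by
  have hwq : ‖w * q ^ 2‖ < 1 := lt_of_le_of_lt (norm_mul_Q_le hq) hw
  have hP : qPoch (w * q ^ 2) (q ^ 2) (n + 1) ≠ 0 :=
    qPoch_ne_zero hwq (normQ_le_one hq) (n + 1)
  have h1 : (1 : ℂ) - w ≠ 0 := one_sub_ne_zero' hw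
  unfold Gt
  rw [qPoch_succ_left w (q ^ 2) (n + 1), exp_arith, pow_add]
  field_simp
  ring

lemma recG (x q : ℂ) {w : ℂ} (hq : ‖q‖ < 1) (hw : ‖w‖ < 1) :
    (∑' n, Gt x q w n)
      = 1 / (1 - w) + (x * w / (1 - w)) * ∑' n, Gt x q (w * q ^ 2) n := by
  rw [Summable.tsum_eq_zero_add (sumG hq hw), Gt_zero]
  congr 1
  rw [tsum_congr (fun n => Gt_step x q hq hw n), tsum_mul_left]

lemma Rt_step (x q w : ℂ) (m : ℕ) :
    Rt x q w (m + 1) = w * Rt x q w m + (x * w) * Rt x q (w * q ^ 2) m := by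
  unfold Rt
  rw [qPoch_succ, pow_succ]
  ring

lemma recR (x q : ℂ) {w : ℂ} (hq : ‖q‖ < 1) (hw : ‖w‖ < 1) :
    (∑' m, Rt x q w m)
      = 1 / (1 - w) + (x * w / (1 - w)) * ∑' m, Rt x q (w * q ^ 2) m := by
  have hwq : ‖w * q ^ 2‖ < 1 := lt_of_le_of_lt (norm_mul_Q_le hq) hw
  have hR := sumR (x := x) hq hw
  have hRq := sumR (x := x) hq hwq
  have h2 : (∑' m, Rt x q w m) = Rt x q w 0 + ∑' m, Rt x q w (m + 1) :=
    Summable.tsum_eq_zero_add hR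
  have h3 : (∑' m, Rt x q w (m + 1))
      = w * ∑' m, Rt x q w m + (x * w) * ∑' m, Rt x q (w * q ^ 2) m := by
    rw [tsum_congr (fun m => Rt_step x q w m),
      Summable.tsum_add (hR.mul_left w) (hRq.mul_left (x * w)), tsum_mul_left, tsum_mul_left]
  rw [Rt_zero, h3] at h2
  have h1 : (1 : ℂ) - w ≠ 0 := one_sub_ne_zero' hw
  have hkey : (∑' m, Rt x q w m) * (1 - w)
      = 1 + x * w * ∑' m, Rt x q (w * q ^ 2) m := by linear_combination h2
  rw [div_mul_eq_mul_div, ← add_div, eq_div_iff h1]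
  linear_combination hkey

lemma recD (x q : ℂ) {w : ℂ} (hq : ‖q‖ < 1) (hw : ‖w‖ < 1) :
    (∑' n, Gt x q w n) - (∑' m, Rt x q w m)
      = (x * w / (1 - w)) *
        ((∑' n, Gt x q (w * q ^ 2) n) - (∑' m, Rt x q (w * q ^ 2) m)) := by
  rw [recG x q hq hw, recR x q hq hw]
  ring

lemma norm_orbit_le (x : ℂ) {q : ℂ} (hq : ‖q‖ < 1) (N : ℕ) :
    ‖x * (q ^ 2) ^ N‖ ≤ ‖x‖ := by
  rw [norm_mul, norm_pow]
  calc ‖x‖ * ‖q ^ 2‖ ^ N ≤ ‖x‖ * 1 :=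
        mul_le_mul_of_nonneg_left (pow_le_one₀ (norm_nonneg _) (normQ_le_one hq)) (norm_nonneg x)
    _ = ‖x‖ := mul_one _

lemma iterD {x q : ℂ} (hq : ‖q‖ < 1) (hx : ‖x‖ < 1) (N : ℕ) :
    (∑' n, Gt x q x n) - (∑' m, Rt x q x m)
      = (∏ j ∈ Finset.range N, (x * (x * (q ^ 2) ^ j) / (1 - x * (q ^ 2) ^ j))) *
        ((∑' n, Gt x q (x * (q ^ 2) ^ N) n) - (∑' m, Rt x q (x * (q ^ 2) ^ N) m)) := by
  induction N with
  | zero => simp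
  | succ N ih =>
    have hw : ‖x * (q ^ 2) ^ N‖ < 1 := lt_of_le_of_lt (norm_orbit_le x hq N) hx
    have harg : (x * (q ^ 2) ^ N) * (q ^ 2) = x * (q ^ 2) ^ (N + 1) := by ring
    rw [ih, recD x q hq hw, harg, Finset.prod_range_succ]
    ring

/-- Majorant for the `G`-side. -/
noncomputable def bG (t rq : ℝ) (n : ℕ) : ℝ := t ^ (2 * n) * rq ^ (n ^ 2 - n) / (1 - t) ^ (n + 1)

lemma bG_ratio {t : ℝ} (rq : ℝ) (ht : (1 : ℝ) - t ≠ 0) (n : ℕ) :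
    bG t rq (n + 1) = bG t rq n * (t ^ 2 * rq ^ (2 * n) / (1 - t)) := by
  unfold bG
  rw [exp_arith, show 2 * (n + 1) = 2 * n + 2 from by ring, pow_add, pow_add, pow_succ]
  field_simp
  ring

lemma bG_nonneg {t rq : ℝ} (ht0 : 0 ≤ t) (ht1 : t < 1) (hrq : 0 ≤ rq) (n : ℕ) :
    0 ≤ bG t rq n := by
  unfold bG
  have : (0:ℝ) < 1 - t := by linarith
  positivity

lemma sum_bG {t rq : ℝ} (ht0 : 0 ≤ t) (ht1 : t < 1) (hrq0 : 0 ≤ rq) (hrq1 : rq < 1) :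
    Summable (bG t rq) := by
  have htpos : (0:ℝ) < 1 - t := by linarith
  refine summable_of_ratio_norm_eventually_le (r := 1/2) (by norm_num) ?_
  have htend : Tendsto (fun n : ℕ => t ^ 2 * (rq ^ 2) ^ n / (1 - t)) atTop (nhds 0) := by
    have h0 : Tendsto (fun n : ℕ => (rq ^ 2) ^ n) atTop (nhds 0) :=
      tendsto_pow_atTop_nhds_zero_of_lt_one (by positivity)
        (pow_lt_one₀ hrq0 hrq1 two_ne_zero)
    simpa using (h0.const_mul (t ^ 2)).div_const (1 - t)
  filter_upwards [htend.eventually_lt_const (by norm_num : (0:ℝ) < 1/2)] with n hn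
  rw [bG_ratio rq (by linarith) n]
  have hb := bG_nonneg ht0 ht1 hrq0 (n := n)
  have hfac0 : 0 ≤ t ^ 2 * rq ^ (2 * n) / (1 - t) := by positivity
  rw [Real.norm_eq_abs, Real.norm_eq_abs, abs_of_nonneg (by positivity),
    abs_of_nonneg hb]
  have hfac : t ^ 2 * rq ^ (2 * n) / (1 - t) ≤ 1/2 := by
    have : t ^ 2 * rq ^ (2 * n) / (1 - t) = t ^ 2 * (rq ^ 2) ^ n / (1 - t) := by
      rw [pow_mul]
    rw [this]; exact hn.le
  calc bG t rq n * (t ^ 2 * rq ^ (2 * n) / (1 - t)) ≤ bG t rq n * (1/2) :=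
        mul_le_mul_of_nonneg_left hfac hb
    _ = 1/2 * bG t rq n := by ring

lemma boundG {x q w : ℂ} (hq : ‖q‖ < 1) (hx : ‖x‖ < 1) (hw : ‖w‖ ≤ ‖x‖) :
    ‖∑' n, Gt x q w n‖ ≤ ∑' n, bG ‖x‖ ‖q‖ n := by
  refine tsum_of_norm_bounded
    (sum_bG (norm_nonneg x) hx (norm_nonneg q) hq).hasSum fun n => ?_
  unfold Gt bG
  rw [norm_div, norm_mul, norm_mul, norm_pow, norm_pow, norm_pow]
  have hd : (1 - ‖x‖) ^ (n + 1) ≤ ‖qPoch w (q ^ 2) (n + 1)‖ :=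
    qPoch_norm_ge hw hx (normQ_le_one hq) (n + 1)
  have hdpos : (0:ℝ) < (1 - ‖x‖) ^ (n + 1) := by
    have : (0:ℝ) < 1 - ‖x‖ := by linarith
    positivity
  refine div_le_div₀ (by positivity) ?_ hdpos hd
  calc ‖x‖ ^ n * ‖w‖ ^ n * ‖q‖ ^ (n ^ 2 - n)
      ≤ ‖x‖ ^ n * ‖x‖ ^ n * ‖q‖ ^ (n ^ 2 - n) := by
        have hwp := pow_le_pow_left₀ (norm_nonneg w) hw n
        have h0 : (0:ℝ) ≤ ‖x‖ ^ n := by positivity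
        have h1 : (0:ℝ) ≤ ‖q‖ ^ (n ^ 2 - n) := by positivity
        exact mul_le_mul_of_nonneg_right (mul_le_mul_of_nonneg_left hwp h0) h1
    _ = ‖x‖ ^ (2 * n) * ‖q‖ ^ (n ^ 2 - n) := by
        rw [show 2 * n = n + n from by ring, pow_add]
    _ ≤ ‖x‖ ^ (2 * n) * ‖q‖ ^ (n ^ 2 - n) := le_refl _

lemma boundR {x q w : ℂ} (hq : ‖q‖ < 1) (hx : ‖x‖ < 1) (hw : ‖w‖ ≤ ‖x‖) :
    ‖∑' m, Rt x q w m‖ ≤ Real.exp (‖x‖ / (1 - ‖q‖ ^ 2)) * (1 - ‖x‖)⁻¹ := by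
  have hrq1 : ‖q‖ ^ 2 < 1 := pow_lt_one₀ (norm_nonneg q) hq two_ne_zero
  have hgeom : HasSum (fun m : ℕ => Real.exp (‖x‖ / (1 - ‖q‖ ^ 2)) * ‖x‖ ^ m)
      (Real.exp (‖x‖ / (1 - ‖q‖ ^ 2)) * (1 - ‖x‖)⁻¹) :=
    (hasSum_geometric_of_lt_one (norm_nonneg x) hx).mul_left _
  refine tsum_of_norm_bounded hgeom fun m => ?_
  unfold Rt
  rw [norm_mul, norm_pow]
  refine mul_le_mul ?_ (pow_le_pow_left₀ (norm_nonneg w) hw m) (by positivity)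
    (Real.exp_pos _).le
  unfold qPoch
  rw [norm_prod]
  calc ∏ k ∈ Finset.range m, ‖1 - -x * (q ^ 2) ^ k‖
      ≤ ∏ k ∈ Finset.range m, (1 + ‖x‖ * (‖q‖ ^ 2) ^ k) := by
        refine Finset.prod_le_prod (fun k _ => norm_nonneg _) fun k _ => ?_
        rw [neg_mul, sub_neg_eq_add]
        calc ‖1 + x * (q ^ 2) ^ k‖ ≤ ‖(1:ℂ)‖ + ‖x * (q ^ 2) ^ k‖ := norm_add_le _ _
          _ = 1 + ‖x‖ * (‖q‖ ^ 2) ^ k := by rw [norm_one, norm_mul, norm_pow, norm_pow]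
    _ ≤ ∏ k ∈ Finset.range m, Real.exp (‖x‖ * (‖q‖ ^ 2) ^ k) := by
        refine Finset.prod_le_prod (fun k _ => by positivity) fun k _ => ?_
        rw [add_comm]
        exact Real.add_one_le_exp _
    _ = Real.exp (∑ k ∈ Finset.range m, ‖x‖ * (‖q‖ ^ 2) ^ k) := (Real.exp_sum _ _).symm
    _ ≤ Real.exp (‖x‖ / (1 - ‖q‖ ^ 2)) := by
        refine Real.exp_le_exp.mpr ?_
        rw [← Finset.mul_sum, div_eq_mul_inv]
        refine mul_le_mul_of_nonneg_left ?_ (norm_nonneg x)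
        rw [← tsum_geometric_of_lt_one (by positivity) hrq1]
        exact Summable.sum_le_tsum (Finset.range m) (fun k _ => by positivity)
          (summable_geometric_of_lt_one (by positivity) hrq1)

lemma main_eq {x q : ℂ} (hq : ‖q‖ < 1) (hx : ‖x‖ < 1) :
    (∑' n, Gt x q x n) = ∑' m, Rt x q x m := by
  have hxpos : (0:ℝ) < 1 - ‖x‖ := by linarith
  set M : ℝ := (∑' n, bG ‖x‖ ‖q‖ n) + Real.exp (‖x‖ / (1 - ‖q‖ ^ 2)) * (1 - ‖x‖)⁻¹ with hM
  set a : ℕ → ℝ := fun N =>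
    ∏ j ∈ Finset.range N, (‖x‖ * (‖x‖ * (‖q‖ ^ 2) ^ j) / (1 - ‖x‖)) with ha
  have hfacnn : ∀ j : ℕ, (0:ℝ) ≤ ‖x‖ * (‖x‖ * (‖q‖ ^ 2) ^ j) / (1 - ‖x‖) := fun j => by
    positivity
  have hann : ∀ N, 0 ≤ a N := fun N => Finset.prod_nonneg fun j _ => hfacnn j
  have hbound : ∀ N, ‖(∑' n, Gt x q x n) - ∑' m, Rt x q x m‖ ≤ a N * M := by
    intro N
    rw [iterD hq hx N, norm_mul]
    have hMnn : 0 ≤ M := by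
      have h1 : (0:ℝ) ≤ ∑' n, bG ‖x‖ ‖q‖ n :=
        tsum_nonneg fun n => bG_nonneg (norm_nonneg x) hx (norm_nonneg q) n
      have h2 : (0:ℝ) ≤ Real.exp (‖x‖ / (1 - ‖q‖ ^ 2)) * (1 - ‖x‖)⁻¹ := by positivity
      rw [hM]; linarith
    refine mul_le_mul ?_ ?_ (norm_nonneg _) (hann N)
    · rw [norm_prod]
      refine Finset.prod_le_prod (fun j _ => norm_nonneg _) fun j _ => ?_
      rw [norm_div, norm_mul, norm_mul, norm_pow, norm_pow]
      have hd : 1 - ‖x‖ ≤ ‖1 - x * (q ^ 2) ^ j‖ :=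
        norm_one_sub_mul_pow_ge hx (normQ_le_one hq) j
      exact div_le_div_of_nonneg_left (by positivity) hxpos hd
    · calc ‖(∑' n, Gt x q (x * (q ^ 2) ^ N) n) - ∑' m, Rt x q (x * (q ^ 2) ^ N) m‖
          ≤ ‖∑' n, Gt x q (x * (q ^ 2) ^ N) n‖ + ‖∑' m, Rt x q (x * (q ^ 2) ^ N) m‖ :=
            norm_sub_le _ _
        _ ≤ M := by
            rw [hM]
            exact add_le_add (boundG hq hx (norm_orbit_le x hq N))
              (boundR hq hx (norm_orbit_le x hq N))
  have hsuma : Summable a := by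
    refine summable_of_ratio_norm_eventually_le (r := 1/2) (by norm_num) ?_
    have htend : Tendsto (fun N : ℕ => ‖x‖ * (‖x‖ * (‖q‖ ^ 2) ^ N) / (1 - ‖x‖)) atTop
        (nhds 0) := by
      have h0 : Tendsto (fun N : ℕ => (‖q‖ ^ 2) ^ N) atTop (nhds 0) :=
        tendsto_pow_atTop_nhds_zero_of_lt_one (by positivity)
          (pow_lt_one₀ (norm_nonneg q) hq two_ne_zero)
      simpa using ((h0.const_mul ‖x‖).const_mul ‖x‖).div_const (1 - ‖x‖)
    filter_upwards [htend.eventually_lt_const (by norm_num : (0:ℝ) < 1/2)] with N hN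
    have hstep : a (N + 1) = a N * (‖x‖ * (‖x‖ * (‖q‖ ^ 2) ^ N) / (1 - ‖x‖)) :=
      Finset.prod_range_succ _ _
    rw [hstep, Real.norm_eq_abs, Real.norm_eq_abs, abs_of_nonneg (hann N),
      abs_of_nonneg (mul_nonneg (hann N) (hfacnn N))]
    calc a N * (‖x‖ * (‖x‖ * (‖q‖ ^ 2) ^ N) / (1 - ‖x‖)) ≤ a N * (1/2) :=
          mul_le_mul_of_nonneg_left hN.le (hann N)
      _ = 1/2 * a N := by ring
  have hzero : Tendsto (fun N => a N * M) atTop (nhds 0) := by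
    have := hsuma.tendsto_atTop_zero.mul_const M
    rwa [zero_mul] at this
  have hle : ‖(∑' n, Gt x q x n) - ∑' m, Rt x q x m‖ ≤ 0 :=
    ge_of_tendsto' hzero hbound
  have h0 : (∑' n, Gt x q x n) - ∑' m, Rt x q x m = 0 := by
    rw [← norm_eq_zero]
    exact le_antisymm hle (norm_nonneg _)
  linear_combination h0

end NuSpec

theorem nu_spec_2_6 (q z : ℂ) (hq : ‖q‖ < 1) (hzq : ‖z * q‖ < 1)
    (hden : ∀ k : ℕ, 1 - z * q ^ (2 * k + 1) ≠ 0) :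
    ∑' n : ℕ, z ^ (2 * n) * q ^ (n ^ 2 + n) / qPoch (z * q) (q ^ 2) (n + 1)
      = ∑' n : ℕ, qPoch (-(z * q)) (q ^ 2) n * (z * q) ^ n := by
  have hx : ‖z * q‖ < 1 := hzq
  have h := NuSpec.main_eq (x := z * q) hq hx
  calc ∑' n : ℕ, z ^ (2 * n) * q ^ (n ^ 2 + n) / qPoch (z * q) (q ^ 2) (n + 1)
      = ∑' n, NuSpec.Gt (z * q) q (z * q) n := by
        refine tsum_congr fun n => ?_
        unfold NuSpec.Gt
        congr 1
        have he : n ^ 2 + n = (n ^ 2 - n) + 2 * n := by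
          have h1 : n ≤ n ^ 2 := Nat.le_self_pow two_ne_zero n
          omega
        rw [he, pow_add]
        ring
    _ = ∑' m, NuSpec.Rt (z * q) q (z * q) m := h
    _ = ∑' n : ℕ, qPoch (-(z * q)) (q ^ 2) n * (z * q) ^ n := by
        refine tsum_congr fun n => ?_
        unfold NuSpec.Rt
        rfl
end

section
/- For complex q, z with |q| < 1 and |zq| < 1, Σ_{n≥0} zⁿ q^{n²+n} / (−zq; q²)_{n+1} = Σ_{n≥0} (q; q²)_n (−zq)ⁿ. -/
open scoped BigOperators

/-- Gaussian binomial coefficients `cc Q n m = [n+m choose m]_Q`, defined via the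
Cauchy-product recursion coming from `1/(t;Q)_{n+2} = 1/(t;Q)_{n+1} · 1/(1-tQ^{n+1})`. -/
noncomputable def cc (Q : ℂ) : ℕ → ℕ → ℂ
  | 0, _ => 1
  | n + 1, m => ∑ k ∈ Finset.range (m + 1), cc Q n k * Q ^ ((n + 1) * (m - k))

lemma cc_zero (Q : ℂ) (m : ℕ) : cc Q 0 m = 1 := rfl

lemma cc_succ (Q : ℂ) (n m : ℕ) :
    cc Q (n + 1) m = ∑ k ∈ Finset.range (m + 1), cc Q n k * Q ^ ((n + 1) * (m - k)) := rfl

lemma cc_apply_zero (Q : ℂ) (n : ℕ) : cc Q n 0 = 1 := by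
  induction n with
  | zero => rfl
  | succ n ih => simp [cc_succ, ih]

lemma cc_pascal (Q : ℂ) (n m : ℕ) :
    cc Q (n + 1) (m + 1) = cc Q n (m + 1) + Q ^ (n + 1) * cc Q (n + 1) m := by
  rw [cc_succ Q n (m + 1), Finset.sum_range_succ, cc_succ Q n m, Finset.mul_sum]
  have h : ∀ k ∈ Finset.range (m + 1),
      cc Q n k * Q ^ ((n + 1) * (m + 1 - k)) = Q ^ (n + 1) * (cc Q n k * Q ^ ((n + 1) * (m - k))) := by
    intro k hk
    have hk' : k ≤ m := Nat.lt_succ_iff.mp (Finset.mem_range.mp hk)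
    have : (n + 1) * (m + 1 - k) = (n + 1) + (n + 1) * (m - k) := by
      have : m + 1 - k = (m - k) + 1 := by omega
      rw [this, Nat.mul_succ]; ring
    rw [this, pow_add]; ring
  rw [Finset.sum_congr rfl h]
  simp [add_comm]

lemma cc_norm_le {Q : ℂ} (hQ : ‖Q‖ < 1) (n m : ℕ) :
    ‖cc Q n m‖ ≤ ((1 - ‖Q‖)⁻¹) ^ n := by
  have hQ0 : (0:ℝ) ≤ ‖Q‖ := norm_nonneg _
  have hpos : (0:ℝ) < 1 - ‖Q‖ := by linarith
  induction n generalizing m with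
  | zero => simp [cc_zero]
  | succ n ih =>
    rw [cc_succ]
    calc ‖∑ k ∈ Finset.range (m + 1), cc Q n k * Q ^ ((n + 1) * (m - k))‖
        ≤ ∑ k ∈ Finset.range (m + 1), ‖cc Q n k * Q ^ ((n + 1) * (m - k))‖ :=
          norm_sum_le _ _
      _ ≤ ∑ k ∈ Finset.range (m + 1), ((1 - ‖Q‖)⁻¹) ^ n * ‖Q‖ ^ (m - k) := by
          apply Finset.sum_le_sum
          intro k _
          rw [norm_mul, norm_pow]
          apply mul_le_mul (ih k) _ (by positivity) (by positivity)
          exact pow_le_pow_of_le_one hQ0 hQ.le (Nat.le_mul_of_pos_left _ (Nat.succ_pos n))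
      _ = ((1 - ‖Q‖)⁻¹) ^ n * ∑ k ∈ Finset.range (m + 1), ‖Q‖ ^ (m - k) := by
          rw [Finset.mul_sum]
      _ = ((1 - ‖Q‖)⁻¹) ^ n * ∑ k ∈ Finset.range (m + 1), ‖Q‖ ^ k := by
          congr 1
          simpa using Finset.sum_range_reflect (fun k => ‖Q‖ ^ k) (m + 1)
      _ ≤ ((1 - ‖Q‖)⁻¹) ^ n * (1 - ‖Q‖)⁻¹ := by
          apply mul_le_mul_of_nonneg_left _ (by positivity)
          have := Summable.sum_le_tsum (Finset.range (m + 1)) (fun k _ => by positivity)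
            (summable_geometric_of_lt_one hQ0 hQ)
          rwa [tsum_geometric_of_lt_one hQ0 hQ] at this
      _ = ((1 - ‖Q‖)⁻¹) ^ (n + 1) := by rw [pow_succ]

lemma two_mul_choose_two (n : ℕ) : n + 2 * Nat.choose n 2 = n ^ 2 := by
  induction n with
  | zero => rfl
  | succ n ih =>
    have h : Nat.choose (n + 1) 2 = n + Nat.choose n 2 := by
      simp [Nat.choose_succ_succ', Nat.choose_one_right]
    have hsq : (n + 1) ^ 2 = n ^ 2 + 2 * n + 1 := by ring
    omega

set_option maxHeartbeats 1000000 in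
/-- The finite q-binomial theorem. -/
lemma qbinom (Q : ℂ) : ∀ (N : ℕ) (x : ℂ),
    ∏ k ∈ Finset.range N, (1 - x * Q ^ k)
      = ∑ n ∈ Finset.range (N + 1),
          (-1) ^ n * x ^ n * Q ^ (Nat.choose n 2) * cc Q n (N - n) := by
  intro N
  induction N with
  | zero => intro x; simp [cc_zero]
  | succ N ih =>
    intro x
    have key : ∀ i ∈ Finset.range N,
        (-1 : ℂ) ^ (i + 1) * x ^ (i + 1) * Q ^ (Nat.choose (i + 1) 2) * cc Q (i + 1) (N + 1 - (i + 1))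
          = (-1) ^ (i + 1) * x ^ (i + 1) * Q ^ (Nat.choose (i + 1) 2) * cc Q i (N - i)
            + (-1) ^ (i + 1) * x ^ (i + 1) * Q ^ (Nat.choose (i + 1) 2) * (Q ^ (i + 1) * cc Q (i + 1) (N - 1 - i)) := by
      intro i hi
      have hi' : i < N := Finset.mem_range.mp hi
      have h1 : N + 1 - (i + 1) = (N - 1 - i) + 1 := by omega
      have h2 : N - i = (N - 1 - i) + 1 := by omega
      rw [h1, cc_pascal, h2, mul_add]
    -- abbreviations
    set S := ∑ n ∈ Finset.range (N + 1), (-1) ^ n * (x * Q) ^ n * Q ^ (Nat.choose n 2) * cc Q n (N - n) with hS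
    have hchoose : ∀ i : ℕ, Nat.choose (i + 1) 2 = Nat.choose i 2 + i := by
      intro i; simp [Nat.choose_succ_succ', Nat.choose_one_right]; omega
    have hA : ∑ i ∈ Finset.range (N + 1),
        (-1 : ℂ) ^ (i + 1) * x ^ (i + 1) * Q ^ (Nat.choose (i + 1) 2) * cc Q i (N - i) = -x * S := by
      rw [hS, Finset.mul_sum]
      apply Finset.sum_congr rfl
      intro i _
      rw [hchoose i, pow_add, pow_succ, pow_succ, mul_pow]
      ring
    have hB : ∑ i ∈ Finset.range N,
        (-1 : ℂ) ^ (i + 1) * x ^ (i + 1) * Q ^ (Nat.choose (i + 1) 2) * (Q ^ (i + 1) * cc Q (i + 1) (N - 1 - i))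
          = S - 1 := by
      have hS' : S = (∑ i ∈ Finset.range N,
          (-1 : ℂ) ^ (i + 1) * (x * Q) ^ (i + 1) * Q ^ (Nat.choose (i + 1) 2) * cc Q (i + 1) (N - (i + 1))) + 1 := by
        rw [hS, Finset.sum_range_succ']
        simp [cc_zero]
      rw [hS']
      simp only [add_sub_cancel_right]
      apply Finset.sum_congr rfl
      intro i _
      have : N - (i + 1) = N - 1 - i := by omega
      rw [this, hchoose i, pow_add, mul_pow]
      ring
    calc ∏ k ∈ Finset.range (N + 1), (1 - x * Q ^ k)
        = (1 - x) * ∏ k ∈ Finset.range N, (1 - x * Q * Q ^ k) := by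
          rw [Finset.prod_range_succ']
          simp only [pow_zero, mul_one, pow_succ]
          rw [mul_comm]
          congr 1
          apply Finset.prod_congr rfl
          intro k _
          ring_nf
      _ = (1 - x) * S := by rw [ih (x * Q)]
      _ = -x * S + ((S - 1) + 1) := by ring
      _ = ∑ n ∈ Finset.range (N + 2),
            (-1) ^ n * x ^ n * Q ^ (Nat.choose n 2) * cc Q n (N + 1 - n) := by
          rw [Finset.sum_range_succ' (fun n => (-1:ℂ) ^ n * x ^ n * Q ^ (Nat.choose n 2) * cc Q n (N + 1 - n)) (N+1)]
          rw [Finset.sum_range_succ (fun i => (-1:ℂ) ^ (i+1) * x ^ (i+1) * Q ^ (Nat.choose (i+1) 2) * cc Q (i+1) (N + 1 - (i+1))) N]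
          rw [Finset.sum_congr rfl key, Finset.sum_add_distrib, hB]
          have hg0 : (-1:ℂ) ^ 0 * x ^ 0 * Q ^ (Nat.choose 0 2) * cc Q 0 (N + 1 - 0) = 1 := by
            simp [cc_zero]
          rw [hg0]
          have hgN : (-1:ℂ) ^ (N+1) * x ^ (N+1) * Q ^ (Nat.choose (N+1) 2) * cc Q (N+1) (N + 1 - (N+1))
              = (-1:ℂ) ^ (N+1) * x ^ (N+1) * Q ^ (Nat.choose (N+1) 2) * cc Q N (N - N) := by
            rw [Nat.sub_self, Nat.sub_self, cc_apply_zero, cc_apply_zero]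
          rw [hgN]
          have hA' : (∑ i ∈ Finset.range N,
              (-1:ℂ) ^ (i+1) * x ^ (i+1) * Q ^ (Nat.choose (i+1) 2) * cc Q i (N - i))
              + (-1:ℂ) ^ (N+1) * x ^ (N+1) * Q ^ (Nat.choose (N+1) 2) * cc Q N (N - N) = -x * S := by
            rw [← Finset.sum_range_succ]; exact hA
          linear_combination -hA'

lemma row_summable {Q t : ℂ} (hQ : ‖Q‖ < 1) (ht : ‖t‖ < 1) (n : ℕ) :
    Summable (fun m => ‖cc Q n m * t ^ m‖) := by
  refine Summable.of_nonneg_of_le (fun m => norm_nonneg _) (fun m => ?_)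
    (((summable_geometric_of_lt_one (norm_nonneg t) ht).mul_left (((1 - ‖Q‖)⁻¹) ^ n)))
  rw [norm_mul, norm_pow]
  exact mul_le_mul_of_nonneg_right (cc_norm_le hQ n m) (by positivity)

lemma row_tsum {Q t : ℂ} (hQ : ‖Q‖ < 1) (ht : ‖t‖ < 1) (n : ℕ) :
    ∑' m : ℕ, cc Q n m * t ^ m = (qPoch t Q (n + 1))⁻¹ := by
  induction n with
  | zero =>
    simp only [cc_zero, one_mul]
    rw [tsum_geometric_of_norm_lt_one ht]
    congr 1
    simp [qPoch]
  | succ n ih =>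
    have hg : ‖t * Q ^ (n + 1)‖ < 1 := by
      rw [norm_mul, norm_pow]
      calc ‖t‖ * ‖Q‖ ^ (n + 1) ≤ ‖t‖ * 1 := by
            apply mul_le_mul_of_nonneg_left _ (norm_nonneg t)
            exact pow_le_one₀ (norm_nonneg Q) hQ.le
        _ < 1 := by rwa [mul_one]
    have key : ∀ m : ℕ, cc Q (n + 1) m * t ^ m
        = ∑ k ∈ Finset.range (m + 1), (cc Q n k * t ^ k) * ((t * Q ^ (n + 1)) ^ (m - k)) := by
      intro m
      rw [cc_succ, Finset.sum_mul]
      apply Finset.sum_congr rfl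
      intro k hk
      have hk' : k ≤ m := Nat.lt_succ_iff.mp (Finset.mem_range.mp hk)
      have htm : t ^ m = t ^ k * t ^ (m - k) := by
        rw [← pow_add]; congr 1; omega
      rw [htm, mul_pow, ← pow_mul]
      ring
    rw [tsum_congr key,
      ← tsum_mul_tsum_eq_tsum_sum_range_of_summable_norm (row_summable hQ ht n)
        (by simpa using summable_geometric_of_lt_one (norm_nonneg _) hg : Summable fun j => ‖(t * Q ^ (n+1)) ^ j‖),
      ih, tsum_geometric_of_norm_lt_one hg]
    rw [show qPoch t Q (n + 1 + 1) = qPoch t Q (n + 1) * (1 - t * Q ^ (n + 1)) from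
      Finset.prod_range_succ _ _, mul_inv]

set_option maxHeartbeats 1000000 in
theorem nu_spec_2_14 (q z : ℂ) (hq : ‖q‖ < 1) (hzq : ‖z * q‖ < 1) :
    ∑' n : ℕ, z ^ n * q ^ (n ^ 2 + n) / qPoch (-(z * q)) (q ^ 2) (n + 1)
      = ∑' n : ℕ, qPoch q (q ^ 2) n * (-(z * q)) ^ n := by
  set t : ℂ := -(z * q) with ht_def
  set Q : ℂ := q ^ 2 with hQ_def
  have hT : ‖t‖ < 1 := by rwa [ht_def, norm_neg]
  have hQ : ‖Q‖ < 1 := by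
    rw [hQ_def, norm_pow]
    exact pow_lt_one₀ (norm_nonneg q) hq two_ne_zero
  set B : ℝ := (1 - ‖Q‖)⁻¹ with hB_def
  have hQpos : (0:ℝ) < 1 - ‖Q‖ := by linarith [norm_nonneg Q]
  have hBpos : (0:ℝ) < B := by positivity
  -- the summand on ℕ × ℕ
  set f : ℕ × ℕ → ℂ := fun p => z ^ p.1 * q ^ (p.1 ^ 2 + p.1) * (cc Q p.1 p.2 * t ^ p.2) with hf_def
  set a : ℕ → ℝ := fun n => ‖z * q‖ ^ n * ‖q‖ ^ (n ^ 2) * B ^ n with ha_def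
  have ha_nonneg : ∀ n, 0 ≤ a n := fun n => by positivity
  have ha : Summable a := by
    apply summable_of_ratio_norm_eventually_le (r := 1/2) (by norm_num)
    have hq0 : (0:ℝ) ≤ ‖q‖ := norm_nonneg q
    have h0 : Filter.Tendsto (fun n : ℕ => ‖z * q‖ * B * ‖q‖ ^ (2 * n + 1)) Filter.atTop (nhds 0) := by
      have h1 : Filter.Tendsto (fun n : ℕ => ‖q‖ ^ n) Filter.atTop (nhds 0) :=
        tendsto_pow_atTop_nhds_zero_of_lt_one hq0 hq
      have h2 : Filter.Tendsto (fun n : ℕ => 2 * n + 1) Filter.atTop Filter.atTop :=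
        Filter.tendsto_atTop_mono (fun n => by simp only [id_eq]; omega) Filter.tendsto_id
      have h3 := (h1.comp h2).const_mul (‖z * q‖ * B)
      simpa using h3
    have hev := h0.eventually_lt_const (show (0:ℝ) < 1/2 by norm_num)
    filter_upwards [hev] with n hn
    have han : a (n + 1) = (‖z * q‖ * B * ‖q‖ ^ (2 * n + 1)) * a n := by
      rw [ha_def]
      simp only
      rw [show (n + 1) ^ 2 = n ^ 2 + (2 * n + 1) by ring, pow_add, pow_succ, pow_succ]
      ring
    rw [Real.norm_of_nonneg (ha_nonneg _), Real.norm_of_nonneg (ha_nonneg _), han]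
    exact mul_le_mul_of_nonneg_right hn.le (ha_nonneg n)
  have hbound : ∀ p : ℕ × ℕ, ‖f p‖ ≤ a p.1 * ‖t‖ ^ p.2 := by
    rintro ⟨n, m⟩
    rw [hf_def, ha_def]
    simp only
    rw [norm_mul, norm_mul, norm_mul, norm_pow, norm_pow, norm_pow]
    calc ‖z‖ ^ n * ‖q‖ ^ (n ^ 2 + n) * (‖cc Q n m‖ * ‖t‖ ^ m)
        ≤ ‖z‖ ^ n * ‖q‖ ^ (n ^ 2 + n) * (B ^ n * ‖t‖ ^ m) := by
          have := cc_norm_le hQ n m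
          gcongr
      _ = ‖z * q‖ ^ n * ‖q‖ ^ (n ^ 2) * B ^ n * ‖t‖ ^ m := by
          rw [norm_mul, pow_add, mul_pow]; ring
  have hf : Summable f :=
    Summable.of_norm_bounded (ha.mul_of_nonneg (summable_geometric_of_lt_one (norm_nonneg t) hT)
      ha_nonneg (fun m => by positivity)) hbound
  have hrows : ∀ n : ℕ, Summable (fun m => f (n, m)) := by
    intro n
    simp only [hf_def]
    exact ((row_summable hQ hT n).of_norm.mul_left (z ^ n * q ^ (n ^ 2 + n)))
  -- Step 1: rewrite each LHS term as a row sum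
  have step1 : ∀ n : ℕ, z ^ n * q ^ (n ^ 2 + n) / qPoch t Q (n + 1) = ∑' m, f (n, m) := by
    intro n
    simp only [hf_def]
    rw [div_eq_mul_inv, ← row_tsum hQ hT n, ← tsum_mul_left]
  -- Step 2: the diagonal re-summation
  have step2 : ∑' p : ℕ × ℕ, f p
      = ∑' N : ℕ, ∑ p ∈ Finset.HasAntidiagonal.antidiagonal N, f p := by
    rw [← (Finset.HasAntidiagonal.sigmaAntidiagonalEquivProd (A := ℕ)).tsum_eq f]
    rw [Summable.tsum_sigma' (f := fun x : (Σ N : ℕ, {p // p ∈ Finset.HasAntidiagonal.antidiagonal N}) =>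
        f (Finset.HasAntidiagonal.sigmaAntidiagonalEquivProd x)) (fun N => Summable.of_finite)
      (by exact (Finset.HasAntidiagonal.sigmaAntidiagonalEquivProd (A := ℕ)).summable_iff.mpr hf)]
    apply tsum_congr
    intro N
    exact (Finset.tsum_subtype (Finset.HasAntidiagonal.antidiagonal N) f)
  -- Step 3: evaluate the diagonal sums via the q-binomial theorem
  have step3 : ∀ N : ℕ, ∑ p ∈ Finset.HasAntidiagonal.antidiagonal N, f p = qPoch q Q N * t ^ N := by
    intro N
    rw [Finset.Nat.sum_antidiagonal_eq_sum_range_succ_mk]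
    rw [qPoch, qbinom Q N q, Finset.sum_mul]
    apply Finset.sum_congr rfl
    intro n hn
    have hn' : n ≤ N := Nat.lt_succ_iff.mp (Finset.mem_range.mp hn)
    have h1 : (q:ℂ) ^ n * Q ^ (Nat.choose n 2) = q ^ (n ^ 2) := by
      rw [hQ_def, ← pow_mul, ← pow_add, show n + 2 * Nat.choose n 2 = n ^ 2 from two_mul_choose_two n]
    have h2 : (t:ℂ) ^ N = t ^ n * t ^ (N - n) := by
      rw [← pow_add]; congr 1; omega
    have h3 : (-1 : ℂ) ^ n * t ^ n = (z * q) ^ n := by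
      rw [ht_def, ← mul_pow, neg_one_mul, neg_neg]
    calc f (n, N - n) = z ^ n * q ^ (n ^ 2 + n) * (cc Q n (N - n) * t ^ (N - n)) := rfl
      _ = ((-1) ^ n * t ^ n) * (q ^ n * Q ^ (Nat.choose n 2)) * cc Q n (N - n) * t ^ (N - n) := by
          rw [h3, h1, mul_pow, pow_add]; ring
      _ = (-1) ^ n * q ^ n * Q ^ (Nat.choose n 2) * cc Q n (N - n) * t ^ N := by
          rw [h2]; ring
  calc ∑' n : ℕ, z ^ n * q ^ (n ^ 2 + n) / qPoch t Q (n + 1)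
      = ∑' n : ℕ, ∑' m : ℕ, f (n, m) := tsum_congr step1
    _ = ∑' p : ℕ × ℕ, f p := (Summable.tsum_prod' hf hrows).symm
    _ = ∑' N : ℕ, ∑ p ∈ Finset.HasAntidiagonal.antidiagonal N, f p := step2
    _ = ∑' N : ℕ, qPoch q Q N * t ^ N := tsum_congr step3
end
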